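/- arXiv:1610.02539 — 13 statements merged into one kernel-verified Lean document; each statement's English description precedes it below -/
import Mathlib

section
/- Let F be a field, n a positive integer, and d_1, ..., d_n nonnegative integers. Let f ∈ F[x_1,...,x_n] with deg(f) ≤ d_1 + ... + d_n. For arbitrary subsets C_1,...,C_n of F with |C_i| = d_i + 1, the coefficient of the monomial x_1^{d_1}···x_n^{d_n} in f equals the sum over all (c_1,...,c_n) ∈ C_1 × ··· × C_n of f(c_1,...,c_n) / (φ_1'(c_1)···φ_n'(c_n)), where φ_i(z) = ∏_{c ∈ C_i}(z - c) and φ_i' is its formal derivative. -/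
open Polynomial Finset

lemma one_var {F : Type*} [Field F] (s : Finset F) (d k : ℕ)
    (hs : s.card = d + 1) (hk : k ≤ d) :
    ∑ c ∈ s, c ^ k / Polynomial.eval c
        (Polynomial.derivative (∏ a ∈ s, (Polynomial.X - Polynomial.C a))) =
      if k = d then 1 else 0 := by
  classical
  have hinj : Set.InjOn (id : F → F) s := fun x _ y _ h => h
  have hdeg : (X ^ k : F[X]).degree < s.card := by
    rw [hs, Polynomial.degree_X_pow]
    exact_mod_cast Nat.lt_succ_of_le hk
  have h := Lagrange.eq_interpolate hinj hdeg
  have hco := congrArg (fun p => Polynomial.coeff p d) h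
  simp only [Lagrange.interpolate_apply, Polynomial.finset_sum_coeff,
    Polynomial.coeff_C_mul, Polynomial.coeff_X_pow] at hco
  have key : ∀ c ∈ s, Polynomial.eval (id c) (X ^ k : F[X]) * (Lagrange.basis s id c).coeff d =
      c ^ k / Polynomial.eval c
        (Polynomial.derivative (∏ a ∈ s, (Polynomial.X - Polynomial.C a))) := by
    intro i hi
    have hcoeff : (Lagrange.basis s id i).coeff d = Lagrange.nodalWeight s id i := by
      rw [Lagrange.basis_eq_prod_sub_inv_mul_nodal_div hi,
        ← Lagrange.nodal_erase_eq_nodal_div hi, Polynomial.coeff_C_mul]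
      have hmon : (Lagrange.nodal (s.erase i) (id : F → F)).Monic := Lagrange.nodal_monic
      have hdd : (Lagrange.nodal (s.erase i) (id : F → F)).natDegree = d := by
        rw [Lagrange.natDegree_nodal, Finset.card_erase_of_mem hi, hs]; omega
      rw [← hdd, hmon.coeff_natDegree, mul_one]
    rw [hcoeff, Lagrange.nodalWeight_eq_eval_derivative_nodal hi, div_eq_mul_inv]
    simp only [id, Polynomial.eval_pow, Polynomial.eval_X]
    congr 2
  rw [Finset.sum_congr rfl key] at hco
  rw [← hco]
  by_cases h' : k = d
  · simp [h']
  · simp [h', Ne.symm h']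

theorem coefficient_formula {F : Type*} [Field F] (n : ℕ) (hn : 0 < n)
    (d : Fin n → ℕ) (f : MvPolynomial (Fin n) F)
    (hdeg : f.totalDegree ≤ ∑ i, d i)
    (C : Fin n → Finset F) (hC : ∀ i, (C i).card = d i + 1) :
    f.coeff (Finsupp.equivFunOnFinite.symm d) =
      ∑ c ∈ Fintype.piFinset C,
        MvPolynomial.eval c f /
          ∏ i, Polynomial.eval (c i)
            (Polynomial.derivative (∏ a ∈ C i, (Polynomial.X - Polynomial.C a))) := by
  classical
  set d' : Fin n →₀ ℕ := Finsupp.equivFunOnFinite.symm d with hd'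
  have hd'app : ∀ i, d' i = d i := fun i => rfl
  set ev : Fin n → F → F := fun i x =>
    Polynomial.eval x (Polynomial.derivative (∏ a ∈ C i, (Polynomial.X - Polynomial.C a)))
    with hev
  set S : Fin n → ℕ → F := fun i k => ∑ x ∈ C i, x ^ k / ev i x with hS
  -- rewrite RHS
  have step1 : ∑ c ∈ Fintype.piFinset C, MvPolynomial.eval c f / ∏ i, ev i (c i) =
      ∑ α ∈ f.support, f.coeff α * ∏ i, S i (α i) := by
    have : ∀ c ∈ Fintype.piFinset C, MvPolynomial.eval c f / ∏ i, ev i (c i) =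
        ∑ α ∈ f.support, f.coeff α * ∏ i, (c i ^ α i / ev i (c i)) := by
      intro c _
      rw [MvPolynomial.eval_eq', Finset.sum_div]
      refine Finset.sum_congr rfl fun α _ => ?_
      rw [mul_div_assoc, ← Finset.prod_div_distrib]
    rw [Finset.sum_congr rfl this, Finset.sum_comm]
    refine Finset.sum_congr rfl fun α _ => ?_
    rw [← Finset.mul_sum]
    congr 1
    exact (Finset.prod_univ_sum C fun i x => x ^ α i / ev i x).symm
  rw [step1]
  -- evaluate each monomial's contribution
  have step2 : ∀ α ∈ f.support, (∏ i, S i (α i)) = if α = d' then 1 else 0 := by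
    intro α hα
    have hsum : ∑ i, α i ≤ ∑ i, d i := by
      refine le_trans ?_ hdeg
      have := MvPolynomial.le_totalDegree hα
      rwa [Finsupp.sum_fintype _ _ (fun _ => rfl)] at this
    by_cases hall : ∀ i, d i ≤ α i
    · have heq : ∀ i, α i = d i := by
        have hge : ∑ i, d i ≤ ∑ i, α i := Finset.sum_le_sum fun i _ => hall i
        have := (Finset.sum_eq_sum_iff_of_le (fun i (_ : i ∈ Finset.univ) => hall i)).1
          (le_antisymm hge hsum)
        exact fun i => (this i (Finset.mem_univ i)).symm
      have hαd : α = d' := by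
        ext i; rw [heq i, hd'app]
      rw [if_pos hαd]
      refine Finset.prod_eq_one fun i _ => ?_
      have := one_var (C i) (d i) (α i) (hC i) (le_of_eq (heq i))
      rw [hS]; simp only [hev] at this ⊢
      rw [this, if_pos (heq i)]
    · push_neg at hall
      obtain ⟨i, hi⟩ := hall
      have hne : α ≠ d' := by
        intro h; rw [h, hd'app] at hi; exact lt_irrefl _ hi
      rw [if_neg hne]
      refine Finset.prod_eq_zero (Finset.mem_univ i) ?_
      have := one_var (C i) (d i) (α i) (hC i) (le_of_lt hi)
      rw [hS]; simp only [hev] at this ⊢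
      rw [this, if_neg (Nat.ne_of_lt hi)]
  rw [Finset.sum_congr rfl fun α hα => by rw [step2 α hα]]
  simp only [mul_ite, mul_one, mul_zero]
  rw [Finset.sum_ite_eq' f.support d' f.coeff]
  split
  · rfl
  · next h => exact MvPolynomial.notMem_support_iff.mp h
end

section
/- Let p be a prime, A ⊆ F_p with |A| = n, and 1 ≤ k ≤ n. Let A_k = { a_1 + ... + a_k : a_i ∈ A pairwise distinct }. Then |A_k| ≥ min{ k(n-k) + 1, p }. -/
open Finset Polynomial BigOperators

variable {F : Type*} [Field F] [DecidableEq F]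

noncomputable def wt (s : Finset F) (x : F) : F := ∏ y ∈ s.erase x, (x - y)⁻¹

lemma coeff_basis_top (s : Finset F) {x : F} (hx : x ∈ s) :
    (Lagrange.basis s id x).coeff (s.card - 1) = wt s x := by
  have hinj : Set.InjOn (id : F → F) s := Function.injective_id.injOn
  have hnd : (Lagrange.basis s id x).natDegree = s.card - 1 :=
    Lagrange.natDegree_basis hinj hx
  rw [← hnd, Polynomial.coeff_natDegree]
  unfold Lagrange.basis wt
  rw [Polynomial.leadingCoeff_prod]
  refine Finset.prod_congr rfl fun y hy => ?_
  have hxy : x ≠ y := (Finset.ne_of_mem_erase hy).symm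
  unfold Lagrange.basisDivisor
  rw [leadingCoeff_mul, leadingCoeff_C, (monic_X_sub_C _).leadingCoeff, mul_one]
  rfl

lemma lemA (s : Finset F) {α : ℕ} (hα : α < s.card) :
    ∑ x ∈ s, x ^ α * wt s x = if α = s.card - 1 then 1 else 0 := by
  have hinj : Set.InjOn (id : F → F) s := Function.injective_id.injOn
  have hdeg : ((X : F[X]) ^ α).degree < s.card := by
    rw [degree_X_pow]; exact_mod_cast hα
  have h := Lagrange.eq_interpolate (f := (X : F[X]) ^ α) hinj hdeg
  have h2 := congrArg (fun q => Polynomial.coeff q (s.card - 1)) h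
  simp only [Lagrange.interpolate_apply] at h2
  rw [Polynomial.finset_sum_coeff] at h2
  simp only [Polynomial.coeff_C_mul, coeff_X_pow] at h2
  have : ∑ x ∈ s, x ^ α * wt s x = ∑ j ∈ s, id j ^ α * (Lagrange.basis s id j).coeff (s.card - 1) := by
    refine Finset.sum_congr rfl fun y hy => ?_
    rw [coeff_basis_top s hy]; rfl
  simp only [eval_pow, eval_X, id_eq] at h2
  rw [this, show (∑ j ∈ s, id j ^ α * (Lagrange.basis s id j).coeff (s.card - 1)) = ∑ x ∈ s, x ^ α * (Lagrange.basis s id x).coeff (s.card - 1) from rfl, ← h2]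
  by_cases h3 : α = s.card - 1 <;> simp [h3, eq_comm]

lemma grid_formula {k : ℕ} (S : Fin k → Finset F) (hS : ∀ i, (S i).Nonempty)
    (f : MvPolynomial (Fin k) F)
    (hdeg : f.totalDegree ≤ ∑ i, ((S i).card - 1)) :
    ∑ s ∈ Fintype.piFinset S, (MvPolynomial.eval s f) * ∏ i, wt (S i) (s i)
      = f.coeff (Finsupp.equivFunOnFinite.symm (fun i => (S i).card - 1)) := by
  set T : Fin k →₀ ℕ := Finsupp.equivFunOnFinite.symm (fun i => (S i).card - 1) with hT
  have hTapp : ∀ i, T i = (S i).card - 1 := fun i => rfl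
  calc ∑ s ∈ Fintype.piFinset S, (MvPolynomial.eval s f) * ∏ i, wt (S i) (s i)
      = ∑ s ∈ Fintype.piFinset S, ∑ d ∈ f.support,
          f.coeff d * ∏ i, (s i ^ d i * wt (S i) (s i)) := by
        refine Finset.sum_congr rfl fun s _ => ?_
        rw [MvPolynomial.eval_eq', Finset.sum_mul, Finset.sum_congr rfl]
        intro d _
        rw [mul_assoc, ← Finset.prod_mul_distrib]
    _ = ∑ d ∈ f.support, f.coeff d *
          ∏ i, (∑ x ∈ S i, x ^ d i * wt (S i) x) := by
        rw [Finset.sum_comm]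
        refine Finset.sum_congr rfl fun d _ => ?_
        rw [← Finset.mul_sum, Finset.prod_univ_sum]
    _ = ∑ d ∈ f.support, f.coeff d * (if d = T then 1 else 0) := by
        refine Finset.sum_congr rfl fun d hd => ?_
        congr 1
        by_cases hdT : d = T
        · subst hdT
          rw [if_pos rfl]
          refine Finset.prod_eq_one fun i _ => ?_
          rw [hTapp i, lemA (S i) (Nat.sub_lt (hS i).card_pos one_pos), if_pos rfl]
        · rw [if_neg hdT]
          have hex : ∃ j, d j < T j := by
            by_contra hcon
            push_neg at hcon
            have hsum : ∑ i, T i ≤ ∑ i, d i := Finset.sum_le_sum fun i _ => hcon i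
            have hsum2 : ∑ i, d i ≤ ∑ i, T i := by
              have h1 : (d.sum fun _ e => e) ≤ f.totalDegree := MvPolynomial.le_totalDegree hd
              have h2 : (d.sum fun _ e => e) = ∑ i, d i := Finsupp.sum_fintype _ _ fun _ => rfl
              exact le_trans (h2 ▸ h1) hdeg
            have := (Finset.sum_eq_sum_iff_of_le fun i _ => hcon i).mp
              (le_antisymm hsum hsum2)
            exact hdT (Finsupp.ext fun i => ((this i (Finset.mem_univ i)).symm))
          obtain ⟨j, hj⟩ := hex
          refine Finset.prod_eq_zero (Finset.mem_univ j) ?_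
          have hj' : d j < (S j).card - 1 := by rw [← hTapp j]; exact hj
          rw [lemA (S j) (lt_of_lt_of_le hj' (Nat.sub_le _ _)), if_neg (by omega)]
    _ = f.coeff T := by
        simp only [mul_ite, mul_one, mul_zero]
        rw [Finset.sum_ite_eq' f.support T (fun d => f.coeff d)]
        by_cases hmem : T ∈ f.support
        · rw [if_pos hmem]
        · rw [if_neg hmem, eq_comm, ← MvPolynomial.notMem_support_iff.mp hmem]

theorem comb_null {k : ℕ} (f : MvPolynomial (Fin k) F) (t : Fin k → ℕ)
    (hdeg : f.totalDegree ≤ ∑ i, t i)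
    (hcoeff : f.coeff (Finsupp.equivFunOnFinite.symm t) ≠ 0)
    (S : Fin k → Finset F) (hcard : ∀ i, t i + 1 ≤ (S i).card) :
    ∃ s : Fin k → F, (∀ i, s i ∈ S i) ∧ MvPolynomial.eval s f ≠ 0 := by
  have hsub : ∀ i, ∃ u ⊆ S i, u.card = t i + 1 :=
    fun i => Finset.exists_subset_card_eq (hcard i)
  choose S' hS'sub hS'card using hsub
  have hS'ne : ∀ i, (S' i).Nonempty := fun i =>
    Finset.card_pos.mp (by rw [hS'card i]; omega)
  have hgrid := grid_formula S' hS'ne f (by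
    simp only [hS'card]
    simpa using hdeg)
  by_contra hcon
  push_neg at hcon
  have hzero : ∑ s ∈ Fintype.piFinset S', (MvPolynomial.eval s f) * ∏ i, wt (S' i) (s i) = 0 := by
    refine Finset.sum_eq_zero fun s hs => ?_
    have : ∀ i, s i ∈ S i := fun i => hS'sub i (Fintype.mem_piFinset.mp hs i)
    rw [hcon s this, zero_mul]
  rw [hzero] at hgrid
  have hfun : (fun i => (S' i).card - 1) = t := funext fun i => by rw [hS'card i]; omega
  rw [hfun] at hgrid
  exact hcoeff hgrid.symm

lemma prod_X_pow_eq_monomial' {k : ℕ} {R : Type*} [CommSemiring R] (w : Fin k → ℕ) :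
    (∏ i, (MvPolynomial.X i : MvPolynomial (Fin k) R) ^ w i)
      = MvPolynomial.monomial (Finsupp.equivFunOnFinite.symm w) 1 := by
  have : (Finsupp.equivFunOnFinite.symm w) = ∑ i, Finsupp.single i (w i) := by
    ext j
    rw [Finsupp.finset_sum_apply]
    simp [Finsupp.single_apply, Finset.sum_ite_eq' Finset.univ j]
  rw [this]
  induction (Finset.univ : Finset (Fin k)) using Finset.induction with
  | empty => simp
  | @insert a s h ih =>
      rw [Finset.prod_insert h, Finset.sum_insert h, ih, MvPolynomial.X_pow_eq_monomial,
        MvPolynomial.monomial_mul, one_mul]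

lemma coeff_L_pow {k : ℕ} (m : ℕ) (w : Fin k → ℕ) :
    MvPolynomial.coeff (Finsupp.equivFunOnFinite.symm w)
        ((∑ i, MvPolynomial.X i : MvPolynomial (Fin k) ℤ) ^ m)
      = if ∑ i, w i = m then (Nat.multinomial Finset.univ w : ℤ) else 0 := by
  rw [Finset.sum_pow_eq_sum_piAntidiag]
  rw [MvPolynomial.coeff_sum]
  have hterm : ∀ w' : Fin k → ℕ, w' ∈ Finset.piAntidiag Finset.univ m →
      MvPolynomial.coeff (Finsupp.equivFunOnFinite.symm w)
        ((Nat.multinomial Finset.univ w' : MvPolynomial (Fin k) ℤ) * ∏ i, MvPolynomial.X i ^ w' i)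
      = if w' = w then (Nat.multinomial Finset.univ w : ℤ) else 0 := by
    intro w' _
    rw [prod_X_pow_eq_monomial', show ((Nat.multinomial Finset.univ w' : MvPolynomial (Fin k) ℤ))
      = MvPolynomial.C ((Nat.multinomial Finset.univ w' : ℤ)) by
        simp [MvPolynomial.C_eq_coe_nat],
      MvPolynomial.coeff_C_mul, MvPolynomial.coeff_monomial]
    by_cases h : w' = w
    · subst h; rw [if_pos rfl, if_pos rfl, mul_one]
    · have hne : ¬ (Finsupp.equivFunOnFinite.symm w' = Finsupp.equivFunOnFinite.symm w) :=
        fun hc => h (Finsupp.equivFunOnFinite.symm.injective hc)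
      rw [if_neg hne, if_neg h, mul_zero]
  rw [Finset.sum_congr rfl hterm]
  rw [Finset.sum_ite_eq' (Finset.piAntidiag Finset.univ m) w]
  simp only [Finset.mem_piAntidiag]
  by_cases h : ∑ i, w i = m
  · rw [if_pos ⟨h, fun i _ => Finset.mem_univ i⟩, if_pos h]
  · rw [if_neg (fun hc => h hc.1), if_neg h]

noncomputable def Vz (k : ℕ) : MvPolynomial (Fin k) ℤ :=
  (Matrix.vandermonde (fun i : Fin k => (MvPolynomial.X i : MvPolynomial (Fin k) ℤ))).det

lemma sum_sub_perm {k m : ℕ} (t : Fin k → ℕ)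
    (ht_sum : ∑ i, t i = (∑ i : Fin k, (i : ℕ)) + m)
    (σ : Equiv.Perm (Fin k)) (h : ∀ j, (σ j : ℕ) ≤ t j) :
    ∑ j, (t j - (σ j : ℕ)) = m := by
  have hd := Finset.sum_tsub_distrib (s := Finset.univ) (f := fun j => t j)
    (g := fun j => ((σ j : Fin k) : ℕ)) (fun j _ => h j)
  rw [hd, Equiv.sum_comp σ (fun i : Fin k => (i : ℕ)), ht_sum]
  omega

lemma Vz_eq (k : ℕ) : Vz k = ∑ σ : Equiv.Perm (Fin k),
    MvPolynomial.C ((Equiv.Perm.sign σ : ℤ)) *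
      MvPolynomial.monomial
        (Finsupp.equivFunOnFinite.symm (fun j => ((σ⁻¹ j : Fin k) : ℕ))) 1 := by
  rw [Vz, Matrix.det_apply']
  refine Finset.sum_congr rfl fun σ _ => ?_
  rw [eq_intCast MvPolynomial.C]
  congr 1
  rw [← prod_X_pow_eq_monomial']
  rw [← Equiv.prod_comp σ
    (fun j => (MvPolynomial.X j : MvPolynomial (Fin k) ℤ) ^ ((σ⁻¹ j : Fin k) : ℕ))]
  refine Finset.prod_congr rfl fun i _ => ?_
  simp [Matrix.vandermonde_apply]

lemma N_formula {k m : ℕ} (t : Fin k → ℕ)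
    (ht_sum : ∑ i, t i = (∑ i : Fin k, (i : ℕ)) + m) :
    MvPolynomial.coeff (Finsupp.equivFunOnFinite.symm t)
      ((∑ i, MvPolynomial.X i : MvPolynomial (Fin k) ℤ) ^ m * Vz k)
    = ∑ σ : Equiv.Perm (Fin k), (Equiv.Perm.sign σ : ℤ) *
        (if ∀ j, (σ j : ℕ) ≤ t j then
          (Nat.multinomial Finset.univ (fun j => t j - (σ j : ℕ)) : ℤ) else 0) := by
  have hterm : ∀ σ : Equiv.Perm (Fin k),
      MvPolynomial.coeff (Finsupp.equivFunOnFinite.symm t)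
        ((∑ i, MvPolynomial.X i : MvPolynomial (Fin k) ℤ) ^ m *
          (MvPolynomial.C ((Equiv.Perm.sign σ : ℤ)) *
            MvPolynomial.monomial
              (Finsupp.equivFunOnFinite.symm (fun j => ((σ⁻¹ j : Fin k) : ℕ))) 1))
      = (Equiv.Perm.sign σ : ℤ) *
        (if ∀ j, ((σ⁻¹ j : Fin k) : ℕ) ≤ t j then
          (Nat.multinomial Finset.univ (fun j => t j - ((σ⁻¹ j : Fin k) : ℕ)) : ℤ) else 0) := by
    intro σ
    rw [mul_left_comm, MvPolynomial.coeff_C_mul, MvPolynomial.coeff_mul_monomial']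
    congr 1
    by_cases hle : ∀ j, ((σ⁻¹ j : Fin k) : ℕ) ≤ t j
    · have hle' : (Finsupp.equivFunOnFinite.symm (fun j => ((σ⁻¹ j : Fin k) : ℕ)))
          ≤ Finsupp.equivFunOnFinite.symm t := by
        rw [Finsupp.le_def]; exact hle
      rw [if_pos hle', if_pos hle, mul_one]
      have hsub : Finsupp.equivFunOnFinite.symm t -
          Finsupp.equivFunOnFinite.symm (fun j => ((σ⁻¹ j : Fin k) : ℕ))
          = Finsupp.equivFunOnFinite.symm (fun j => t j - ((σ⁻¹ j : Fin k) : ℕ)) := by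
        ext j
        rw [Finsupp.tsub_apply]
        rfl
      rw [hsub, coeff_L_pow, if_pos (sum_sub_perm t ht_sum σ⁻¹ hle)]
    · rw [if_neg, if_neg hle]
      intro hc
      exact hle fun j => (Finsupp.le_def.mp hc) j
  rw [Vz_eq, Finset.mul_sum, MvPolynomial.coeff_sum,
    Finset.sum_congr rfl fun σ _ => hterm σ]
  refine Fintype.sum_equiv (Equiv.inv (Equiv.Perm (Fin k))) _ _ fun σ => ?_
  simp [Equiv.inv_apply, Equiv.Perm.sign_inv]

lemma det_desc {k : ℕ} (t : Fin k → ℕ) :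
    (Matrix.of fun i j : Fin k => ((t i).descFactorial (j : ℕ) : ℤ)).det
      = ∏ i, ∏ j ∈ Finset.Ioi i, ((t j : ℤ) - (t i : ℤ)) := by
  have h := Matrix.det_eval_matrixOfPolynomials_eq_det_vandermonde
    (fun i : Fin k => (t i : ℤ)) (fun j => descPochhammer ℤ (j : ℕ))
    (fun j => descPochhammer_natDegree (R := ℤ) (j : ℕ))
    (fun j => monic_descPochhammer ℤ (j : ℕ))
  rw [Matrix.det_vandermonde] at h
  have heq : (Matrix.of fun i j : Fin k => ((t i).descFactorial (j : ℕ) : ℤ))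
      = Matrix.of fun i j : Fin k =>
          Polynomial.eval ((fun i : Fin k => (t i : ℤ)) i) ((fun j : Fin k => descPochhammer ℤ (j : ℕ)) j) := by
    ext i j
    rw [Matrix.of_apply, Matrix.of_apply, descPochhammer_eval_eq_descFactorial]
  rw [heq, ← h]

lemma N_det {k m : ℕ} (t : Fin k → ℕ)
    (ht_sum : ∑ i, t i = (∑ i : Fin k, (i : ℕ)) + m) :
    (∏ j, ((t j).factorial : ℤ)) *
      MvPolynomial.coeff (Finsupp.equivFunOnFinite.symm t)
        ((∑ i, MvPolynomial.X i : MvPolynomial (Fin k) ℤ) ^ m * Vz k)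
    = (m.factorial : ℤ) * ∏ i, ∏ j ∈ Finset.Ioi i, ((t j : ℤ) - (t i : ℤ)) := by
  rw [N_formula t ht_sum, ← det_desc t]
  have htrans : (Matrix.of fun i j : Fin k => ((t i).descFactorial (j : ℕ) : ℤ)).det
      = ((Matrix.of fun i j : Fin k => ((t i).descFactorial (j : ℕ) : ℤ)).transpose).det :=
    (Matrix.det_transpose _).symm
  rw [htrans, Matrix.det_apply', Finset.mul_sum, Finset.mul_sum]
  refine Finset.sum_congr rfl fun σ _ => ?_
  have hprod : (∏ i, (Matrix.of fun i j : Fin k =>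
      ((t i).descFactorial (j : ℕ) : ℤ)).transpose (σ i) i)
      = ∏ i, ((t i).descFactorial ((σ i : Fin k) : ℕ) : ℤ) :=
    Finset.prod_congr rfl fun i _ => rfl
  rw [hprod]
  have hkey : (∏ j, ((t j).factorial : ℤ)) *
      (if ∀ j, ((σ j : Fin k) : ℕ) ≤ t j then
        (Nat.multinomial Finset.univ (fun j => t j - ((σ j : Fin k) : ℕ)) : ℤ) else 0)
      = (m.factorial : ℤ) * ∏ i, ((t i).descFactorial ((σ i : Fin k) : ℕ) : ℤ) := by
    by_cases hle : ∀ j, ((σ j : Fin k) : ℕ) ≤ t j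
    · rw [if_pos hle]
      have hnat : (∏ j, (t j).factorial) *
          Nat.multinomial Finset.univ (fun j => t j - ((σ j : Fin k) : ℕ))
          = m.factorial * ∏ i, (t i).descFactorial ((σ i : Fin k) : ℕ) := by
        have hfac : ∀ j, (t j).factorial
            = (t j - ((σ j : Fin k) : ℕ)).factorial * (t j).descFactorial ((σ j : Fin k) : ℕ) :=
          fun j => (Nat.factorial_mul_descFactorial (hle j)).symm
        calc (∏ j, (t j).factorial) * Nat.multinomial Finset.univ (fun j => t j - (σ j : ℕ))
            = ((∏ j, (t j - ((σ j : Fin k) : ℕ)).factorial)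
                * Nat.multinomial Finset.univ (fun j => t j - (σ j : ℕ)))
              * ∏ i, (t i).descFactorial ((σ i : Fin k) : ℕ) := by
              rw [Finset.prod_congr rfl fun j _ => hfac j, Finset.prod_mul_distrib]; ring
          _ = m.factorial * ∏ i, (t i).descFactorial ((σ i : Fin k) : ℕ) := by
              rw [Nat.multinomial_spec, sum_sub_perm t ht_sum σ hle]
      exact_mod_cast hnat
    · rw [if_neg hle, mul_zero]
      push_neg at hle
      obtain ⟨j, hj⟩ := hle
      rw [eq_comm, mul_eq_zero]
      right
      refine Finset.prod_eq_zero (Finset.mem_univ j) ?_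
      rw [Nat.cast_eq_zero, Nat.descFactorial_eq_zero_iff_lt]
      exact hj
  linear_combination ((Equiv.Perm.sign σ : ℤˣ) : ℤ) * hkey

lemma key_poly (p : ℕ) [Fact p.Prime] {k m : ℕ} (t : Fin k → ℕ)
    (ht_mono : StrictMono t) (ht_lt : ∀ i, t i < p) (hm : m < p) (hm1 : 1 ≤ m)
    (ht_sum : ∑ i, t i = (∑ i : Fin k, (i : ℕ)) + m)
    (C : Finset (ZMod p)) (hC : C.card = m) :
    ∃ f : MvPolynomial (Fin k) (ZMod p),
      f.totalDegree ≤ ∑ i, t i ∧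
      f.coeff (Finsupp.equivFunOnFinite.symm t) ≠ 0 ∧
      ∀ s : Fin k → ZMod p, MvPolynomial.eval s f ≠ 0 →
        (∀ i j, i ≠ j → s i ≠ s j) ∧ (∑ i, s i) ∉ C := by
  set L : MvPolynomial (Fin k) (ZMod p) := ∑ i, MvPolynomial.X i with hL
  set V : MvPolynomial (Fin k) (ZMod p) :=
    (Matrix.vandermonde (fun i : Fin k => (MvPolynomial.X i : MvPolynomial (Fin k) (ZMod p)))).det
    with hV
  set g : MvPolynomial (Fin k) (ZMod p) := ∏ c ∈ C, (L - MvPolynomial.C c) with hg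
  have tdL : L.totalDegree ≤ 1 := by
    refine MvPolynomial.totalDegree_finsetSum_le fun i _ => ?_
    rw [MvPolynomial.totalDegree_X]
  have tdfac : ∀ c : ZMod p, (L - MvPolynomial.C c).totalDegree ≤ 1 := fun c =>
    le_trans (MvPolynomial.totalDegree_sub _ _)
      (by rw [MvPolynomial.totalDegree_C]; exact max_le tdL (Nat.zero_le 1))
  have tdg : g.totalDegree ≤ m := by
    refine le_trans (MvPolynomial.totalDegree_finset_prod _ _) ?_
    calc ∑ c ∈ C, (L - MvPolynomial.C c).totalDegree ≤ ∑ _c ∈ C, (1 : ℕ) :=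
          Finset.sum_le_sum (f := fun c => (L - MvPolynomial.C c).totalDegree)
            (g := fun _ => (1 : ℕ)) fun c _ => tdfac c
      _ = m := by rw [Finset.sum_const, smul_eq_mul, mul_one, hC]
  have tdV : V.totalDegree ≤ ∑ i : Fin k, (i : ℕ) := by
    rw [hV, Matrix.det_vandermonde]
    refine le_trans (MvPolynomial.totalDegree_finset_prod _ _) ?_
    have hinner : ∀ i : Fin k,
        (∏ j ∈ Finset.Ioi i, (MvPolynomial.X j - MvPolynomial.X i
          : MvPolynomial (Fin k) (ZMod p))).totalDegree ≤ (Finset.Ioi i).card := by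
      intro i
      refine le_trans (MvPolynomial.totalDegree_finset_prod _ _) ?_
      calc ∑ j ∈ Finset.Ioi i, (MvPolynomial.X j - MvPolynomial.X i
            : MvPolynomial (Fin k) (ZMod p)).totalDegree
          ≤ ∑ _j ∈ Finset.Ioi i, 1 := Finset.sum_le_sum fun j _ =>
            le_trans (MvPolynomial.totalDegree_sub _ _)
              (by rw [MvPolynomial.totalDegree_X, MvPolynomial.totalDegree_X]; omega)
        _ = (Finset.Ioi i).card := by rw [Finset.sum_const, smul_eq_mul, mul_one]
    calc ∑ i, (∏ j ∈ Finset.Ioi i, (MvPolynomial.X j - MvPolynomial.X i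
          : MvPolynomial (Fin k) (ZMod p))).totalDegree
        ≤ ∑ i : Fin k, (Finset.Ioi i).card := Finset.sum_le_sum fun i _ => hinner i
      _ = ∑ i : Fin k, ((k : ℕ) - 1 - (i : ℕ)) := by
          refine Finset.sum_congr rfl fun i _ => ?_
          rw [Fin.card_Ioi]
      _ = ∑ i : Fin k, (i : ℕ) := by
          rw [Fin.sum_univ_eq_sum_range (fun i => (k : ℕ) - 1 - i) k,
            Fin.sum_univ_eq_sum_range (fun i => (i : ℕ)) k,
            Finset.sum_range_reflect (fun i => (i : ℕ)) k]
  refine ⟨g * V, ?_, ?_, ?_⟩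
  · calc (g * V).totalDegree ≤ g.totalDegree + V.totalDegree :=
        MvPolynomial.totalDegree_mul _ _
      _ ≤ m + ∑ i : Fin k, (i : ℕ) := add_le_add tdg tdV
      _ = ∑ i, t i := by rw [ht_sum]; ring
  · set T : Fin k →₀ ℕ := Finsupp.equivFunOnFinite.symm t with hT
    set P : Polynomial (ZMod p) := ∏ c ∈ C, (Polynomial.X - Polynomial.C c) with hP
    have hPm : P.Monic := Polynomial.monic_prod_of_monic _ _ fun c _ => Polynomial.monic_X_sub_C c
    have hPdeg : P.natDegree = m := by
      rw [hP, Polynomial.natDegree_prod _ _ fun c _ => Polynomial.X_sub_C_ne_zero c]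
      simp [Polynomial.natDegree_X_sub_C, hC]
    have hgP : Polynomial.aeval L P = g := by
      rw [hP, map_prod]
      refine Finset.prod_congr rfl fun c _ => ?_
      rw [map_sub, Polynomial.aeval_X, Polynomial.aeval_C, MvPolynomial.algebraMap_eq]
    set Q : Polynomial (ZMod p) := P - Polynomial.X ^ m with hQ
    have hQdeg : Q.natDegree ≤ m - 1 := by
      by_cases hQ0 : Q = 0
      · rw [hQ0, Polynomial.natDegree_zero]; omega
      · have hdeg : Q.degree < (m : ℕ) := by
          have h1 : P.degree = ((Polynomial.X : Polynomial (ZMod p)) ^ m).degree := by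
            rw [Polynomial.degree_X_pow, Polynomial.degree_eq_natDegree hPm.ne_zero, hPdeg]
          have h2 := Polynomial.degree_sub_lt h1 hPm.ne_zero
            (by rw [hPm.leadingCoeff, (Polynomial.monic_X_pow m).leadingCoeff])
          rw [Polynomial.degree_eq_natDegree hPm.ne_zero, hPdeg] at h2
          exact h2
        have := (Polynomial.natDegree_lt_iff_degree_lt hQ0).mpr hdeg
        omega
    have hgsplit : g = L ^ m + Polynomial.aeval L Q := by
      rw [hQ, map_sub, map_pow, Polynomial.aeval_X, hgP]
      ring
    have tdQ : (Polynomial.aeval L Q).totalDegree ≤ m - 1 := by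
      rw [Polynomial.aeval_eq_sum_range]
      refine MvPolynomial.totalDegree_finsetSum_le fun i hi => ?_
      rw [Finset.mem_range] at hi
      calc (Q.coeff i • L ^ i).totalDegree ≤ (L ^ i).totalDegree :=
            MvPolynomial.totalDegree_smul_le _ _
        _ ≤ i * L.totalDegree := MvPolynomial.totalDegree_pow _ _
        _ ≤ i * 1 := Nat.mul_le_mul_left i tdL
        _ ≤ m - 1 := by omega
    have hsplit : MvPolynomial.coeff T (g * V) = MvPolynomial.coeff T (L ^ m * V) := by
      rw [hgsplit, add_mul, MvPolynomial.coeff_add]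
      have hzero : MvPolynomial.coeff T (Polynomial.aeval L Q * V) = 0 := by
        apply MvPolynomial.coeff_eq_zero_of_totalDegree_lt
        have hTsum : ∑ i ∈ T.support, T i = ∑ i, t i :=
          Finset.sum_subset (Finset.subset_univ T.support)
            fun x _ hx => Finsupp.notMem_support_iff.mp hx
        rw [hTsum]
        calc (Polynomial.aeval L Q * V).totalDegree
            ≤ (Polynomial.aeval L Q).totalDegree + V.totalDegree :=
              MvPolynomial.totalDegree_mul _ _
          _ ≤ (m - 1) + ∑ i : Fin k, (i : ℕ) := add_le_add tdQ tdV
          _ < ∑ i, t i := by rw [ht_sum]; omega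
      rw [hzero, add_zero]
    have hmap : (L ^ m * V : MvPolynomial (Fin k) (ZMod p))
        = MvPolynomial.map (Int.castRingHom (ZMod p))
            ((∑ i, MvPolynomial.X i : MvPolynomial (Fin k) ℤ) ^ m * Vz k) := by
      rw [map_mul, map_pow]
      congr 1
      · rw [hL, map_sum]
        simp
      · rw [hV, Vz, RingHom.map_det]
        congr 1
        ext i j
        simp [Matrix.vandermonde_apply]
    have hcoeffmap : MvPolynomial.coeff T (L ^ m * V)
        = (((MvPolynomial.coeff T ((∑ i, MvPolynomial.X i : MvPolynomial (Fin k) ℤ) ^ m * Vz k))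
            : ℤ) : ZMod p) := by
      rw [hmap, MvPolynomial.coeff_map]
      rfl
    intro hcon
    rw [hsplit, hcoeffmap] at hcon
    have hid := N_det (m := m) t ht_sum
    have hcast := congrArg (fun z : ℤ => (z : ZMod p)) hid
    push_cast at hcast
    rw [hcon, mul_zero] at hcast
    have hfact : ((m.factorial : ℕ) : ZMod p) ≠ 0 := by
      rw [Ne, ZMod.natCast_eq_zero_iff]
      intro hdvd
      have := (Nat.Prime.dvd_factorial (Fact.out : p.Prime)).mp hdvd
      omega
    have hprodne : (∏ i, ∏ j ∈ Finset.Ioi i, ((t j : ZMod p) - (t i : ZMod p))) ≠ 0 := by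
      rw [Finset.prod_ne_zero_iff]
      intro i _
      rw [Finset.prod_ne_zero_iff]
      intro j hj
      have hij : t i < t j := ht_mono (Finset.mem_Ioi.mp hj)
      have hsub : ((t j : ℕ) : ZMod p) - ((t i : ℕ) : ZMod p) = ((t j - t i : ℕ) : ZMod p) := by
        push_cast [Nat.cast_sub hij.le]
        ring
      rw [hsub, Ne, ZMod.natCast_eq_zero_iff]
      intro hdvd
      have hlt : t j - t i < p := by have := ht_lt j; omega
      have hpos : 0 < t j - t i := by omega
      exact absurd (Nat.le_of_dvd hpos hdvd) (by omega)
    exact (mul_ne_zero hfact hprodne) hcast.symm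
  · intro s hs
    have heval : MvPolynomial.eval s (g * V) =
        MvPolynomial.eval s g * MvPolynomial.eval s V := map_mul _ _ _
    have hgV : MvPolynomial.eval s g ≠ 0 ∧ MvPolynomial.eval s V ≠ 0 := by
      rw [heval] at hs
      exact ⟨fun h => hs (by rw [h, zero_mul]), fun h => hs (by rw [h, mul_zero])⟩
    constructor
    · have hVs : MvPolynomial.eval s V = ∏ i, ∏ j ∈ Finset.Ioi i, (s j - s i) := by
        rw [hV, Matrix.det_vandermonde, map_prod]
        refine Finset.prod_congr rfl fun i _ => ?_
        rw [map_prod]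
        refine Finset.prod_congr rfl fun j _ => ?_
        rw [map_sub, MvPolynomial.eval_X, MvPolynomial.eval_X]
      have hne := hgV.2
      rw [hVs] at hne
      intro i j hij heq
      rcases lt_or_gt_of_ne hij with h | h
      · have h1 := (Finset.prod_ne_zero_iff.mp hne) i (Finset.mem_univ i)
        have h2 := (Finset.prod_ne_zero_iff.mp h1) j (Finset.mem_Ioi.mpr h)
        exact h2 (by rw [heq, sub_self])
      · have h1 := (Finset.prod_ne_zero_iff.mp hne) j (Finset.mem_univ j)
        have h2 := (Finset.prod_ne_zero_iff.mp h1) i (Finset.mem_Ioi.mpr h)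
        exact h2 (by rw [heq, sub_self])
    · intro hmem
      apply hgV.1
      rw [hg, map_prod]
      refine Finset.prod_eq_zero hmem ?_
      rw [map_sub, MvPolynomial.eval_C, hL, map_sum]
      simp [MvPolynomial.eval_X]

lemma sum_min_aux (d : ℕ) : ∀ k m : ℕ, m ≤ k * d →
    ∑ j ∈ Finset.range k, min d (m - j * d) = m := by
  intro k
  induction k with
  | zero => intro m hm; simp at hm ⊢; omega
  | succ k ih =>
      intro m hm
      rw [Finset.sum_range_succ']
      have hstep : ∀ j, min d (m - (j + 1) * d) = min d ((m - d) - j * d) := by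
        intro j; congr 1; ring_nf; omega
      rw [Finset.sum_congr rfl fun j _ => hstep j]
      by_cases hmd : m ≤ d
      · have h0 : m - d = 0 := by omega
        rw [h0]
        have hz : ∑ j ∈ Finset.range k, min d (0 - j * d) = 0 :=
          Finset.sum_eq_zero fun j _ => by simp
        rw [hz]
        simp
        omega
      · rw [ih (m - d) (by rw [Nat.succ_mul] at hm; omega)]
        simp
        omega

theorem dias_da_silva_hamidoune (p : ℕ) (hp : p.Prime) (n k : ℕ)
    (A : Finset (ZMod p)) (hA : A.card = n) (hk : 1 ≤ k) (hkn : k ≤ n) :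
    min (k * (n - k) + 1) p ≤
      ((A.powersetCard k).image (fun B => ∑ x ∈ B, x)).card := by
  haveI : Fact p.Prime := ⟨hp⟩
  set Img := (A.powersetCard k).image (fun B => ∑ x ∈ B, x) with hImg
  have hImgne : Img.Nonempty := by
    obtain ⟨B, hB, hBcard⟩ := Finset.exists_subset_card_eq (n := k) (hA ▸ hkn)
    exact ⟨_, Finset.mem_image_of_mem _ (Finset.mem_powersetCard.mpr ⟨hB, hBcard⟩)⟩
  have h1 : 1 ≤ Img.card := Finset.card_pos.mpr hImgne
  by_contra hcon
  push_neg at hcon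
  set M := min (k * (n - k) + 1) p with hM
  have hM2 : 2 ≤ M := by omega
  have hp2 : 2 ≤ p := hp.two_le
  have hMle1 : M ≤ k * (n - k) + 1 := min_le_left _ _
  have hMle2 : M ≤ p := min_le_right _ _
  have hkd1 : 1 ≤ k * (n - k) := by omega
  have hd1 : 1 ≤ n - k := by
    by_contra hd
    push_neg at hd
    interval_cases h : n - k
    · simp at hkd1
  set d := n - k with hd
  set m := M - 1 with hm
  have hm1 : 1 ≤ m := by omega
  have hmkd : m ≤ k * d := by omega
  have hmp : m < p := by omega
  have hnp : n ≤ p := by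
    have h2 := Finset.card_le_univ A
    rwa [hA, ZMod.card] at h2
  obtain ⟨C, hCsub, hCcard⟩ := Finset.exists_superset_card_eq (s := Img) (n := m)
    (by omega) (by rw [ZMod.card]; omega)
  set t : Fin k → ℕ := fun i => (i : ℕ) + min d (m - (k - 1 - (i : ℕ)) * d) with ht
  have ht_le : ∀ i, t i ≤ n - 1 := by
    intro i
    have h2 : min d (m - (k - 1 - (i : ℕ)) * d) ≤ d := min_le_left _ _
    have h3 : (i : ℕ) < k := i.isLt
    simp only [ht]
    omega
  have ht_lt : ∀ i, t i < p := fun i => by have := ht_le i; omega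
  have ht_mono : StrictMono t := by
    intro a b hab
    have hab' : (a : ℕ) < (b : ℕ) := hab
    have hbk : (b : ℕ) < k := b.isLt
    have h1 : min d (m - (k - 1 - (a : ℕ)) * d) ≤ min d (m - (k - 1 - (b : ℕ)) * d) := by
      apply min_le_min le_rfl
      apply Nat.sub_le_sub_left
      apply Nat.mul_le_mul_right
      omega
    simp only [ht]
    omega
  have ht_sum : ∑ i, t i = (∑ i : Fin k, (i : ℕ)) + m := by
    have hsum2 : ∑ i : Fin k, min d (m - (k - 1 - (i : ℕ)) * d) = m := by
      rw [Fin.sum_univ_eq_sum_range (fun j => min d (m - (k - 1 - j) * d)) k,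
        Finset.sum_range_reflect (fun j => min d (m - j * d)) k]
      exact sum_min_aux d k m hmkd
    rw [ht, Finset.sum_add_distrib, hsum2]
  obtain ⟨f, hfdeg, hfcoeff, hfchar⟩ :=
    key_poly p t ht_mono ht_lt hmp hm1 ht_sum C hCcard
  obtain ⟨s, hsmem, hsne⟩ := comb_null f t hfdeg hfcoeff (fun _ => A)
    (fun i => by have := ht_le i; rw [hA]; omega)
  obtain ⟨hinj, hnotC⟩ := hfchar s hsne
  have hsinj : Function.Injective s := by
    intro a b hab
    by_contra hne
    exact hinj a b hne hab
  set B := Finset.image s Finset.univ with hB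
  have hBsub : B ⊆ A := by
    intro x hx
    obtain ⟨i, _, rfl⟩ := Finset.mem_image.mp hx
    exact hsmem i
  have hBcard : B.card = k := by
    rw [hB, Finset.card_image_of_injective _ hsinj, Finset.card_univ, Fintype.card_fin]
  have hBsum : ∑ x ∈ B, x = ∑ i, s i :=
    Finset.sum_image fun i _ j _ h => hsinj h
  apply hnotC
  apply hCsub
  rw [← hBsum]
  exact Finset.mem_image_of_mem _ (Finset.mem_powersetCard.mpr ⟨hBsub, hBcard⟩)
end

section
/- For integers 1 ≤ k ≤ n, the degree of the Plücker embedding of the Grassmannian Gr_k(C^n), given by the formula (k(n-k))! · ∏_{i=1}^{k} (i-1)!/(n-i)!, is a positive integer. -/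
open Finset Nat Polynomial Equiv

private lemma sum_eq_km {K m : ℕ} (σ : Perm (Fin (K+1)))
    (h : ∀ i : Fin (K+1), (i:ℕ) ≤ m + σ i) :
    ∑ i : Fin (K+1), (m + (σ i : ℕ) - (i:ℕ)) = (K+1) * m := by
  have h1 : ((∑ i : Fin (K+1), (m + (σ i : ℕ) - (i:ℕ)) : ℕ) : ℤ)
      = ∑ i : Fin (K+1), ((m:ℤ) + ((σ i : ℕ):ℤ) - ((i:ℕ):ℤ)) := by
    rw [Nat.cast_sum]
    refine Finset.sum_congr rfl fun i _ => ?_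
    rw [Nat.cast_sub (h i)]
    push_cast
    ring
  have h2 : ∑ i : Fin (K+1), ((m:ℤ) + ((σ i : ℕ):ℤ) - ((i:ℕ):ℤ)) = ((K+1) * m : ℕ) := by
    rw [Finset.sum_sub_distrib, Finset.sum_add_distrib,
      Equiv.sum_comp σ (fun i : Fin (K+1) => ((i:ℕ):ℤ)), add_sub_cancel_right,
      Finset.sum_const, Finset.card_univ]
    push_cast
    simp only [Fintype.card_fin]
    ring
  exact_mod_cast h1.trans h2

private lemma det_descFact (m K : ℕ) :
    (Matrix.of fun i j : Fin (K+1) => ((m + (i:ℕ)).descFactorial (j:ℕ) : ℚ)).det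
      = (Nat.superFactorial K : ℚ) := by
  have h := Matrix.det_eval_matrixOfPolynomials_eq_det_vandermonde
    (R := ℚ) (fun i : Fin (K+1) => ((i:ℕ):ℚ) + m)
    (fun j : Fin (K+1) => descPochhammer ℚ (j:ℕ))
    (fun j => descPochhammer_natDegree ℚ j) (fun j => monic_descPochhammer ℚ j)
  rw [Matrix.det_vandermonde_add, Matrix.det_vandermonde_id_eq_superFactorial] at h
  have hM : (Matrix.of fun i j : Fin (K+1) => ((m + (i:ℕ)).descFactorial (j:ℕ) : ℚ))
      = Matrix.of fun i j : Fin (K+1) =>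
          eval ((fun i : Fin (K+1) => ((i:ℕ):ℚ) + (m:ℚ)) i)
            ((fun j : Fin (K+1) => descPochhammer ℚ (j:ℕ)) j) := by
    ext i j
    simp only [Matrix.of_apply]
    rw [show ((i:ℕ):ℚ) + (m:ℚ) = ((m + (i:ℕ) : ℕ):ℚ) by push_cast; ring,
      descPochhammer_eval_eq_descFactorial]
  rw [hM, ← h]

private lemma exists_int (m K : ℕ) :
    ∃ s : ℤ, (s : ℚ) = (Nat.factorial ((K+1)*m) : ℚ) *
      (∏ i ∈ Finset.range (K+1), (Nat.factorial i : ℚ)) /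
      ∏ i ∈ Finset.range (K+1), (Nat.factorial (m+i) : ℚ) := by
  classical
  refine ⟨∑ σ : Perm (Fin (K+1)), (Equiv.Perm.sign σ : ℤ) *
    (if ∀ i : Fin (K+1), (i:ℕ) ≤ m + σ i
      then (Nat.multinomial Finset.univ (fun i : Fin (K+1) => m + (σ i:ℕ) - (i:ℕ)) : ℤ)
      else 0), ?_⟩
  have hP : (∏ i ∈ Finset.range (K+1), (Nat.factorial i : ℚ)) = (Nat.superFactorial K : ℚ) := by
    rw [← Nat.cast_prod, Nat.prod_range_succ_factorial]
  have expand : (Nat.factorial ((K+1)*m) : ℚ) *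
      (∏ i ∈ Finset.range (K+1), (Nat.factorial i : ℚ)) /
      ∏ i ∈ Finset.range (K+1), (Nat.factorial (m+i) : ℚ)
      = ∑ σ : Perm (Fin (K+1)), ((Equiv.Perm.sign σ : ℤ) : ℚ) *
        ((Nat.factorial ((K+1)*m) : ℚ) / (∏ i ∈ Finset.range (K+1), (Nat.factorial (m+i) : ℚ))
          * ∏ i : Fin (K+1), ((m + (σ i:ℕ)).descFactorial (i:ℕ) : ℚ)) := by
    have : (Nat.factorial ((K+1)*m) : ℚ) *
        (∏ i ∈ Finset.range (K+1), (Nat.factorial i : ℚ)) /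
        ∏ i ∈ Finset.range (K+1), (Nat.factorial (m+i) : ℚ)
        = (Nat.factorial ((K+1)*m) : ℚ) /
          (∏ i ∈ Finset.range (K+1), (Nat.factorial (m+i) : ℚ)) *
          (Matrix.of fun i j : Fin (K+1) => ((m + (i:ℕ)).descFactorial (j:ℕ) : ℚ)).det := by
      rw [det_descFact, hP]; ring
    rw [this, Matrix.det_apply', Finset.mul_sum]
    refine Finset.sum_congr rfl fun σ _ => ?_
    simp only [Matrix.of_apply]
    ring
  rw [expand]
  push_cast
  refine Finset.sum_congr rfl fun σ _ => ?_
  congr 1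
  split_ifs with h
  · have hQ : ∏ i ∈ Finset.range (K+1), (Nat.factorial (m+i) : ℚ)
        = ∏ i : Fin (K+1), (Nat.factorial (m + (σ i:ℕ)) : ℚ) := by
      rw [← Fin.prod_univ_eq_prod_range (fun i => (Nat.factorial (m+i) : ℚ)) (K+1),
        ← Equiv.prod_comp σ (fun i : Fin (K+1) => (Nat.factorial (m + (i:ℕ)) : ℚ))]
    rw [hQ, div_mul_eq_mul_div, eq_div_iff (by positivity)]
    have hnat : Nat.multinomial Finset.univ (fun i : Fin (K+1) => m + (σ i:ℕ) - (i:ℕ)) *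
        ∏ i : Fin (K+1), Nat.factorial (m + (σ i:ℕ))
        = Nat.factorial ((K+1)*m) *
          ∏ i : Fin (K+1), (m + (σ i:ℕ)).descFactorial (i:ℕ) := by
      have hfac : ∀ i : Fin (K+1), Nat.factorial (m + (σ i:ℕ))
          = Nat.factorial (m + (σ i:ℕ) - (i:ℕ)) * (m + (σ i:ℕ)).descFactorial (i:ℕ) :=
        fun i => (Nat.factorial_mul_descFactorial (h i)).symm
      calc Nat.multinomial Finset.univ (fun i : Fin (K+1) => m + (σ i:ℕ) - (i:ℕ)) *
            ∏ i : Fin (K+1), Nat.factorial (m + (σ i:ℕ))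
          = (∏ i : Fin (K+1), Nat.factorial (m + (σ i:ℕ) - (i:ℕ))) *
              Nat.multinomial Finset.univ (fun i : Fin (K+1) => m + (σ i:ℕ) - (i:ℕ)) *
              ∏ i : Fin (K+1), (m + (σ i:ℕ)).descFactorial (i:ℕ) := by
            rw [Finset.prod_congr rfl fun i _ => hfac i, Finset.prod_mul_distrib]; ring
        _ = Nat.factorial ((K+1)*m) *
              ∏ i : Fin (K+1), (m + (σ i:ℕ)).descFactorial (i:ℕ) := by
            rw [Nat.multinomial_spec, sum_eq_km σ h]
    exact_mod_cast congrArg (Nat.cast : ℕ → ℚ) hnat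
  · push_neg at h
    obtain ⟨i, hi⟩ := h
    have h0 : ((m + (σ i:ℕ)).descFactorial (i:ℕ) : ℚ) = 0 := by
      rw [Nat.descFactorial_eq_zero_iff_lt.mpr hi]; norm_num
    rw [Finset.prod_eq_zero (Finset.mem_univ i) h0]
    ring

theorem grassmannian_degree_pos_int (n k : ℕ) (hk : 1 ≤ k) (hkn : k ≤ n) :
    ∃ m : ℕ, 0 < m ∧
      (m : ℚ) = (Nat.factorial (k * (n - k)) : ℚ) *
        ∏ i ∈ Finset.range k,
          (Nat.factorial i : ℚ) / (Nat.factorial (n - 1 - i) : ℚ) := by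
  obtain ⟨K, rfl⟩ : ∃ K, k = K + 1 := ⟨k - 1, by omega⟩
  set m' := n - (K+1) with hm'
  have hprod : ∏ i ∈ Finset.range (K+1),
      (Nat.factorial i : ℚ) / (Nat.factorial (n - 1 - i) : ℚ)
      = (∏ i ∈ Finset.range (K+1), (Nat.factorial i : ℚ)) /
        ∏ i ∈ Finset.range (K+1), (Nat.factorial (m' + i) : ℚ) := by
    rw [Finset.prod_div_distrib]
    congr 1
    rw [← Finset.prod_range_reflect (fun i => (Nat.factorial (m' + i) : ℚ)) (K+1)]
    refine Finset.prod_congr rfl fun i hi => ?_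
    rw [Finset.mem_range] at hi
    congr 2
    omega
  obtain ⟨s, hs⟩ := exists_int m' K
  have hR : (s : ℚ) = (Nat.factorial ((K+1) * (n - (K+1))) : ℚ) *
      ∏ i ∈ Finset.range (K+1),
        (Nat.factorial i : ℚ) / (Nat.factorial (n - 1 - i) : ℚ) := by
    rw [hprod, ← hm', hs]; ring
  have hpos : (0:ℚ) < (s : ℚ) := by
    rw [hR]
    apply mul_pos
    · exact_mod_cast Nat.factorial_pos _
    · apply Finset.prod_pos
      intro i _
      apply _root_.div_pos <;> exact_mod_cast Nat.factorial_pos _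
  have hs0 : 0 < s := by exact_mod_cast hpos
  refine ⟨s.toNat, by omega, ?_⟩
  have : ((s.toNat : ℤ) : ℚ) = (s : ℚ) := by rw [Int.toNat_of_nonneg hs0.le]
  rw [show ((s.toNat : ℕ) : ℚ) = ((s.toNat : ℤ) : ℚ) by push_cast; ring, this, hR]
end

section
/- Let F be a field (or any integral domain) and let x_1,...,x_r, y_1,...,y_s be pairwise distinct elements (x_i distinct among themselves, y_j distinct among themselves). Let M be any multiset of r + s - 2 elements of F. Then binom(r+s-2, r-1)·1_F = Σ_{i=1}^{r} Σ_{j=1}^{s} [ ∏_{m ∈ M}(x_i + y_j - m) ] / [ ∏_{k ≠ i}(x_i - x_k) · ∏_{l ≠ j}(y_j - y_l) ]. -/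
open Finset Polynomial

/-- Lagrange divided-difference lemma: for `d < n`, the sum
`∑ i, x i ^ d / ∏_{k ≠ i} (x i - x k)` is `1` if `d = n - 1` and `0` otherwise. -/
lemma lag_sum {F : Type*} [Field F] {n : ℕ} (x : Fin n → F) (hx : Function.Injective x)
    (d : ℕ) (hd : d < n) :
    ∑ i : Fin n, x i ^ d * (∏ k ∈ Finset.univ.erase i, (x i - x k))⁻¹ =
      if d = n - 1 then 1 else 0 := by
  classical
  have hinj : Set.InjOn x ((univ : Finset (Fin n)) : Set (Fin n)) := hx.injOn
  have hcard : #(univ : Finset (Fin n)) = n := by simp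
  have hdeg : ((X : F[X]) ^ d).degree < (#(univ : Finset (Fin n)) : ℕ) := by
    rw [degree_X_pow, hcard]
    exact_mod_cast hd
  have hI : Lagrange.interpolate univ x (fun i => ((X : F[X]) ^ d).eval (x i)) = X ^ d :=
    (Lagrange.eq_interpolate hinj hdeg).symm
  have hc := congrArg (fun p : F[X] => p.coeff (n - 1)) hI
  simp only [Lagrange.interpolate_apply, eval_pow, eval_X] at hc
  rw [Polynomial.finset_sum_coeff, Polynomial.coeff_X_pow] at hc
  have hb : ∀ i : Fin n,
      (Lagrange.basis univ x i).coeff (n - 1) =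
        (∏ k ∈ univ.erase i, (x i - x k))⁻¹ := by
    intro i
    rw [Lagrange.basis_eq_prod_sub_inv_mul_nodal_div (mem_univ i),
      ← Lagrange.nodal_erase_eq_nodal_div (mem_univ i), coeff_C_mul]
    have hmon : (Lagrange.nodal (univ.erase i) x).Monic := Lagrange.nodal_monic
    have hdeg2 : (Lagrange.nodal (univ.erase i) x).natDegree = n - 1 := by
      rw [Lagrange.natDegree_nodal, card_erase_of_mem (mem_univ i), hcard]
    rw [← hdeg2, hmon.coeff_natDegree, mul_one, Lagrange.nodalWeight,
      ← Finset.prod_inv_distrib]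
  calc ∑ i : Fin n, x i ^ d * (∏ k ∈ Finset.univ.erase i, (x i - x k))⁻¹
      = ∑ i : Fin n, (C (x i ^ d) * Lagrange.basis univ x i).coeff (n - 1) := by
        refine Finset.sum_congr rfl fun i _ => ?_
        rw [coeff_C_mul, hb i]
    _ = if n - 1 = d then 1 else 0 := hc
    _ = if d = n - 1 then 1 else 0 := by simp [eq_comm]

lemma add_pow_ext {F : Type*} [CommRing F] (x y : F) (k N : ℕ) (h : k ≤ N) :
    (x + y) ^ k = ∑ a ∈ Finset.range (N + 1), x ^ a * y ^ (k - a) * (k.choose a : F) := by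
  rw [add_pow]
  apply Finset.sum_subset (Finset.range_subset_range.mpr (by omega))
  intro a ha hna
  have hka : k < a := by
    simp only [Finset.mem_range] at ha hna; omega
  simp [Nat.choose_eq_zero_of_lt hka]

lemma sum_sum_mul_factor {F : Type*} [CommRing F] {ι κ : Type*}
    (s : Finset ι) (t : Finset κ) (c : F) (u : ι → F) (v : κ → F) :
    ∑ i ∈ s, ∑ j ∈ t, c * (u i * v j) = c * ((∑ i ∈ s, u i) * (∑ j ∈ t, v j)) := by
  rw [Finset.sum_mul_sum, Finset.mul_sum]
  exact Finset.sum_congr rfl fun i _ => by rw [Finset.mul_sum]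

lemma sum_swap4 {M : Type*} [AddCommMonoid M] {ι₁ ι₂ ι₃ ι₄ : Type*}
    (s1 : Finset ι₁) (s2 : Finset ι₂) (s3 : Finset ι₃) (s4 : Finset ι₄)
    (f : ι₁ → ι₂ → ι₃ → ι₄ → M) :
    ∑ i ∈ s1, ∑ j ∈ s2, ∑ k ∈ s3, ∑ a ∈ s4, f i j k a =
      ∑ k ∈ s3, ∑ a ∈ s4, ∑ i ∈ s1, ∑ j ∈ s2, f i j k a := by
  calc ∑ i ∈ s1, ∑ j ∈ s2, ∑ k ∈ s3, ∑ a ∈ s4, f i j k a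
      = ∑ i ∈ s1, ∑ k ∈ s3, ∑ j ∈ s2, ∑ a ∈ s4, f i j k a := by
        exact Finset.sum_congr rfl fun i _ => Finset.sum_comm
    _ = ∑ i ∈ s1, ∑ k ∈ s3, ∑ a ∈ s4, ∑ j ∈ s2, f i j k a := by
        exact Finset.sum_congr rfl fun i _ => Finset.sum_congr rfl fun k _ => Finset.sum_comm
    _ = ∑ k ∈ s3, ∑ i ∈ s1, ∑ a ∈ s4, ∑ j ∈ s2, f i j k a := Finset.sum_comm
    _ = ∑ k ∈ s3, ∑ a ∈ s4, ∑ i ∈ s1, ∑ j ∈ s2, f i j k a := by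
        exact Finset.sum_congr rfl fun k _ => Finset.sum_comm

theorem segre_localization_identity {F : Type*} [Field F] (r s : ℕ)
    (hr : 1 ≤ r) (hs : 1 ≤ s)
    (x : Fin r → F) (y : Fin s → F)
    (hx : Function.Injective x) (hy : Function.Injective y)
    (M : Multiset F) (hM : Multiset.card M = r + s - 2) :
    ((r + s - 2).choose (r - 1) : F) =
      ∑ i : Fin r, ∑ j : Fin s,
        (M.map (fun m => x i + y j - m)).prod /
          ((∏ k ∈ Finset.univ.erase i, (x i - x k)) *
           (∏ l ∈ Finset.univ.erase j, (y j - y l))) := by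
  classical
  set n := r + s - 2 with hn
  set Q : F[X] := (M.map (fun m => X - C m)).prod with hQ
  have hQm : Q.Monic :=
    monic_multiset_prod_of_monic _ _ fun m _ => monic_X_sub_C m
  have hQd : Q.natDegree = n := by
    rw [hQ, natDegree_multiset_prod_of_monic _ (by
      intro f hf
      obtain ⟨m, _, rfl⟩ := Multiset.mem_map.mp hf
      exact monic_X_sub_C m)]
    simp [Multiset.map_map, Function.comp, natDegree_X_sub_C, hM]
  have hQe : ∀ t : F, Q.eval t = (M.map (fun m => t - m)).prod := by
    intro t
    rw [hQ, eval_multiset_prod, Multiset.map_map]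
    simp [Function.comp]
  -- notation for the weights and moment sums
  set Px : Fin r → F := fun i => ∏ k ∈ Finset.univ.erase i, (x i - x k) with hPx
  set Py : Fin s → F := fun j => ∏ l ∈ Finset.univ.erase j, (y j - y l) with hPy
  set A : ℕ → F := fun a => ∑ i : Fin r, x i ^ a * (Px i)⁻¹ with hA'
  set B : ℕ → F := fun b => ∑ j : Fin s, y j ^ b * (Py j)⁻¹ with hB'
  have hA : ∀ a, a < r → A a = if a = r - 1 then 1 else 0 := fun a ha => lag_sum x hx a ha
  have hB : ∀ b, b < s → B b = if b = s - 1 then 1 else 0 := fun b hb => lag_sum y hy b hb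
  have key : ∀ (i : Fin r) (j : Fin s),
      (M.map (fun m => x i + y j - m)).prod / (Px i * Py j) =
        ∑ k ∈ Finset.range (n + 1), ∑ a ∈ Finset.range (n + 1),
          Q.coeff k * (k.choose a : F) *
            ((x i ^ a * (Px i)⁻¹) * (y j ^ (k - a) * (Py j)⁻¹)) := by
    intro i j
    rw [← hQe (x i + y j), div_eq_mul_inv, mul_inv, Polynomial.eval_eq_sum_range, hQd,
      Finset.sum_mul]
    refine Finset.sum_congr rfl fun k hk => ?_
    have hk' : k ≤ n := by simp only [Finset.mem_range] at hk; omega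
    rw [add_pow_ext (x i) (y j) k n hk', Finset.mul_sum, Finset.sum_mul]
    exact Finset.sum_congr rfl fun a _ => by ring
  have step1 : (∑ i : Fin r, ∑ j : Fin s,
      (M.map (fun m => x i + y j - m)).prod / (Px i * Py j)) =
      ∑ k ∈ Finset.range (n + 1), ∑ a ∈ Finset.range (n + 1),
        Q.coeff k * (k.choose a : F) * (A a * B (k - a)) := by
    calc (∑ i : Fin r, ∑ j : Fin s,
        (M.map (fun m => x i + y j - m)).prod / (Px i * Py j))
        = ∑ i : Fin r, ∑ j : Fin s, ∑ k ∈ Finset.range (n + 1), ∑ a ∈ Finset.range (n + 1),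
            Q.coeff k * (k.choose a : F) *
              ((x i ^ a * (Px i)⁻¹) * (y j ^ (k - a) * (Py j)⁻¹)) := by
          exact Finset.sum_congr rfl fun i _ => Finset.sum_congr rfl fun j _ => key i j
      _ = ∑ k ∈ Finset.range (n + 1), ∑ a ∈ Finset.range (n + 1),
            ∑ i : Fin r, ∑ j : Fin s,
            Q.coeff k * (k.choose a : F) *
              ((x i ^ a * (Px i)⁻¹) * (y j ^ (k - a) * (Py j)⁻¹)) :=
          sum_swap4 _ _ _ _ _
      _ = ∑ k ∈ Finset.range (n + 1), ∑ a ∈ Finset.range (n + 1),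
            Q.coeff k * (k.choose a : F) * (A a * B (k - a)) := by
          refine Finset.sum_congr rfl fun k _ => Finset.sum_congr rfl fun a _ => ?_
          exact sum_sum_mul_factor _ _ _ _ _
  rw [step1]
  have hzero : ∀ k ∈ Finset.range (n + 1), ∀ a ∈ Finset.range (n + 1),
      ¬(k = n ∧ a = r - 1) →
      Q.coeff k * (k.choose a : F) * (A a * B (k - a)) = 0 := by
    intro k hk a _ hka
    simp only [Finset.mem_range] at hk
    rcases lt_or_ge k a with h | h
    · simp [Nat.choose_eq_zero_of_lt h]
    · rcases lt_or_ge a (r - 1) with h2 | h2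
      · rw [hA a (by omega), if_neg (by omega)]
        simp
      · have hb : k - a < s - 1 := by omega
        rw [hB (k - a) (by omega), if_neg (by omega)]
        simp
  rw [Finset.sum_eq_single_of_mem n (Finset.mem_range.mpr (by omega))
    (fun k hk hkn => Finset.sum_eq_zero fun a ha =>
      hzero k hk a ha (fun hc => hkn hc.1)),
    Finset.sum_eq_single_of_mem (r - 1) (Finset.mem_range.mpr (by omega))
    (fun a ha han => hzero n (Finset.mem_range.mpr (by omega)) a ha
      (fun hc => han hc.2))]
  have hcoeff : Q.coeff n = 1 := by rw [← hQd]; exact hQm.coeff_natDegree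
  have hns : n - (r - 1) = s - 1 := by omega
  rw [hcoeff, hA (r - 1) (by omega), if_pos rfl, hns, hB (s - 1) (by omega), if_pos rfl]
  ring
end

section
/- Let F be a field, 1 ≤ k ≤ n, and x_1,...,x_n pairwise distinct elements of F. Let M be any multiset of k(n-k) elements of F. Then (k(n-k))! · ∏_{i=1}^{k} (i-1)!/(n-i)! (as an element of F via the canonical map from Z, the quotient being an integer) equals Σ_{J} [∏_{m ∈ M}(x_J - m)] / [∏_{i ∈ J} ∏_{j ∉ J}(x_i - x_j)], where the sum runs over all k-element subsets J of {1,...,n} and x_J = Σ_{i ∈ J} x_i. -/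
open MvPolynomial Finset

namespace GrassLoc

noncomputable section

variable {n : ℕ}

abbrev Rn (n : ℕ) := MvPolynomial (Fin n) ℤ

def pairSet (n : ℕ) : Finset (Fin n × Fin n) := univ.filter (fun p => p.1 < p.2)

lemma mem_pairSet {p : Fin n × Fin n} : p ∈ pairSet n ↔ p.1 < p.2 := by
  simp [pairSet]

def Vand (n : ℕ) : Rn n := ∏ p ∈ pairSet n, (X p.1 - X p.2)

def Wd (J : Finset (Fin n)) : Rn n := ∏ i ∈ J, ∏ j ∈ univ \ J, (X i - X j)

lemma X_sub_ne_zero {u v : Fin n} (h : u ≠ v) : (X u - X v : Rn n) ≠ 0 := by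
  intro hz
  have := congrArg (eval (fun i => if i = u then (1:ℤ) else 0)) hz
  simp [eval_X, h.symm] at this

lemma Wd_ne_zero {J : Finset (Fin n)} : Wd J ≠ 0 := by
  rw [Wd, Finset.prod_ne_zero_iff]
  intro i hi
  rw [Finset.prod_ne_zero_iff]
  intro j hj
  apply X_sub_ne_zero
  rintro rfl
  simp at hj
  exact hj hi

lemma Vand_ne_zero : Vand n ≠ 0 := by
  rw [Vand, Finset.prod_ne_zero_iff]
  intro p hp
  exact X_sub_ne_zero (mem_pairSet.mp hp).ne

/-- sort a pair -/
def st (p : Fin n × Fin n) : Fin n × Fin n := if p.1 < p.2 then p else p.swap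

lemma st_mem_pairSet {p : Fin n × Fin n} (h : p.1 ≠ p.2) : st p ∈ pairSet n := by
  rw [mem_pairSet, st]
  rcases lt_or_gt_of_ne h with h1 | h1
  · simp [h1]
  · simp [not_lt_of_gt h1, Prod.swap, h1]

lemma st_swap (p : Fin n × Fin n) (h : p.1 ≠ p.2) : st p.swap = st p := by
  rcases lt_or_gt_of_ne h with h1 | h1 <;>
    simp [st, Prod.swap, h1, not_lt_of_gt h1]

lemma st_eq_or_eq_swap (p : Fin n × Fin n) : st p = p ∨ st p = p.swap := by
  rw [st]; split_ifs <;> simp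

lemma st_of_mem {p : Fin n × Fin n} (h : p ∈ pairSet n) : st p = p := by
  rw [st, if_pos (mem_pairSet.mp h)]

lemma exists_G (J : Finset (Fin n)) : ∃ g, Wd J * g = Vand n := by
  classical
  set s := J ×ˢ (univ \ J) with hs
  have hmem : ∀ p ∈ s, p.1 ∈ J ∧ p.2 ∉ J := by
    intro p hp
    rw [hs, Finset.mem_product] at hp
    simp only [Finset.mem_sdiff] at hp
    exact ⟨hp.1, hp.2.2⟩
  have hne : ∀ p ∈ s, p.1 ≠ p.2 := by
    intro p hp h
    obtain ⟨h1, h2⟩ := hmem p hp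
    exact h2 (h ▸ h1)
  have h1 : Wd J = ∏ p ∈ s, (X p.1 - X p.2 : Rn n) := by
    rw [Wd, hs]
    exact (Finset.prod_product' _ _ (fun i j => (X i - X j : Rn n))).symm
  have h2 : ∀ p ∈ s, (X p.1 - X p.2 : Rn n)
      = (if p.1 < p.2 then 1 else -1) * (X (st p).1 - X (st p).2) := by
    intro p hp
    rw [st]
    split_ifs with h
    · ring
    · simp only [Prod.fst_swap, Prod.snd_swap]; ring
  set E : Rn n := ∏ p ∈ s, (if p.1 < p.2 then (1 : Rn n) else -1) with hE
  have key : Wd J = E * ∏ p ∈ s, (X (st p).1 - X (st p).2 : Rn n) := by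
    rw [h1, hE, ← Finset.prod_mul_distrib]
    exact Finset.prod_congr rfl h2
  have einv : E * E = 1 := by
    rw [hE, ← Finset.prod_mul_distrib]
    apply Finset.prod_eq_one
    intro p _
    split_ifs <;> ring
  have hinj : ∀ p ∈ s, ∀ q ∈ s, st p = st q → p = q := by
    intro p hp q hq h
    have hps := st_eq_or_eq_swap p
    have hqs := st_eq_or_eq_swap q
    rcases hps with h1 | h1 <;> rcases hqs with h2 | h2 <;> rw [h1, h2] at h
    · exact h
    · exfalso
      obtain ⟨ha, hb⟩ := hmem p hp
      obtain ⟨hc, hd⟩ := hmem q hq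
      have : p.1 = q.2 := by rw [h]; rfl
      exact hd (this ▸ ha)
    · exfalso
      obtain ⟨ha, hb⟩ := hmem p hp
      obtain ⟨hc, hd⟩ := hmem q hq
      have : p.2 = q.1 := by rw [← h]; rfl
      exact hb (this ▸ hc)
    · exact Prod.swap_injective h
  have him : ∏ p ∈ s, (X (st p).1 - X (st p).2 : Rn n)
      = ∏ q ∈ s.image st, (X q.1 - X q.2) :=
    (Finset.prod_image (f := fun q : Fin n × Fin n => (X q.1 - X q.2 : Rn n)) hinj).symm
  have hsub : s.image st ⊆ pairSet n := by
    intro q hq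
    rw [Finset.mem_image] at hq
    obtain ⟨p, hp, rfl⟩ := hq
    exact st_mem_pairSet (hne p hp)
  obtain ⟨r, hr⟩ := Finset.prod_dvd_prod_of_subset _ _ (fun q : Fin n × Fin n => (X q.1 - X q.2 : Rn n)) hsub
  refine ⟨E * r, ?_⟩
  have : Wd J * (E * r) = (E * E) * ((∏ q ∈ s.image st, (X q.1 - X q.2 : Rn n)) * r) := by
    rw [key, him]; ring
  rw [this, einv, one_mul, Vand, ← hr]

/-- the cofactor: `Wd J * G J = Vand n` -/
def Gc (J : Finset (Fin n)) : Rn n := (exists_G J).choose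

lemma Wd_mul_Gc (J : Finset (Fin n)) : Wd J * Gc J = Vand n := (exists_G J).choose_spec

section Subst

variable (a b : Fin n)

/-- substitution `X b ↦ X a` -/
def fsub : Rn n →ₐ[ℤ] Rn n := aeval (fun i => if i = b then X a else X i)

lemma fsub_X (i : Fin n) : fsub a b (X i) = X (if i = b then a else i) := by
  rw [fsub, aeval_X, apply_ite X]

lemma fsub_rename_swap (p : Rn n) :
    fsub a b (rename (Equiv.swap a b) p) = fsub a b p := by
  have : (fsub a b).comp (rename (R := ℤ) (Equiv.swap a b)) = fsub a b := by
    apply MvPolynomial.algHom_ext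
    intro i
    simp only [AlgHom.comp_apply, rename_X, fsub_X]
    congr 1
    rcases eq_or_ne i b with hib | hib
    · rw [hib, Equiv.swap_apply_right]
      split_ifs <;> simp_all
    · rcases eq_or_ne i a with hia | hia
      · have hab : a ≠ b := hia ▸ hib
        rw [hia, Equiv.swap_apply_left, if_pos rfl, if_neg hab]
      · rw [Equiv.swap_apply_of_ne_of_ne hia hib, if_neg hib]
  calc fsub a b (rename (Equiv.swap a b) p)
      = ((fsub a b).comp (rename (R := ℤ) (Equiv.swap a b))) p := rfl
    _ = fsub a b p := by rw [this]

lemma image_swap_sdiff (σ : Equiv.Perm (Fin n)) (J : Finset (Fin n)) :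
    (univ \ J).image σ = univ \ (J.image σ) := by
  ext x
  simp only [Finset.mem_image, Finset.mem_sdiff, Finset.mem_univ, true_and]
  constructor
  · rintro ⟨y, hy, rfl⟩ ⟨z, hz, hzy⟩
    exact hy ((σ.injective hzy) ▸ hz)
  · intro hx
    exact ⟨σ.symm x, fun hmem => hx ⟨σ.symm x, hmem, σ.apply_symm_apply x⟩, σ.apply_symm_apply x⟩

lemma rename_Wd (σ : Equiv.Perm (Fin n)) (J : Finset (Fin n)) :
    rename σ (Wd J) = Wd (J.image σ) := by
  rw [Wd, Wd, map_prod]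
  rw [Finset.prod_image (fun x hx y hy h => σ.injective h)]
  apply Finset.prod_congr rfl
  intro i _
  rw [map_prod, ← image_swap_sdiff σ J,
    Finset.prod_image (fun x hx y hy h => σ.injective h)]
  apply Finset.prod_congr rfl
  intro j _
  rw [map_sub, rename_X, rename_X]

lemma rename_swap_Vand {a b : Fin n} (hab : a < b) :
    rename (Equiv.swap a b) (Vand n) = - Vand n := by
  classical
  set σ := Equiv.swap a b with hσ
  have hswapinv : ∀ i, σ (σ i) = i := fun i => Equiv.swap_apply_self a b i
  have hσne : ∀ p : Fin n × Fin n, p.1 ≠ p.2 → σ p.1 ≠ σ p.2 :=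
    fun p h hc => h (σ.injective hc)
  have hsq : (rename σ (Vand n))^2 = (Vand n)^2 := by
    rw [Vand, map_prod, ← Finset.prod_pow, ← Finset.prod_pow]
    refine Finset.prod_nbij' (fun p => st (σ p.1, σ p.2)) (fun q => st (σ q.1, σ q.2))
      ?_ ?_ ?_ ?_ ?_
    · intro p hp
      exact st_mem_pairSet (hσne p (mem_pairSet.mp hp).ne)
    · intro q hq
      exact st_mem_pairSet (hσne q (mem_pairSet.mp hq).ne)
    · intro p hp
      have hne := hσne p (mem_pairSet.mp hp).ne
      rcases st_eq_or_eq_swap (σ p.1, σ p.2) with h | h <;> rw [h]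
      · show st (σ (σ p.1), σ (σ p.2)) = p
        rw [hswapinv, hswapinv]
        exact st_of_mem hp
      · show st (σ (σ p.2), σ (σ p.1)) = p
        rw [hswapinv, hswapinv]
        have : ((p.2, p.1) : Fin n × Fin n) = (p.1, p.2).swap := rfl
        rw [this, st_swap _ (mem_pairSet.mp hp).ne]
        exact st_of_mem hp
    · intro q hq
      have hne := hσne q (mem_pairSet.mp hq).ne
      rcases st_eq_or_eq_swap (σ q.1, σ q.2) with h | h <;> rw [h]
      · show st (σ (σ q.1), σ (σ q.2)) = q
        rw [hswapinv, hswapinv]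
        exact st_of_mem hq
      · show st (σ (σ q.2), σ (σ q.1)) = q
        rw [hswapinv, hswapinv]
        have : ((q.2, q.1) : Fin n × Fin n) = (q.1, q.2).swap := rfl
        rw [this, st_swap _ (mem_pairSet.mp hq).ne]
        exact st_of_mem hq
    · intro p hp
      rw [map_sub, rename_X, rename_X]
      rcases st_eq_or_eq_swap (σ p.1, σ p.2) with h | h
      · rw [h]
      · rw [h]
        simp only [Prod.fst_swap, Prod.snd_swap]
        ring
  have hpm : rename σ (Vand n) = Vand n ∨ rename σ (Vand n) = - Vand n := by
    have h0 : (rename σ (Vand n) - Vand n) * (rename σ (Vand n) + Vand n) = 0 := by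
      linear_combination hsq
    rcases mul_eq_zero.mp h0 with h | h
    · exact Or.inl (sub_eq_zero.mp h)
    · exact Or.inr (eq_neg_of_add_eq_zero_left h)
  rcases hpm with h | h
  · exfalso
    have habm : ((a, b) : Fin n × Fin n) ∈ pairSet n := mem_pairSet.mpr hab
    set V0 : Rn n := ∏ p ∈ (pairSet n).erase (a,b), (X p.1 - X p.2) with hV0
    have hfact : Vand n = (X a - X b) * V0 := by
      rw [Vand, hV0]
      exact (Finset.mul_prod_erase _ _ habm).symm
    have hren : rename σ (Vand n) = (X b - X a) * rename σ V0 := by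
      rw [hfact, map_mul, map_sub, rename_X, rename_X, hσ,
        Equiv.swap_apply_left, Equiv.swap_apply_right]
    have hcancel : rename σ V0 = - V0 := by
      have h2 : (X a - X b : Rn n) * (rename σ V0 + V0) = 0 := by
        have := h
        rw [hren, hfact] at this
        linear_combination - this
      rcases mul_eq_zero.mp h2 with h3 | h3
      · exact absurd h3 (X_sub_ne_zero hab.ne)
      · linear_combination h3
    have hzero : fsub a b V0 = 0 := by
      have h4 : fsub a b (rename σ V0) = fsub a b V0 := fsub_rename_swap a b V0
      rw [hcancel, map_neg] at h4
      have h5 : (2 : Rn n) * fsub a b V0 = 0 := by linear_combination - h4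
      rcases mul_eq_zero.mp h5 with h6 | h6
      · exact absurd h6 two_ne_zero
      · exact h6
    have hnz : fsub a b V0 ≠ 0 := by
      rw [hV0, map_prod, Finset.prod_ne_zero_iff]
      intro p hp
      rw [map_sub, fsub_X, fsub_X]
      obtain ⟨hpne, hpmem⟩ := Finset.mem_erase.mp hp
      have hplt := mem_pairSet.mp hpmem
      apply X_sub_ne_zero
      split_ifs with h1 h2 h2
      · exact absurd (h1.trans h2.symm) hplt.ne
      · intro hc
        rw [← hc, h1] at hplt
        exact absurd (hab.trans hplt) (lt_irrefl a)
      · intro hc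
        exact hpne (Prod.ext hc h2)
      · exact hplt.ne
    exact hnz hzero
  · exact h

lemma rename_swap_Gc {a b : Fin n} (hab : a < b) (J : Finset (Fin n)) :
    rename (Equiv.swap a b) (Gc J) = - Gc (J.image (Equiv.swap a b)) := by
  set σ := Equiv.swap a b with hσ
  have h1 := congrArg (rename (R := ℤ) σ) (Wd_mul_Gc J)
  rw [map_mul, rename_Wd, rename_swap_Vand hab] at h1
  have h2 : Wd (J.image σ) * Gc (J.image σ) = Vand n := Wd_mul_Gc _
  apply mul_left_cancel₀ (Wd_ne_zero (J := J.image σ))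
  rw [h1, mul_neg, h2]

lemma fsub_Vand_eq_zero {a b : Fin n} (hab : a < b) : fsub a b (Vand n) = 0 := by
  rw [Vand, map_prod]
  apply Finset.prod_eq_zero (mem_pairSet (p := (a,b)).mpr hab)
  rw [map_sub, fsub_X, fsub_X, if_pos rfl, if_neg hab.ne, sub_self]

lemma fsub_Wd_ne_zero {a b : Fin n} (hab : a ≠ b) {J : Finset (Fin n)}
    (hside : a ∈ J ↔ b ∈ J) : fsub a b (Wd J) ≠ 0 := by
  rw [Wd, map_prod, Finset.prod_ne_zero_iff]
  intro i hi
  rw [map_prod, Finset.prod_ne_zero_iff]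
  intro j hj
  rw [Finset.mem_sdiff] at hj
  have hiJ : i ∈ J := hi
  have hjJ : j ∉ J := hj.2
  rw [map_sub, fsub_X, fsub_X]
  apply X_sub_ne_zero
  split_ifs with h1 h2 h2
  · exfalso
    apply hjJ
    rw [h2, ← h1]
    exact hiJ
  · intro hc
    apply hjJ
    rw [← hc]
    exact hside.mpr (h1 ▸ hiJ)
  · intro hc
    apply hjJ
    rw [h2]
    exact hside.mp (hc ▸ hiJ)
  · rintro rfl
    exact hjJ hiJ

lemma fsub_Gc_eq_zero {a b : Fin n} (hab : a < b) {J : Finset (Fin n)}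
    (hside : a ∈ J ↔ b ∈ J) : fsub a b (Gc J) = 0 := by
  have h1 := congrArg (fsub a b) (Wd_mul_Gc J)
  rw [map_mul, fsub_Vand_eq_zero hab] at h1
  rcases mul_eq_zero.mp h1 with h | h
  · exact absurd h (fsub_Wd_ne_zero hab.ne hside)
  · exact h

lemma mem_image_swap {σ : Equiv.Perm (Fin n)} (hσ : ∀ i, σ (σ i) = i)
    {J : Finset (Fin n)} {x : Fin n} : x ∈ J.image σ ↔ σ x ∈ J := by
  rw [Finset.mem_image]
  constructor
  · rintro ⟨y, hy, rfl⟩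
    rw [hσ]
    exact hy
  · intro h
    exact ⟨σ x, h, hσ x⟩

/-- The main alternating sum. -/
def Ad (n k d : ℕ) : Rn n :=
  ∑ J ∈ (univ : Finset (Fin n)).powersetCard k, (∑ i ∈ J, X i)^d * Gc J

lemma fsub_Ad {a b : Fin n} (hab : a < b) (k d : ℕ) :
    fsub a b (Ad n k d) = 0 := by
  classical
  set σ := Equiv.swap a b with hσdef
  have hσinv : ∀ i, σ (σ i) = i := fun i => Equiv.swap_apply_self a b i
  rw [Ad, map_sum,
    ← Finset.sum_filter_add_sum_filter_not ((univ : Finset (Fin n)).powersetCard k)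
      (fun J => ¬ (a ∈ J ↔ b ∈ J))]
  have hzero : ∑ J ∈ ((univ : Finset (Fin n)).powersetCard k).filter
      (fun J => ¬¬(a ∈ J ↔ b ∈ J)), fsub a b ((∑ i ∈ J, X i)^d * Gc J) = 0 := by
    apply Finset.sum_eq_zero
    intro J hJ
    rw [Finset.mem_filter, not_not] at hJ
    rw [map_mul, fsub_Gc_eq_zero hab hJ.2, mul_zero]
  have himg : ∀ J : Finset (Fin n),
      (∑ i ∈ J.image σ, X i : Rn n)^d * Gc (J.image σ)
        = - rename σ ((∑ i ∈ J, X i)^d * Gc J) := by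
    intro J
    have hsum : rename (R := ℤ) σ (∑ i ∈ J, X i) = ∑ i ∈ J.image σ, X i := by
      rw [map_sum]
      rw [Finset.sum_image (fun x _ y _ h => σ.injective h)]
      simp [rename_X]
    rw [map_mul, map_pow, hsum, rename_swap_Gc hab]
    ring
  have hpair : ∑ J ∈ ((univ : Finset (Fin n)).powersetCard k).filter
      (fun J => ¬(a ∈ J ↔ b ∈ J)), fsub a b ((∑ i ∈ J, X i)^d * Gc J) = 0 := by
    apply Finset.sum_involution (fun J _ => J.image σ)
    · intro J hJ
      rw [himg J, map_neg, fsub_rename_swap]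
      ring
    · intro J hJ _
      rw [Finset.mem_filter] at hJ
      intro hc
      have hb : b ∈ J.image σ ↔ a ∈ J := by
        rw [mem_image_swap hσinv, hσdef, Equiv.swap_apply_right]
      rw [hc] at hb
      exact hJ.2 (Iff.intro (fun ha => hb.mpr ha) (fun hbJ => by
        by_contra ha
        exact (iff_iff_and_or_not_and_not.mp hb).elim (fun h => ha h.2)
          (fun h => h.1 hbJ)))
    · intro J hJ
      rw [Finset.image_image]
      have : (⇑σ ∘ ⇑σ) = id := funext hσinv
      rw [this, Finset.image_id]
    · intro J hJ
      rw [Finset.mem_filter] at hJ ⊢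
      constructor
      · rw [Finset.mem_powersetCard_univ] at hJ ⊢
        rw [Finset.card_image_of_injective _ σ.injective]
        exact hJ.1.symm ▸ hJ.1
      · have ha : a ∈ J.image σ ↔ b ∈ J := by
          rw [mem_image_swap hσinv, hσdef, Equiv.swap_apply_left]
        have hb : b ∈ J.image σ ↔ a ∈ J := by
          rw [mem_image_swap hσinv, hσdef, Equiv.swap_apply_right]
        intro hc
        exact hJ.2 (Iff.intro (fun h => ha.mp (hc.mpr (hb.mpr h)))
          (fun h => hb.mp (hc.mp (ha.mpr h))))
  rw [hzero, hpair, add_zero]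

/-- zero-substitution divisibility criterion -/
lemma X_dvd_of_zero_subst {b : Fin n} {q : Rn n}
    (h : aeval (fun i => if i = b then (0 : Rn n) else X i) q = 0) : (X b : Rn n) ∣ q := by
  classical
  set z : Rn n →ₐ[ℤ] Rn n := aeval (fun i => if i = b then (0 : Rn n) else X i) with hz
  have hzq : z q = ∑ m' ∈ q.support, if m' b = 0 then monomial m' (coeff m' q) else 0 := by
    conv_lhs => rw [q.as_sum]
    rw [map_sum]
    refine Finset.sum_congr rfl ?_
    intro m' _
    rw [hz, aeval_monomial]
    split_ifs with hb
    · rw [monomial_eq]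
      rw [algebraMap_eq]
      congr 1
      apply Finsupp.prod_congr
      intro i hi
      have hib : i ≠ b := by
        intro hceq
        rw [hceq] at hi
        exact (Finsupp.mem_support_iff.mp hi) hb
      rw [if_neg hib]
    · have hbmem : b ∈ m'.support := Finsupp.mem_support_iff.mpr hb
      rw [Finsupp.prod]
      rw [Finset.prod_eq_zero hbmem (by rw [if_pos rfl]; exact zero_pow hb)]
      ring
  have hsupp : ∀ m ∈ q.support, m b ≠ 0 := by
    intro m hm hmb
    have hc := congrArg (coeff m) (hzq ▸ h)
    rw [coeff_sum, coeff_zero] at hc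
    rw [Finset.sum_eq_single m (fun m' hm' hne => by
        split_ifs with h1
        · rw [coeff_monomial, if_neg hne]
        · exact coeff_zero m) (fun hnm => absurd hm hnm)] at hc
    rw [if_pos hmb, coeff_monomial, if_pos rfl] at hc
    exact (Finsupp.mem_support_iff.mp hm) hc
  conv_rhs => rw [q.as_sum]
  apply Finset.dvd_sum
  intro m hm
  rw [X_dvd_monomial]
  exact Or.inr (hsupp m hm)

lemma dvd_iff_fsub_eq_zero {a b : Fin n} (hab : a ≠ b) {p : Rn n} :
    (X a - X b : Rn n) ∣ p ↔ fsub a b p = 0 := by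
  classical
  constructor
  · rintro ⟨r, rfl⟩
    rw [map_mul, map_sub, fsub_X, fsub_X, if_pos rfl, if_neg hab, sub_self, zero_mul]
  · intro h
    set E : Rn n →ₐ[ℤ] Rn n := aeval (fun i => if i = b then X a - X b else X i) with hE
    have hEX : ∀ i, E (X i) = if i = b then X a - X b else X i := fun i => by
      rw [hE, aeval_X]
    have hEE : ∀ r : Rn n, E (E r) = r := by
      intro r
      have hcomp : E.comp E = AlgHom.id ℤ (Rn n) := by
        apply MvPolynomial.algHom_ext
        intro i
        rw [AlgHom.comp_apply, AlgHom.id_apply, hEX]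
        split_ifs with hib
        · rw [map_sub, hEX, hEX, if_neg hab, if_pos rfl, hib]
          ring
        · rw [hEX, if_neg hib]
      calc E (E r) = (E.comp E) r := rfl
        _ = r := by rw [hcomp]; rfl
    set z : Rn n →ₐ[ℤ] Rn n := aeval (fun i => if i = b then (0 : Rn n) else X i) with hz
    have hcomp2 : z.comp E = fsub a b := by
      apply MvPolynomial.algHom_ext
      intro i
      rw [AlgHom.comp_apply, hEX, fsub_X]
      split_ifs with hib
      · rw [map_sub, hz, aeval_X, aeval_X, if_neg hab, if_pos rfl, sub_zero]
      · rw [hz, aeval_X, if_neg hib]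
    have hzE : z (E p) = 0 := by
      calc z (E p) = (z.comp E) p := rfl
        _ = fsub a b p := by rw [hcomp2]
        _ = 0 := h
    obtain ⟨r, hr⟩ := X_dvd_of_zero_subst hzE
    refine ⟨E r, ?_⟩
    calc p = E (E p) := (hEE p).symm
      _ = E (X b * r) := by rw [hr]
      _ = (X a - X b) * E r := by rw [map_mul, hEX, if_pos rfl]

lemma prime_X_sub {a b : Fin n} (hab : a ≠ b) : Prime (X a - X b : Rn n) := by
  refine ⟨X_sub_ne_zero hab, ?_, ?_⟩
  · intro hu
    obtain ⟨r, hr⟩ := hu.dvd (α := Rn n) (a := 1)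
    have : fsub a b (1 : Rn n) = 0 := (dvd_iff_fsub_eq_zero hab).mp ⟨r, hr⟩
    rw [map_one] at this
    exact one_ne_zero this
  · intro p q hpq
    rw [dvd_iff_fsub_eq_zero hab, map_mul] at hpq
    rcases mul_eq_zero.mp hpq with h | h
    · exact Or.inl ((dvd_iff_fsub_eq_zero hab).mpr h)
    · exact Or.inr ((dvd_iff_fsub_eq_zero hab).mpr h)

lemma not_dvd_pairs {p q : Fin n × Fin n} (hp : p ∈ pairSet n) (hq : q ∈ pairSet n)
    (hpq : p ≠ q) : ¬ (X p.1 - X p.2 : Rn n) ∣ (X q.1 - X q.2) := by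
  have hplt := mem_pairSet.mp hp
  have hqlt := mem_pairSet.mp hq
  intro ⟨r, hr⟩
  -- find an evaluation point
  have key : ∃ v : Fin n → ℤ, v p.1 = v p.2 ∧ v q.1 ≠ v q.2 := by
    by_cases h2 : q.2 = p.1 ∨ q.2 = p.2
    · have hq1 : q.1 ≠ p.1 ∧ q.1 ≠ p.2 := by
        rcases h2 with h2 | h2
        · constructor
          · intro hc
            rw [← h2] at hc
            exact absurd hc hqlt.ne
          · intro hc
            rw [hc] at hqlt
            rw [h2] at hqlt
            exact absurd (hplt.trans hqlt) (lt_irrefl p.1)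
        · constructor
          · intro hc
            exact hpq (Prod.ext hc.symm h2.symm)
          · intro hc
            rw [hc] at hqlt
            rw [h2] at hqlt
            exact absurd hqlt (lt_irrefl p.2)
      refine ⟨fun i => if i = q.1 then 1 else 0, ?_, ?_⟩
      · dsimp only
        rw [if_neg (fun hc => hq1.1 hc.symm), if_neg (fun hc => hq1.2 hc.symm)]
      · dsimp only
        rw [if_pos rfl, if_neg (fun hc : q.2 = q.1 => hqlt.ne hc.symm)]
        exact one_ne_zero
    · push_neg at h2
      refine ⟨fun i => if i = q.2 then 1 else 0, ?_, ?_⟩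
      · dsimp only
        rw [if_neg (fun hc => h2.1 hc.symm), if_neg (fun hc => h2.2 hc.symm)]
      · dsimp only
        rw [if_neg hqlt.ne, if_pos rfl]
        exact zero_ne_one
  obtain ⟨v, hv1, hv2⟩ := key
  have := congrArg (eval v) hr
  rw [map_sub, map_mul, map_sub, eval_X, eval_X, eval_X, eval_X, hv1, sub_self,
    zero_mul] at this
  exact hv2 (sub_eq_zero.mp this)

lemma Vand_dvd {p : Rn n} (h : ∀ q ∈ pairSet n, (X q.1 - X q.2 : Rn n) ∣ p) :
    Vand n ∣ p := by
  classical
  rw [Vand]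
  suffices haux : ∀ s : Finset (Fin n × Fin n), s ⊆ pairSet n →
      (∏ q ∈ s, (X q.1 - X q.2 : Rn n)) ∣ p by
    exact haux _ (le_refl _)
  intro s
  induction s using Finset.induction_on with
  | empty => intro _; simpa using one_dvd p
  | @insert q0 s hq0 ih =>
    intro hsub
    have hq0mem : q0 ∈ pairSet n := hsub (Finset.mem_insert_self q0 s)
    have hssub : s ⊆ pairSet n := fun x hx => hsub (Finset.mem_insert_of_mem hx)
    have hprime := prime_X_sub (mem_pairSet.mp hq0mem).ne
    obtain ⟨t, ht⟩ := ih hssub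
    have hnd : ¬ (X q0.1 - X q0.2 : Rn n) ∣ ∏ q ∈ s, (X q.1 - X q.2 : Rn n) := by
      intro hdvd
      obtain ⟨i, hi, hdvd2⟩ := hprime.exists_mem_finset_dvd hdvd
      exact not_dvd_pairs hq0mem (hssub hi) (fun hc => hq0 (hc ▸ hi)) hdvd2
    have hq0p : (X q0.1 - X q0.2 : Rn n) ∣ p := h q0 hq0mem
    rw [ht] at hq0p
    rcases hprime.dvd_mul.mp hq0p with h1 | h1
    · exact absurd h1 hnd
    · obtain ⟨u, hu⟩ := h1
      rw [Finset.prod_insert hq0, ht, hu]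
      exact ⟨u, by ring⟩

lemma Vand_dvd_Ad (k d : ℕ) : Vand n ∣ Ad n k d := by
  apply Vand_dvd
  intro q hq
  rw [dvd_iff_fsub_eq_zero (mem_pairSet.mp hq).ne]
  exact fsub_Ad (mem_pairSet.mp hq) k d

end Subst

section Homog

lemma homog_factor {W G : Rn n} {w v : ℕ} (hW : W.IsHomogeneous w)
    (hV : (W * G).IsHomogeneous v) (hW0 : W ≠ 0) :
    ∀ j, w + j ≠ v → homogeneousComponent j G = 0 := by
  intro j hj
  by_cases hjle : j ≤ G.totalDegree
  · have h1 : W * G = ∑ i ∈ Finset.range (G.totalDegree + 1),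
        W * homogeneousComponent i G := by
      rw [← Finset.mul_sum, sum_homogeneousComponent]
    have h2 := congrArg (homogeneousComponent (w + j)) h1
    rw [map_sum] at h2
    have hL : homogeneousComponent (w + j) (W * G) = 0 := by
      rw [homogeneousComponent_of_mem ((mem_homogeneousSubmodule _ _).mpr hV),
        if_neg hj]
    have hR : ∀ i ∈ Finset.range (G.totalDegree + 1),
        homogeneousComponent (w + j) (W * homogeneousComponent i G)
          = if i = j then W * homogeneousComponent i G else 0 := by
      intro i _
      rw [homogeneousComponent_of_mem ((mem_homogeneousSubmodule _ _).mpr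
        (hW.mul (homogeneousComponent_isHomogeneous i G)))]
      congr 1
      simp only [eq_iff_iff]
      constructor
      · intro h; exact (Nat.add_left_cancel h).symm
      · intro h; rw [h]
    rw [Finset.sum_congr rfl hR] at h2
    rw [Finset.sum_ite_eq' (Finset.range (G.totalDegree + 1)) j
      (fun i => W * homogeneousComponent i G)] at h2
    rw [if_pos (Finset.mem_range.mpr (Nat.lt_succ_of_le hjle)), hL] at h2
    rcases mul_eq_zero.mp h2.symm with h | h
    · exact absurd h hW0
    · exact h
  · exact homogeneousComponent_eq_zero _ _ (lt_of_not_ge hjle)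

lemma prod_X_sub_homog {s : Finset (Fin n)} (i : Fin n) :
    (∏ j ∈ s, (X i - X j : Rn n)).IsHomogeneous s.card := by
  have := MvPolynomial.IsHomogeneous.prod s (fun j => (X i - X j : Rn n)) (fun _ => 1)
    (fun j _ => (isHomogeneous_X ℤ i).sub (isHomogeneous_X ℤ j))
  simpa using this

lemma Wd_homog (J : Finset (Fin n)) :
    (Wd J).IsHomogeneous (J.card * (univ \ J).card) := by
  have := MvPolynomial.IsHomogeneous.prod J (fun i => ∏ j ∈ univ \ J, (X i - X j : Rn n))
    (fun _ => (univ \ J).card) (fun i _ => prod_X_sub_homog i)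
  rw [Wd]
  simpa [Finset.sum_const, mul_comm] using this

lemma Vand_homog : (Vand n).IsHomogeneous (pairSet n).card := by
  have := MvPolynomial.IsHomogeneous.prod (pairSet n)
    (fun p => (X p.1 - X p.2 : Rn n)) (fun _ => 1)
    (fun p _ => (isHomogeneous_X ℤ p.1).sub (isHomogeneous_X ℤ p.2))
  simpa [Vand] using this

lemma Gc_ne_zero (J : Finset (Fin n)) : Gc J ≠ 0 := by
  intro h
  apply Vand_ne_zero (n := n)
  rw [← Wd_mul_Gc J, h, mul_zero]

lemma Nkn_le_CP {k : ℕ} {J : Finset (Fin n)} (hJ : J.card = k) (hkn : k ≤ n) :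
    k * (n - k) ≤ (pairSet n).card ∧
      (Gc J).IsHomogeneous ((pairSet n).card - k * (n - k)) := by
  have hWh : (Wd J).IsHomogeneous (k * (n - k)) := by
    have := Wd_homog J
    rwa [hJ, Finset.card_univ_diff, hJ, Fintype.card_fin] at this
  have hVh : (Wd J * Gc J).IsHomogeneous (pairSet n).card := by
    rw [Wd_mul_Gc]; exact Vand_homog
  have hfac := homog_factor hWh hVh Wd_ne_zero
  have hle : k * (n - k) ≤ (pairSet n).card := by
    by_contra hlt
    push_neg at hlt
    apply Gc_ne_zero J
    rw [← sum_homogeneousComponent (Gc J)]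
    apply Finset.sum_eq_zero
    intro j _
    exact hfac j (by omega)
  refine ⟨hle, ?_⟩
  have hGc : Gc J = homogeneousComponent ((pairSet n).card - k * (n - k)) (Gc J) := by
    conv_lhs => rw [← sum_homogeneousComponent (Gc J)]
    apply Finset.sum_eq_single
    · intro j _ hne
      exact hfac j (by omega)
    · intro hnm
      exact homogeneousComponent_eq_zero _ _
        (by rw [Finset.mem_range, not_lt] at hnm; omega)
  rw [hGc]
  exact homogeneousComponent_isHomogeneous _ _

lemma Ad_homog (k d : ℕ) (hkn : k ≤ n) :
    (Ad n k d).IsHomogeneous (d + ((pairSet n).card - k * (n - k))) := by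
  rw [Ad]
  apply MvPolynomial.IsHomogeneous.sum
  intro J hJ
  rw [Finset.mem_powersetCard_univ] at hJ
  have h1 : ((∑ i ∈ J, X i : Rn n)).IsHomogeneous 1 :=
    MvPolynomial.IsHomogeneous.sum _ _ _ (fun i _ => isHomogeneous_X ℤ i)
  have h2 := (h1.pow d).mul (Nkn_le_CP hJ hkn).2
  rwa [one_mul] at h2

lemma Ad_eq_zero {k d : ℕ} (hkn : k ≤ n) (hd : d < k * (n - k)) : Ad n k d = 0 := by
  obtain ⟨B, hB⟩ := Vand_dvd_Ad (n := n) k d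
  obtain ⟨J, _, hJcard⟩ := Finset.exists_subset_card_eq
    (s := (univ : Finset (Fin n))) (n := k) (by simpa using hkn)
  have hle := (Nkn_le_CP hJcard hkn).1
  have hAh := Ad_homog (n := n) k d hkn
  rw [hB] at hAh
  have hfac := homog_factor Vand_homog hAh Vand_ne_zero
  have hBz : B = 0 := by
    rw [← sum_homogeneousComponent B]
    apply Finset.sum_eq_zero
    intro j _
    exact hfac j (by omega)
  rw [hB, hBz, mul_zero]

lemma Ad_top {k : ℕ} (hkn : k ≤ n) :
    ∃ c : ℤ, Ad n k (k * (n - k)) = Vand n * C c := by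
  obtain ⟨B, hB⟩ := Vand_dvd_Ad (n := n) k (k * (n - k))
  obtain ⟨J, _, hJcard⟩ := Finset.exists_subset_card_eq
    (s := (univ : Finset (Fin n))) (n := k) (by simpa using hkn)
  have hle := (Nkn_le_CP hJcard hkn).1
  have hAh := Ad_homog (n := n) k (k * (n - k)) hkn
  rw [hB] at hAh
  have hfac := homog_factor Vand_homog hAh Vand_ne_zero
  refine ⟨coeff 0 B, ?_⟩
  rw [hB]
  congr 1
  rw [← homogeneousComponent_zero]
  conv_lhs => rw [← sum_homogeneousComponent B]
  apply Finset.sum_eq_single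
  · intro j _ hne
    exact hfac j (by omega)
  · intro hnm
    exact homogeneousComponent_eq_zero _ _
      (by rw [Finset.mem_range, not_lt] at hnm; omega)

end Homog

section Field

variable {F : Type*} [Field F]

lemma aeval_Wd (x : Fin n → F) (J : Finset (Fin n)) :
    aeval x (Wd J) = ∏ i ∈ J, ∏ j ∈ univ \ J, (x i - x j) := by
  rw [Wd, map_prod]
  apply Finset.prod_congr rfl
  intro i _
  rw [map_prod]
  apply Finset.prod_congr rfl
  intro j _
  rw [map_sub, aeval_X, aeval_X]

lemma aeval_Wd_ne_zero {x : Fin n → F} (hx : Function.Injective x)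
    (J : Finset (Fin n)) : aeval x (Wd J) ≠ 0 := by
  rw [aeval_Wd, Finset.prod_ne_zero_iff]
  intro i hi
  rw [Finset.prod_ne_zero_iff]
  intro j hj
  rw [Finset.mem_sdiff] at hj
  exact sub_ne_zero.mpr (fun hc => hj.2 ((hx hc) ▸ hi))

lemma aeval_Vand_ne_zero {x : Fin n → F} (hx : Function.Injective x) :
    aeval x (Vand n) ≠ 0 := by
  rw [Vand, map_prod, Finset.prod_ne_zero_iff]
  intro p hp
  rw [map_sub, aeval_X, aeval_X]
  exact sub_ne_zero.mpr (fun hc => (mem_pairSet.mp hp).ne (hx hc))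

lemma sum_pow_div (x : Fin n → F) (hx : Function.Injective x) (k d : ℕ) :
    ∑ J ∈ (univ : Finset (Fin n)).powersetCard k,
      (∑ i ∈ J, x i)^d / (∏ i ∈ J, ∏ j ∈ univ \ J, (x i - x j))
      = aeval x (Ad n k d) / aeval x (Vand n) := by
  rw [Ad, map_sum, Finset.sum_div]
  apply Finset.sum_congr rfl
  intro J _
  rw [map_mul, map_pow, map_sum]
  simp only [aeval_X]
  rw [← aeval_Wd x J, div_eq_div_iff (aeval_Wd_ne_zero hx J) (aeval_Vand_ne_zero hx)]
  have h1 : aeval x (Wd J) * aeval x (Gc J) = aeval x (Vand n) := by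
    rw [← map_mul, Wd_mul_Gc]
  calc (∑ i ∈ J, x i)^d * aeval x (Vand n)
      = (∑ i ∈ J, x i)^d * (aeval x (Wd J) * aeval x (Gc J)) := by rw [h1]
    _ = (∑ i ∈ J, x i)^d * aeval x (Gc J) * aeval x (Wd J) := by ring

lemma master {k : ℕ} (hkn : k ≤ n) {c : ℤ}
    (hc : Ad n k (k * (n - k)) = Vand n * C c)
    (x : Fin n → F) (hx : Function.Injective x)
    (M : Multiset F) (hM : Multiset.card M = k * (n - k)) :
    ∑ J ∈ (univ : Finset (Fin n)).powersetCard k,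
        (M.map (fun m => (∑ i ∈ J, x i) - m)).prod /
          ∏ i ∈ J, ∏ j ∈ univ \ J, (x i - x j) = (c : F) := by
  classical
  set N := k * (n - k) with hN
  set P : Polynomial F := (M.map (fun m => Polynomial.X - Polynomial.C m)).prod with hP
  have hPmonic : P.Monic :=
    Polynomial.monic_multiset_prod_of_monic M _ (fun m _ => Polynomial.monic_X_sub_C m)
  have hPdeg : P.natDegree = N := by
    rw [hP, Polynomial.natDegree_multiset_prod_of_monic _ (fun p hp => by
      obtain ⟨m, _, rfl⟩ := Multiset.mem_map.mp hp
      exact Polynomial.monic_X_sub_C m)]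
    simp [Multiset.map_map, hM]
  have hPeval : ∀ s : F, (M.map (fun m => s - m)).prod = P.eval s := by
    intro s
    rw [hP, Polynomial.eval_multiset_prod, Multiset.map_map]
    simp
  have hstep : ∀ s : F,
      P.eval s = ∑ e ∈ Finset.range (N + 1), P.coeff e * s ^ e := by
    intro s
    rw [Polynomial.eval_eq_sum_range, hPdeg]
  calc ∑ J ∈ (univ : Finset (Fin n)).powersetCard k,
        (M.map (fun m => (∑ i ∈ J, x i) - m)).prod /
          ∏ i ∈ J, ∏ j ∈ univ \ J, (x i - x j)
      = ∑ J ∈ (univ : Finset (Fin n)).powersetCard k,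
        ∑ e ∈ Finset.range (N + 1),
          P.coeff e * ((∑ i ∈ J, x i) ^ e /
            ∏ i ∈ J, ∏ j ∈ univ \ J, (x i - x j)) := by
        apply Finset.sum_congr rfl
        intro J _
        rw [hPeval, hstep, Finset.sum_div]
        apply Finset.sum_congr rfl
        intro e _
        rw [mul_div_assoc]
    _ = ∑ e ∈ Finset.range (N + 1),
        P.coeff e * (aeval x (Ad n k e) / aeval x (Vand n)) := by
        rw [Finset.sum_comm]
        apply Finset.sum_congr rfl
        intro e _
        rw [← Finset.mul_sum, sum_pow_div x hx k e]
    _ = (c : F) := by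
        rw [Finset.sum_range_succ]
        have hzero : ∀ e ∈ Finset.range N,
            P.coeff e * (aeval x (Ad n k e) / aeval x (Vand n)) = 0 := by
          intro e he
          rw [Ad_eq_zero hkn (Finset.mem_range.mp he), map_zero, zero_div, mul_zero]
        rw [Finset.sum_eq_zero hzero, zero_add, ← hPdeg, hPmonic.coeff_natDegree,
          one_mul, hPdeg, hc, map_mul, mul_comm, mul_div_assoc,
          div_self (aeval_Vand_ne_zero hx), mul_one, aeval_C]
        simp

end Field

section Compute

lemma strictMono_le {k : ℕ} (g : Fin k → ℕ) (hg : StrictMono g) (r : Fin k) :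
    r.val ≤ g r := by
  suffices h : ∀ v, ∀ hv : v < k, v ≤ g ⟨v, hv⟩ by
    have := h r.val r.isLt
    simpa using this
  intro v
  induction v with
  | zero => intro _; exact Nat.zero_le _
  | succ w ih =>
    intro hv
    have hw : w < k := lt_trans (Nat.lt_succ_self w) hv
    have h1 : g ⟨w, hw⟩ < g ⟨w + 1, hv⟩ := hg (by simp [Fin.lt_def])
    have := ih hw
    omega

variable {n k : ℕ}

/-- the top subset -/
def Jtop (n k : ℕ) (hkn : k ≤ n) : Finset (Fin n) :=
  univ.image (fun r : Fin k => (⟨n - k + r.val, by have := r.isLt; omega⟩ : Fin n))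

lemma Jtop_card (hkn : k ≤ n) : (Jtop n k hkn).card = k := by
  rw [Jtop, Finset.card_image_of_injective _ (fun a b hab => by
    have : n - k + a.val = n - k + b.val := congrArg Fin.val hab
    exact Fin.ext (by omega))]
  simp

lemma sum_val_le (hkn : k ≤ n) (J : Finset (Fin n)) (hJ : J.card = k) :
    (∑ r ∈ Finset.range k, r) ≤ (∑ i ∈ J, i.val) ∧
    (∑ i ∈ J, i.val) ≤ (∑ r ∈ Finset.range k, (n - k + r)) ∧
    ((∑ i ∈ J, i.val) = (∑ r ∈ Finset.range k, (n - k + r)) → J = Jtop n k hkn) := by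
  classical
  set f := J.orderEmbOfFin hJ with hf
  have hfinj : Function.Injective f := f.injective
  have hmem : ∀ r, f r ∈ J := fun r => Finset.orderEmbOfFin_mem J hJ r
  have himg : univ.image (fun r => f r) = J := by
    apply Finset.eq_of_subset_of_card_le
    · intro x hx
      obtain ⟨r, _, rfl⟩ := Finset.mem_image.mp hx
      exact hmem r
    · rw [hJ, Finset.card_image_of_injective _ hfinj, Finset.card_univ, Fintype.card_fin]
  have hsum : (∑ i ∈ J, i.val) = ∑ r : Fin k, (f r).val := by
    rw [← himg, Finset.sum_image (fun a _ b _ hab => hfinj hab)]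
  have hgmono : StrictMono (fun r : Fin k => (f r).val) :=
    fun a b hab => Fin.lt_iff_val_lt_val.mp (f.strictMono hab)
  have hlow : ∀ r : Fin k, r.val ≤ (f r).val := strictMono_le _ hgmono
  have hupp : ∀ r : Fin k, (f r).val ≤ n - k + r.val := by
    have hg2 : StrictMono (fun r : Fin k => n - 1 - (f r.rev).val) := by
      intro a b hab
      have h1 : f b.rev < f a.rev := f.strictMono (by
        rw [Fin.lt_iff_val_lt_val, Fin.val_rev, Fin.val_rev]
        have := Fin.lt_iff_val_lt_val.mp hab
        have := a.isLt
        have := b.isLt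
        omega)
      have h2 := Fin.lt_iff_val_lt_val.mp h1
      have h3 : (f a.rev).val < n := (f a.rev).isLt
      simp only
      omega
    intro r
    have := strictMono_le _ hg2 r.rev
    simp only [Fin.rev_rev] at this
    have h4 := Fin.val_rev r
    have h5 : (f r).val < n := (f r).isLt
    have h6 := r.isLt
    omega
  refine ⟨?_, ?_, ?_⟩
  · rw [hsum, ← Fin.sum_univ_eq_sum_range]
    exact Finset.sum_le_sum (fun r _ => hlow r)
  · rw [hsum, ← Fin.sum_univ_eq_sum_range (fun r => n - k + r)]
    exact Finset.sum_le_sum (fun r _ => hupp r)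
  · intro heq
    rw [hsum, ← Fin.sum_univ_eq_sum_range (fun r => n - k + r)] at heq
    have hpt := (Finset.sum_eq_sum_iff_of_le (fun r _ => hupp r)).mp heq
    rw [← himg, Jtop]
    apply Finset.image_congr
    intro r _
    exact Fin.ext (hpt r (Finset.mem_univ r))

lemma c_eq (hk : 1 ≤ k) (hkn : k ≤ n) {c : ℤ}
    (hc : Ad n k (k * (n - k)) = Vand n * C c) :
    (c : ℚ) = (Nat.factorial (k * (n - k)) : ℚ) *
      ∏ i ∈ Finset.range k,
        (Nat.factorial i : ℚ) / (Nat.factorial (n - 1 - i) : ℚ) := by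
  classical
  set N := k * (n - k) with hN
  set Tmin := ∑ r ∈ Finset.range k, r with hTmin
  set Tmax := ∑ r ∈ Finset.range k, (n - k + r) with hTmax
  have hTT : Tmax = N + Tmin := by
    rw [hTmax, hTmin, hN, Finset.sum_add_distrib, Finset.sum_const, Finset.card_range,
      smul_eq_mul]
  set x : Fin n → ℚ := fun i => (i.val : ℚ) with hxdef
  have hx : Function.Injective x := by
    intro a b hab
    exact Fin.ext (Nat.cast_injective hab)
  set Mst : Multiset ℚ := (Multiset.range N).map (fun j => ((Tmin + j : ℕ) : ℚ)) with hMst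
  have hMcard : Multiset.card Mst = N := by
    rw [hMst, Multiset.card_map, Multiset.card_range]
  have hmaster := master hkn hc x hx Mst (by rw [hMcard])
  rw [← hmaster]
  -- now compute the sum
  have hJt : Jtop n k hkn ∈ (univ : Finset (Fin n)).powersetCard k :=
    Finset.mem_powersetCard_univ.mpr (Jtop_card hkn)
  rw [Finset.sum_eq_single_of_mem _ hJt]
  · -- the main term
    have hinj : Function.Injective
        (fun r : Fin k => (⟨n - k + r.val, by have := r.isLt; omega⟩ : Fin n)) := by
      intro a b hab
      have : n - k + a.val = n - k + b.val := congrArg Fin.val hab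
      exact Fin.ext (by omega)
    have hsumJt : ∑ i ∈ Jtop n k hkn, x i = ((Tmax : ℕ) : ℚ) := by
      have h1 : ∑ i ∈ Jtop n k hkn, x i
          = ∑ r : Fin k, (((n - k + r.val) : ℕ) : ℚ) := by
        rw [Jtop, Finset.sum_image (fun a _ b _ hab => hinj hab)]
      rw [h1, ← Nat.cast_sum,
        Fin.sum_univ_eq_sum_range (fun r => (n - k + r)) k, ← hTmax]
    have hnum : (Mst.map (fun m => (∑ i ∈ Jtop n k hkn, x i) - m)).prod
        = (Nat.factorial N : ℚ) := by
      rw [hsumJt, hMst, Multiset.map_map]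
      have : ∀ j ∈ Multiset.range N,
          (((Tmax : ℕ) : ℚ) - ((Tmin + j : ℕ) : ℚ)) = ((N - j : ℕ) : ℚ) := by
        intro j hj
        rw [Multiset.mem_range] at hj
        rw [← Nat.cast_sub (by omega)]
        congr 1
        omega
      have hfun : Multiset.map ((fun m => ((Tmax : ℕ) : ℚ) - m) ∘ fun j => ((Tmin + j : ℕ) : ℚ))
          (Multiset.range N) = Multiset.map (fun j => ((N - j : ℕ) : ℚ)) (Multiset.range N) :=
        Multiset.map_congr rfl this
      rw [hfun, ← Finset.range_val,
        ← Finset.prod_eq_multiset_prod (Finset.range N) (fun j => ((N - j : ℕ) : ℚ)),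
        ← Nat.cast_prod, ← Nat.descFactorial_eq_prod_range N N, Nat.descFactorial_self]
    have hcompl : univ \ Jtop n k hkn
        = univ.image (fun b : Fin (n - k) => (⟨b.val, by have := b.isLt; omega⟩ : Fin n)) := by
      ext i
      simp only [Finset.mem_sdiff, Finset.mem_univ, true_and, Finset.mem_image, Jtop]
      constructor
      · intro hi
        have hlt : i.val < n - k := by
          by_contra hge
          push_neg at hge
          apply hi
          exact ⟨⟨i.val - (n - k), by have := i.isLt; omega⟩,
            Fin.ext (by simp only [Fin.val_mk]; omega)⟩
        exact ⟨⟨i.val, hlt⟩, Fin.ext rfl⟩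
      · rintro ⟨b, hb⟩
        rintro ⟨r, hr⟩
        have h1 := congrArg Fin.val hb
        have h2 := congrArg Fin.val hr
        simp only [Fin.val_mk] at h1 h2
        have := b.isLt
        omega
    have hbinj : Function.Injective
        (fun b : Fin (n - k) => (⟨b.val, by have := b.isLt; omega⟩ : Fin n)) := by
      intro a b hab
      apply Fin.ext
      have h := congrArg (@Fin.val n) hab
      simpa using h
    have hden : ∏ i ∈ Jtop n k hkn, ∏ j ∈ univ \ Jtop n k hkn, (x i - x j)
        = ∏ r ∈ Finset.range k, (((n - k + r).descFactorial (n - k) : ℕ) : ℚ) := by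
      rw [hcompl, Jtop, Finset.prod_image (fun a _ b _ hab => hinj hab)]
      rw [← Fin.prod_univ_eq_prod_range (fun r => (((n - k + r).descFactorial (n - k) : ℕ) : ℚ))]
      apply Finset.prod_congr rfl
      intro r _
      rw [Finset.prod_image (fun a _ b _ hab => hbinj hab)]
      have : ∀ b : Fin (n - k), x ⟨n - k + r.val, by have := r.isLt; omega⟩
          - x ⟨b.val, by have := b.isLt; omega⟩
          = (((n - k + r.val) - b.val : ℕ) : ℚ) := by
        intro b
        exact (Nat.cast_sub (show b.val ≤ n - k + r.val by have := b.isLt; omega)).symm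
      rw [Finset.prod_congr rfl (fun b _ => this b), ← Nat.cast_prod]
      rw [Fin.prod_univ_eq_prod_range (fun b => ((n - k + r.val) - b)),
        ← Nat.descFactorial_eq_prod_range, Nat.cast_inj]
    rw [hnum, hden]
    -- final factorial arithmetic
    have hkey : (∏ i ∈ Finset.range k, Nat.factorial (n - 1 - i))
        = (∏ r ∈ Finset.range k, Nat.factorial r)
          * (∏ r ∈ Finset.range k, (n - k + r).descFactorial (n - k)) := by
      rw [← Finset.prod_mul_distrib]
      calc ∏ i ∈ Finset.range k, Nat.factorial (n - 1 - i)
          = ∏ j ∈ Finset.range k, Nat.factorial (n - k + j) := by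
            rw [← Finset.prod_range_reflect (fun j => Nat.factorial (n - k + j)) k]
            apply Finset.prod_congr rfl
            intro j hj
            rw [Finset.mem_range] at hj
            congr 1
            omega
        _ = ∏ r ∈ Finset.range k,
            (Nat.factorial r * (n - k + r).descFactorial (n - k)) := by
            apply Finset.prod_congr rfl
            intro r _
            have h := Nat.factorial_mul_descFactorial
              (n := n - k + r) (k := n - k) (Nat.le_add_right _ _)
            rw [← h]
            congr 2
            omega
    have hdnz : (∏ r ∈ Finset.range k, (((n - k + r).descFactorial (n - k) : ℕ) : ℚ)) ≠ 0 := by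
      rw [Finset.prod_ne_zero_iff]
      intro r _
      refine Nat.cast_ne_zero.mpr (fun h0 => ?_)
      rw [Nat.descFactorial_eq_zero_iff_lt] at h0
      omega
    have hfnz : (∏ i ∈ Finset.range k, (Nat.factorial i : ℚ)) ≠ 0 := by
      rw [Finset.prod_ne_zero_iff]
      intro r _
      exact Nat.cast_ne_zero.mpr (Nat.factorial_pos r).ne'
    have hfnz2 : (∏ i ∈ Finset.range k, (Nat.factorial (n - 1 - i) : ℚ)) ≠ 0 := by
      rw [Finset.prod_ne_zero_iff]
      intro r _
      exact Nat.cast_ne_zero.mpr (Nat.factorial_pos _).ne'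
    rw [Finset.prod_div_distrib]
    rw [div_eq_iff hdnz]
    have hcast := congrArg (fun m : ℕ => (m : ℚ)) hkey
    push_cast at hcast ⊢
    field_simp
    linear_combination hcast
  · -- other terms vanish
    intro J hJmem hJne
    rw [Finset.mem_powersetCard_univ] at hJmem
    obtain ⟨hlow, hupp, hequp⟩ := sum_val_le hkn J hJmem
    have hlt : (∑ i ∈ J, i.val) < Tmax := by
      rcases lt_or_eq_of_le hupp with h | h
      · exact h
      · exact absurd (hequp h) hJne
    have hsJ : ∑ i ∈ J, x i = ((∑ i ∈ J, i.val : ℕ) : ℚ) := by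
      rw [hxdef, Nat.cast_sum]
    have hmem0 : (0 : ℚ) ∈ Mst.map (fun m => (∑ i ∈ J, x i) - m) := by
      rw [Multiset.mem_map]
      refine ⟨((∑ i ∈ J, i.val : ℕ) : ℚ), ?_, by rw [hsJ, sub_self]⟩
      rw [hMst, Multiset.mem_map]
      refine ⟨(∑ i ∈ J, i.val) - Tmin, Multiset.mem_range.mpr (by omega), ?_⟩
      congr 1
      omega
    rw [Multiset.prod_eq_zero hmem0, zero_div]

end Compute

end

end GrassLoc

theorem grassmannian_localization_identity {F : Type*} [Field F] (n k : ℕ)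
    (hk : 1 ≤ k) (hkn : k ≤ n)
    (x : Fin n → F) (hx : Function.Injective x)
    (M : Multiset F) (hM : Multiset.card M = k * (n - k))
    (D : ℕ)
    (hD : (D : ℚ) = (Nat.factorial (k * (n - k)) : ℚ) *
      ∏ i ∈ Finset.range k,
        (Nat.factorial i : ℚ) / (Nat.factorial (n - 1 - i) : ℚ)) :
    (D : F) =
      ∑ J ∈ Finset.univ.powersetCard k,
        (M.map (fun m => (∑ i ∈ J, x i) - m)).prod /
          ∏ i ∈ J, ∏ j ∈ Finset.univ \ J, (x i - x j) := by
  obtain ⟨c, hc⟩ := GrassLoc.Ad_top (n := n) (k := k) hkn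
  have hcq := GrassLoc.c_eq hk hkn hc
  have hcD : (c : ℚ) = ((D : ℤ) : ℚ) := by
    rw [hcq, ← hD]
    simp
  have hcD' : c = (D : ℤ) := by exact_mod_cast hcD
  have hmain := GrassLoc.master (F := F) hkn hc x hx M hM
  rw [hmain, hcD']
  simp
end

section
/- For integers 1 ≤ k ≤ n and a k-element subset I = (I_1 < ... < I_k) of {1,...,n}, with d = Σ I_i - k(k+1)/2, the number d! / ((I_1-1)!···(I_k-1)!) · ∏_{i<j}(I_j - I_i) is a positive integer. -/
open Finset in
private lemma schubert_aux_prod_filter {k : ℕ} (f : Fin k → Fin k → ℚ) :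
    ∏ p ∈ Finset.univ.filter (fun p : Fin k × Fin k => p.1 < p.2), f p.1 p.2
      = ∏ i, ∏ j ∈ Finset.Ioi i, f i j := by
  rw [Finset.prod_sigma']
  exact Finset.prod_bij' (fun (p : Fin k × Fin k) _ => (⟨p.1, p.2⟩ : Σ _ : Fin k, Fin k))
    (fun x _ => (x.1, x.2))
    (by simp +contextual [Finset.mem_filter, Finset.mem_sigma, Finset.mem_Ioi])
    (by simp +contextual [Finset.mem_filter, Finset.mem_sigma, Finset.mem_Ioi])
    (by simp) (by simp) (by simp)

theorem schubert_degree_pos_int (n k : ℕ) (hk : 1 ≤ k) (hkn : k ≤ n)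
    (I : Fin k → ℕ) (hmono : StrictMono I)
    (hI1 : ∀ i, 1 ≤ I i) (hIn : ∀ i, I i ≤ n)
    (d : ℕ) (hd : d + k * (k + 1) / 2 = ∑ i, I i) :
    ∃ m : ℕ, 0 < m ∧
      (m : ℚ) = (Nat.factorial d : ℚ) /
          (∏ i, (Nat.factorial (I i - 1) : ℚ)) *
        ∏ p ∈ Finset.univ.filter (fun p : Fin k × Fin k => p.1 < p.2),
          ((I p.2 : ℚ) - (I p.1 : ℚ)) := by
  classical
  set ℓ : Fin k → ℕ := fun i => I i - 1 with hldef
  have hIl : ∀ i, I i = ℓ i + 1 := fun i => by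
    have := hI1 i; simp only [hldef]; omega
  have hlmono : StrictMono ℓ := fun a b h => by
    have h1 := hmono h; have h2 := hI1 a; have h3 := hI1 b
    simp only [hldef]; omega
  -- sum identities
  have hck : (∑ i : Fin k, (i : ℕ)) + k = k * (k + 1) / 2 := by
    rw [Fin.sum_univ_eq_sum_range (fun i => i) k, ← Finset.sum_range_succ,
      Finset.sum_range_id]
    rw [Nat.add_sub_cancel, Nat.mul_comm]
  have hsumI : ∑ i, I i = (∑ i, ℓ i) + k := by
    rw [Finset.sum_congr rfl (fun i _ => hIl i), Finset.sum_add_distrib]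
    simp
  have hsuml : ∑ i, ℓ i = d + ∑ i : Fin k, (i : ℕ) := by
    rw [hsumI, ← hck] at hd; omega
  -- the rational quantity
  set q : ℚ := (Nat.factorial d : ℚ) / (∏ i, (Nat.factorial (I i - 1) : ℚ)) *
        ∏ p ∈ Finset.univ.filter (fun p : Fin k × Fin k => p.1 < p.2),
          ((I p.2 : ℚ) - (I p.1 : ℚ)) with hqdef
  -- positivity
  have hq_pos : 0 < q := by
    apply mul_pos
    · apply div_pos
      · exact_mod_cast Nat.factorial_pos d
      · apply Finset.prod_pos
        intro i _
        exact_mod_cast Nat.factorial_pos (I i - 1)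
    · apply Finset.prod_pos
      intro p hp
      have hlt : p.1 < p.2 := (Finset.mem_filter.mp hp).2
      have := hmono hlt
      have : (I p.1 : ℚ) < (I p.2 : ℚ) := by exact_mod_cast this
      linarith
  -- rewrite differences in terms of ℓ
  have hprod_diff : (∏ p ∈ Finset.univ.filter (fun p : Fin k × Fin k => p.1 < p.2),
      ((I p.2 : ℚ) - (I p.1 : ℚ)))
      = ∏ p ∈ Finset.univ.filter (fun p : Fin k × Fin k => p.1 < p.2),
          ((ℓ p.2 : ℚ) - (ℓ p.1 : ℚ)) := by
    refine Finset.prod_congr rfl (fun p _ => ?_)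
    rw [hIl p.1, hIl p.2]; push_cast; ring
  -- Vandermonde
  set v : Fin k → ℚ := fun i => (ℓ i : ℚ) with hvdef
  have hvdm : (∏ p ∈ Finset.univ.filter (fun p : Fin k × Fin k => p.1 < p.2),
      ((ℓ p.2 : ℚ) - (ℓ p.1 : ℚ))) = (Matrix.vandermonde v).det := by
    rw [Matrix.det_vandermonde, schubert_aux_prod_filter (fun i j => (ℓ j : ℚ) - (ℓ i : ℚ))]
  -- descFactorial matrix
  set B : Matrix (Fin k) (Fin k) ℚ :=
    Matrix.of (fun i j : Fin k => ((ℓ i).descFactorial (j : ℕ) : ℚ)) with hBdef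
  have hB : (Matrix.vandermonde v).det = B.det := by
    have h := Matrix.det_eval_matrixOfPolynomials_eq_det_vandermonde v
      (fun j : Fin k => descPochhammer ℚ (j : ℕ))
      (fun j => descPochhammer_natDegree ℚ (j : ℕ))
      (fun j => monic_descPochhammer ℚ (j : ℕ))
    rw [h]
    congr 1
    ext i j
    simp only [hBdef, Matrix.of_apply, hvdef]
    rw [descPochhammer_eval_eq_descFactorial]
  -- expand determinant
  have hdet : B.det = ∑ σ : Equiv.Perm (Fin k),
      ((Equiv.Perm.sign σ : ℤ) : ℚ) * ∏ i, B (σ i) i := Matrix.det_apply' B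
  -- the integer-valued terms
  set Z : Equiv.Perm (Fin k) → ℤ := fun σ =>
    if ∀ i : Fin k, (i : ℕ) ≤ ℓ (σ i) then
      (Equiv.Perm.sign σ : ℤ) * (Nat.multinomial Finset.univ (fun i => ℓ (σ i) - (i : ℕ)))
    else 0 with hZdef
  have hPl_pos : (0 : ℚ) < ∏ i, (Nat.factorial (ℓ i) : ℚ) := by
    apply Finset.prod_pos; intro i _; exact_mod_cast Nat.factorial_pos (ℓ i)
  have hterm : ∀ σ : Equiv.Perm (Fin k),
      ((Z σ : ℤ) : ℚ) = ((Equiv.Perm.sign σ : ℤ) : ℚ) *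
        ((Nat.factorial d : ℚ) / (∏ i, (Nat.factorial (ℓ i) : ℚ)) * ∏ i, B (σ i) i) := by
    intro σ
    by_cases h : ∀ i : Fin k, (i : ℕ) ≤ ℓ (σ i)
    · -- all descFactorials nonzero; term equals signed multinomial
      have hsum_shift : (∑ i, (ℓ (σ i) - (i : ℕ))) = d := by
        have h1 : (∑ i, (ℓ (σ i) - (i : ℕ))) + ∑ i : Fin k, (i : ℕ) = ∑ i, ℓ (σ i) := by
          rw [← Finset.sum_add_distrib]
          exact Finset.sum_congr rfl (fun i _ => by have := h i; omega)
        have h2 : ∑ i, ℓ (σ i) = ∑ i, ℓ i := Equiv.sum_comp σ ℓ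
        omega
      -- nat identity
      have hnat : Nat.factorial d * ∏ i, (ℓ (σ i)).descFactorial (i : ℕ)
          = (Nat.multinomial Finset.univ (fun i => ℓ (σ i) - (i : ℕ))) *
            ∏ i, Nat.factorial (ℓ i) := by
        have hfac : ∀ i : Fin k, Nat.factorial (ℓ (σ i) - (i : ℕ)) *
            (ℓ (σ i)).descFactorial (i : ℕ) = Nat.factorial (ℓ (σ i)) :=
          fun i => Nat.factorial_mul_descFactorial (h i)
        have hPl : ∏ i, Nat.factorial (ℓ i) = ∏ i, Nat.factorial (ℓ (σ i)) :=
          (Equiv.prod_comp σ (fun i => Nat.factorial (ℓ i))).symm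
        have hspec := Nat.multinomial_spec Finset.univ (fun i => ℓ (σ i) - (i : ℕ))
        rw [hsum_shift] at hspec
        calc Nat.factorial d * ∏ i, (ℓ (σ i)).descFactorial (i : ℕ)
            = ((∏ i, Nat.factorial (ℓ (σ i) - (i : ℕ))) *
                Nat.multinomial Finset.univ (fun i => ℓ (σ i) - (i : ℕ))) *
                  ∏ i, (ℓ (σ i)).descFactorial (i : ℕ) := by rw [hspec]
          _ = (Nat.multinomial Finset.univ (fun i => ℓ (σ i) - (i : ℕ))) *
                ((∏ i, Nat.factorial (ℓ (σ i) - (i : ℕ))) *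
                  ∏ i, (ℓ (σ i)).descFactorial (i : ℕ)) := by ring
          _ = (Nat.multinomial Finset.univ (fun i => ℓ (σ i) - (i : ℕ))) *
                ∏ i, (Nat.factorial (ℓ (σ i) - (i : ℕ)) *
                  (ℓ (σ i)).descFactorial (i : ℕ)) := by rw [Finset.prod_mul_distrib]
          _ = _ := by
                rw [Finset.prod_congr rfl (fun i _ => hfac i), hPl]
      have hBprod : (∏ i, B (σ i) i) = ((∏ i, (ℓ (σ i)).descFactorial (i : ℕ) : ℕ) : ℚ) := by
        push_cast
        exact Finset.prod_congr rfl (fun i _ => rfl)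
      have hcast := congrArg (fun x : ℕ => (x : ℚ)) hnat
      push_cast at hcast
      have key : ((Nat.multinomial Finset.univ (fun i => ℓ (σ i) - (i : ℕ))) : ℚ)
          = (Nat.factorial d : ℚ) / (∏ i, (Nat.factorial (ℓ i) : ℚ)) * ∏ i, B (σ i) i := by
        rw [hBprod, div_mul_eq_mul_div, eq_div_iff (ne_of_gt hPl_pos)]
        exact_mod_cast hnat.symm
      simp only [hZdef, if_pos h]
      push_cast
      rw [key]
    · -- some descFactorial vanishes
      push_neg at h
      obtain ⟨i0, hi0⟩ := h
      have hzero : B (σ i0) i0 = 0 := by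
        simp only [hBdef, Matrix.of_apply]
        rw [Nat.descFactorial_eq_zero_iff_lt.mpr hi0]
        simp
      have hne : ¬ ∀ i : Fin k, (i : ℕ) ≤ ℓ (σ i) := by push_neg; exact ⟨i0, hi0⟩
      have hpz : (∏ i, B (σ i) i) = 0 := Finset.prod_eq_zero (Finset.mem_univ i0) hzero
      simp only [hZdef, if_neg hne]
      rw [hpz]
      simp
  -- q is an integer
  have hq_int : q = ((∑ σ : Equiv.Perm (Fin k), Z σ : ℤ) : ℚ) := by
    have hPl_eq : (∏ i, (Nat.factorial (I i - 1) : ℚ)) = ∏ i, (Nat.factorial (ℓ i) : ℚ) := by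
      rfl
    rw [hqdef, hprod_diff, hvdm, hB, hdet, hPl_eq, Finset.mul_sum]
    push_cast
    refine Finset.sum_congr rfl (fun σ _ => ?_)
    have := hterm σ
    push_cast at this
    rw [this]; ring
  -- conclude
  refine ⟨(∑ σ : Equiv.Perm (Fin k), Z σ).toNat, ?_, ?_⟩
  · have : (0 : ℚ) < ((∑ σ : Equiv.Perm (Fin k), Z σ : ℤ) : ℚ) := hq_int ▸ hq_pos
    have hz : 0 < ∑ σ : Equiv.Perm (Fin k), Z σ := by exact_mod_cast this
    omega
  · have : (0 : ℚ) < ((∑ σ : Equiv.Perm (Fin k), Z σ : ℤ) : ℚ) := hq_int ▸ hq_pos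
    have hz : 0 < ∑ σ : Equiv.Perm (Fin k), Z σ := by exact_mod_cast this
    rw [hq_int]
    exact_mod_cast Int.toNat_of_nonneg hz.le
end

section
/- For variables λ_1,...,λ_n over a field of characteristic 0 and any k with 1 ≤ k ≤ n-1, the identity Σ_{i=1}^{n} λ_i^k · ∂^k/∂λ_i^k V(λ_1,...,λ_n) = binom(n, k+1) · k! · V(λ_1,...,λ_n) holds, where V(λ_1,...,λ_n) = ∏_{i<j}(λ_j - λ_i) is the Vandermonde determinant. -/
open MvPolynomial Finset

private lemma prod_monomial_one' {F : Type*} [CommSemiring F] {n : ℕ}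
    (t : Finset (Fin n)) (f : Fin n → (Fin n →₀ ℕ)) :
    (∏ i ∈ t, (monomial (f i) (1 : F))) = monomial (∑ i ∈ t, f i) 1 := by
  classical
  induction t using Finset.induction with
  | empty => simp
  | insert _ _ h ih =>
      rw [Finset.prod_insert h, Finset.sum_insert h, ih, monomial_mul, mul_one]

private lemma pderiv_iter_monomial' {F : Type*} [CommRing F] {n : ℕ} (i : Fin n) (k : ℕ)
    (s : Fin n →₀ ℕ) (a : F) :
    (pderiv i)^[k] (monomial s a) =
      monomial (s - Finsupp.single i k) (a * (s i).descFactorial k) := by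
  induction k with
  | zero => simp
  | succ k ih =>
      rw [Function.iterate_succ_apply', ih, pderiv_monomial]
      rw [Finsupp.tsub_apply, Finsupp.single_apply, if_pos rfl]
      rw [tsub_tsub, ← Finsupp.single_add]
      congr 1
      rw [Nat.descFactorial_succ]
      push_cast
      ring

private lemma key_monomial' {F : Type*} [CommRing F] {n : ℕ} (i : Fin n) (k : ℕ)
    (s : Fin n →₀ ℕ) (a : F) :
    (X i) ^ k * (pderiv i)^[k] (monomial s a) = monomial s (a * (s i).descFactorial k) := by
  rw [pderiv_iter_monomial', X_pow_eq_monomial, monomial_mul, one_mul]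
  rcases le_or_gt k (s i) with h | h
  · have hs : Finsupp.single i k + (s - Finsupp.single i k) = s := by
      ext j
      simp only [Finsupp.add_apply, Finsupp.tsub_apply, Finsupp.single_apply]
      rcases eq_or_ne i j with rfl | hij
      · rw [if_pos rfl]
        omega
      · simp [hij]
    rw [hs]
  · rw [Nat.descFactorial_eq_zero_iff_lt.mpr h]
    simp

theorem vandermonde_derivative_identity {F : Type*} [Field F] [CharZero F]
    (n k : ℕ) (hk : 1 ≤ k) (hkn : k ≤ n - 1)
    (V : MvPolynomial (Fin n) F)
    (hV : V = ∏ p ∈ Finset.univ.filter (fun p : Fin n × Fin n => p.1 < p.2),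
      (MvPolynomial.X p.2 - MvPolynomial.X p.1)) :
    ∑ i, (MvPolynomial.X i) ^ k * ((MvPolynomial.pderiv i)^[k] V) =
      ((n.choose (k + 1) * Nat.factorial k : ℕ) : MvPolynomial (Fin n) F) * V := by
  classical
  -- V equals the determinant of the Vandermonde matrix
  have hdet : V = (Matrix.vandermonde fun i : Fin n => (X i : MvPolynomial (Fin n) F)).det := by
    rw [hV, Matrix.det_vandermonde]
    rw [← Finset.univ_product_univ, Finset.prod_filter, Finset.prod_product]
    refine Finset.prod_congr rfl fun i _ => ?_
    have : (Ioi i) = Finset.univ.filter (fun j => i < j) := by ext j; simp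
    rw [this, Finset.prod_filter]
  -- exponent multiset of the σ-term
  set e : Equiv.Perm (Fin n) → (Fin n →₀ ℕ) :=
    fun σ => ∑ i, Finsupp.single (σ i) (i : ℕ) with he
  have hmon : ∀ σ : Equiv.Perm (Fin n),
      (∏ i, (X (σ i) : MvPolynomial (Fin n) F) ^ (i : ℕ)) = monomial (e σ) 1 := by
    intro σ
    simp_rw [X_pow_eq_monomial]
    exact prod_monomial_one' _ _
  have hVsum : V = ∑ σ : Equiv.Perm (Fin n),
      Equiv.Perm.sign σ • (monomial (e σ) (1 : F)) := by
    rw [hdet, Matrix.det_apply]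
    refine Finset.sum_congr rfl fun σ _ => ?_
    rw [← hmon σ]
    congr 1
  have heval : ∀ (σ : Equiv.Perm (Fin n)) (i : Fin n), e σ (σ i) = (i : ℕ) := by
    intro σ i
    rw [he]
    rw [Finsupp.finset_sum_apply]
    rw [Finset.sum_eq_single i]
    · simp
    · intro j _ hj
      simp [Finsupp.single_apply, σ.injective.ne hj]
    · simp
  -- the constant
  have hc : ∀ σ : Equiv.Perm (Fin n),
      (∑ j, ((e σ j).descFactorial k)) = n.choose (k + 1) * Nat.factorial k := by
    intro σ
    have h1 : (∑ j, ((e σ j).descFactorial k)) = ∑ i : Fin n, ((i : ℕ)).descFactorial k := by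
      rw [← Equiv.sum_comp σ (fun j => (e σ j).descFactorial k)]
      exact Finset.sum_congr rfl fun i _ => by rw [heval]
    rw [h1, Fin.sum_univ_eq_sum_range (fun m => m.descFactorial k) n]
    simp_rw [Nat.descFactorial_eq_factorial_mul_choose]
    rw [← Finset.mul_sum]
    have h2 : (∑ m ∈ Finset.range n, m.choose k) = n.choose (k + 1) := by
      rcases Nat.eq_zero_or_pos n with rfl | hn
      · simp
      · have h3 : (∑ m ∈ Finset.Icc k (n - 1), m.choose k) = n.choose (k + 1) := by
          rw [Nat.sum_Icc_choose]
          congr 1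
          omega
        rw [← h3]
        refine (Finset.sum_subset ?_ ?_).symm
        · intro m hm
          simp only [Finset.mem_Icc] at hm
          simp only [Finset.mem_range]
          omega
        · intro m hm hm'
          simp only [Finset.mem_Icc, Finset.mem_range, not_and, not_le] at hm hm'
          exact Nat.choose_eq_zero_of_lt (by omega)
    rw [h2, mul_comm]
  -- the operator as a linear map
  set D : MvPolynomial (Fin n) F →ₗ[F] MvPolynomial (Fin n) F :=
    ∑ i, (LinearMap.mulLeft F ((X i : MvPolynomial (Fin n) F) ^ k)).comp
      (((pderiv i : Derivation F (MvPolynomial (Fin n) F) (MvPolynomial (Fin n) F)) :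
        MvPolynomial (Fin n) F →ₗ[F] MvPolynomial (Fin n) F) ^ k) with hDdef
  have hD : ∀ P : MvPolynomial (Fin n) F,
      D P = ∑ i, (X i) ^ k * (pderiv i)^[k] P := by
    intro P
    rw [hDdef, LinearMap.sum_apply]
    refine Finset.sum_congr rfl fun i _ => ?_
    rw [LinearMap.comp_apply, LinearMap.mulLeft_apply, Module.End.pow_apply]
    rfl
  have hDmon : ∀ σ : Equiv.Perm (Fin n), D (monomial (e σ) (1 : F)) =
      (n.choose (k + 1) * Nat.factorial k) • monomial (e σ) (1 : F) := by
    intro σ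
    rw [hD]
    simp_rw [key_monomial', one_mul]
    rw [← map_sum (monomial (e σ))]
    rw [MvPolynomial.smul_monomial]
    congr 1
    rw [← Nat.cast_sum, hc σ]
    simp
  calc ∑ i, (X i) ^ k * (pderiv i)^[k] V = D V := (hD V).symm
    _ = ((n.choose (k + 1) * Nat.factorial k : ℕ) : MvPolynomial (Fin n) F) * V := by
        rw [hVsum, map_sum]
        simp_rw [Units.smul_def, map_zsmul, hDmon, smul_comm ((_ : ℤ)) _, ← Finset.smul_sum]
        rw [nsmul_eq_mul]
end

section
/- For variables λ = (λ_1,...,λ_k) and x = (x_1,...,x_k) over a field of characteristic 0 with d = binom(k,2), the antisymmetrization of (λ·x)^d over permutations of the x-variables equals the multinomial coefficient binom(d; 0,1,...,k-1) times V(λ)·V(x): Σ_{π ∈ S_k} sgn(π) (Σ_i λ_i x_{π(i)})^d = (d! / (0!·1!···(k-1)!)) · V(λ) · V(x), where V denotes the Vandermonde determinant ∏_{i<j}(·_j − ·_i). -/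
open Finset MvPolynomial Matrix Equiv

section aux1
lemma aux_sum_lower : ∀ (n : ℕ) (S : Finset ℕ), S.card = n → n.choose 2 ≤ ∑ i ∈ S, i := by
  intro n
  induction n with
  | zero => intro S _; simp
  | succ n ih =>
    intro S hcard
    have hne : S.Nonempty := card_pos.mp (by omega)
    set m := S.max' hne with hm
    have hsub : S ⊆ range (m + 1) := fun x hx => mem_range.mpr (Nat.lt_succ_of_le (le_max' S x hx))
    have hmn : n ≤ m := by
      have := card_le_card hsub
      rw [hcard, card_range] at this; omega
    have hce : (S.erase m).card = n := by rw [card_erase_of_mem (max'_mem S hne), hcard]; omega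
    have h1 : n.choose 2 ≤ ∑ i ∈ S.erase m, i := ih _ hce
    have h2 : ∑ i ∈ S, i = m + ∑ i ∈ S.erase m, i := (add_sum_erase S id (max'_mem S hne)).symm
    have h3 : (n+1).choose 2 = n + n.choose 2 := by
      rw [Nat.choose_succ_succ, Nat.choose_one_right]
    omega

lemma aux_sum_eq : ∀ (n : ℕ) (S : Finset ℕ), S.card = n → ∑ i ∈ S, i = n.choose 2 → S = range n := by
  intro n
  induction n with
  | zero => intro S h _; simpa using card_eq_zero.mp h
  | succ n ih =>
    intro S hcard hsum
    have hne : S.Nonempty := card_pos.mp (by omega)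
    set m := S.max' hne with hm
    have hsub : S ⊆ range (m + 1) := fun x hx => mem_range.mpr (Nat.lt_succ_of_le (le_max' S x hx))
    have hmn : n ≤ m := by
      have := card_le_card hsub
      rw [hcard, card_range] at this; omega
    have hce : (S.erase m).card = n := by rw [card_erase_of_mem (max'_mem S hne), hcard]; omega
    have h1 : n.choose 2 ≤ ∑ i ∈ S.erase m, i := aux_sum_lower _ _ hce
    have h2 : ∑ i ∈ S, i = m + ∑ i ∈ S.erase m, i := (add_sum_erase S id (max'_mem S hne)).symm
    have h3 : (n+1).choose 2 = n + n.choose 2 := by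
      rw [Nat.choose_succ_succ, Nat.choose_one_right]
    have hmeq : m = n := by omega
    have hsume : ∑ i ∈ S.erase m, i = n.choose 2 := by omega
    have := ih _ hce hsume
    rw [range_add_one, ← this, ← hmeq, insert_erase (max'_mem S hne)]

end aux1

section main
variable {F : Type*} [Field F] [CharZero F] (k : ℕ)

local notation "R" => MvPolynomial (Fin k ⊕ Fin k) F

lemma pairs_prod {M : Type*} [CommMonoid M] (f : Fin k → Fin k → M) :
    ∏ p ∈ Finset.univ.filter (fun p : Fin k × Fin k => p.1 < p.2), f p.1 p.2
      = ∏ i, ∏ j ∈ Finset.Ioi i, f i j := by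
  rw [Finset.prod_sigma']
  refine Finset.prod_nbij' (fun p => ⟨p.1, p.2⟩) (fun x => (x.1, x.2)) ?_ ?_ ?_ ?_ ?_ <;>
    simp [Finset.mem_sigma, Finset.mem_filter]

omit [CharZero F] in
lemma vand_eq (v : Fin k → R) :
    det (vandermonde v) = ∏ p ∈ Finset.univ.filter (fun p : Fin k × Fin k => p.1 < p.2),
      (v p.2 - v p.1) := by
  rw [det_vandermonde]; exact (pairs_prod k fun i j => v j - v i).symm

omit [CharZero F] in
lemma sum_perm_det (v : Fin k → R) :
    ∑ σ : Equiv.Perm (Fin k), ((Equiv.Perm.sign σ : ℤ) : R) * ∏ i, v i ^ ((σ i : Fin k) : ℕ)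
      = det (vandermonde v) := by
  rw [det_apply]
  refine Fintype.sum_equiv (Equiv.inv (Equiv.Perm (Fin k))) _ _ fun σ => ?_
  have h1 : ∏ i, v (σ⁻¹ i) ^ ((i : Fin k) : ℕ) = ∏ i, v i ^ ((σ i : Fin k) : ℕ) := by
    rw [← Equiv.prod_comp σ (fun i => v (σ⁻¹ i) ^ ((i : Fin k) : ℕ))]
    simp
  simp only [Equiv.inv_apply, Units.smul_def, zsmul_eq_mul, vandermonde_apply]
  rw [h1]
  simp

lemma multinomial_perm (σ : Equiv.Perm (Fin k)) :
    Nat.multinomial Finset.univ (fun i => ((σ i : Fin k) : ℕ))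
      = Nat.multinomial (Finset.range k) id := by
  unfold Nat.multinomial
  congr 1
  · congr 1
    rw [Equiv.sum_comp σ (fun i : Fin k => (i : ℕ)),
      Fin.sum_univ_eq_sum_range (fun i => i) k]
    rfl
  · rw [Equiv.prod_comp σ (fun i : Fin k => Nat.factorial (i : ℕ)),
      Fin.prod_univ_eq_prod_range (fun i => Nat.factorial i) k]
    rfl

lemma exists_perm {c : Fin k → ℕ} (hinj : Function.Injective c)
    (hsum : ∑ i, c i = k.choose 2) :
    ∃ σ : Equiv.Perm (Fin k), ∀ i, c i = ((σ i : Fin k) : ℕ) := by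
  have himg : Finset.image c Finset.univ = Finset.range k := by
    apply aux_sum_eq k
    · rw [Finset.card_image_of_injective _ hinj, Finset.card_univ, Fintype.card_fin]
    · rw [Finset.sum_image (fun a _ b _ h => hinj h)]; exact hsum
  have hlt : ∀ i, c i < k := fun i =>
    Finset.mem_range.mp (himg ▸ Finset.mem_image_of_mem c (Finset.mem_univ i))
  have hfinj : Function.Injective (fun i => (⟨c i, hlt i⟩ : Fin k)) :=
    fun a b h => hinj (congrArg Fin.val h)
  exact ⟨Equiv.ofBijective _ ((Fintype.bijective_iff_injective_and_card _).mpr ⟨hfinj, rfl⟩),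
    fun i => rfl⟩

omit [CharZero F] in
lemma sum_range_eq_choose : ∑ i : Fin k, (i : ℕ) = k.choose 2 := by
  rw [Fin.sum_univ_eq_sum_range (fun i => i) k, Finset.sum_range_id, Nat.choose_two_right]

end main

section main2
variable {F : Type*} [Field F] [CharZero F] (k : ℕ)

local notation "R" => MvPolynomial (Fin k ⊕ Fin k) F

omit [CharZero F] in
lemma sum_perm_det_apply (c : Fin k → ℕ) :
    ∑ π : Equiv.Perm (Fin k),
        ((Equiv.Perm.sign π : ℤ) : R) * ∏ i, (X (Sum.inr (π i)) : R) ^ c i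
      = det (Matrix.of fun a b => (X (Sum.inr a) : R) ^ c b) := by
  rw [det_apply]
  refine Finset.sum_congr rfl fun σ _ => ?_
  simp [Units.smul_def, zsmul_eq_mul]

omit [CharZero F] in
lemma det_zero_of_not_inj {c : Fin k → ℕ} (hc : ¬ Function.Injective c) :
    det (Matrix.of fun a b => (X (Sum.inr a) : R) ^ c b) = 0 := by
  rw [Function.not_injective_iff] at hc
  obtain ⟨a, b, hab, hne⟩ := hc
  exact det_zero_of_column_eq hne (fun i => by simp [hab])

omit [CharZero F] in
lemma det_perm_col (σ : Equiv.Perm (Fin k)) :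
    det (Matrix.of fun a b => (X (Sum.inr a) : R) ^ ((σ b : Fin k) : ℕ))
      = ((Equiv.Perm.sign σ : ℤ) : R)
          * det (vandermonde (fun j => (X (Sum.inr j) : R))) := by
  have h : (Matrix.of fun a b => (X (Sum.inr a) : R) ^ ((σ b : Fin k) : ℕ))
      = (vandermonde (fun j => (X (Sum.inr j) : R))).submatrix id σ := rfl
  rw [h, det_permute']

end main2

theorem flag_degree_antisymmetrization {F : Type*} [Field F] [CharZero F]
    (k : ℕ) (hk : 1 ≤ k) (d : ℕ) (hd : d = k.choose 2) :
    ∑ π : Equiv.Perm (Fin k),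
        (Equiv.Perm.sign π : ℤ) •
          (∑ i, (MvPolynomial.X (Sum.inl i) : MvPolynomial (Fin k ⊕ Fin k) F) *
            MvPolynomial.X (Sum.inr (π i))) ^ d =
      ((Nat.multinomial (Finset.range k) id : ℕ) : MvPolynomial (Fin k ⊕ Fin k) F) *
        (∏ p ∈ Finset.univ.filter (fun p : Fin k × Fin k => p.1 < p.2),
          (MvPolynomial.X (Sum.inl p.2) - MvPolynomial.X (Sum.inl p.1))) *
        (∏ p ∈ Finset.univ.filter (fun p : Fin k × Fin k => p.1 < p.2),
          (MvPolynomial.X (Sum.inr p.2) - MvPolynomial.X (Sum.inr p.1))) := by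
  classical
  subst hd
  have expand : ∀ π : Equiv.Perm (Fin k),
      (∑ i, (X (Sum.inl i) : MvPolynomial (Fin k ⊕ Fin k) F) * X (Sum.inr (π i))) ^ k.choose 2
        = ∑ c ∈ Finset.piAntidiag Finset.univ (k.choose 2),
            (Nat.multinomial Finset.univ c : MvPolynomial (Fin k ⊕ Fin k) F) *
              ((∏ i, (X (Sum.inl i) : MvPolynomial (Fin k ⊕ Fin k) F) ^ c i) * ∏ i, (X (Sum.inr (π i)) : MvPolynomial (Fin k ⊕ Fin k) F) ^ c i) := by
    intro π
    rw [Finset.sum_pow_eq_sum_piAntidiag]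
    refine Finset.sum_congr rfl fun c _ => ?_
    rw [← Finset.prod_mul_distrib]
    simp [mul_pow]
  calc
    ∑ π : Equiv.Perm (Fin k), (Equiv.Perm.sign π : ℤ) •
        (∑ i, (X (Sum.inl i) : MvPolynomial (Fin k ⊕ Fin k) F) * X (Sum.inr (π i))) ^ k.choose 2
      = ∑ c ∈ Finset.piAntidiag Finset.univ (k.choose 2),
          (Nat.multinomial Finset.univ c : MvPolynomial (Fin k ⊕ Fin k) F) * (∏ i, (X (Sum.inl i) : MvPolynomial (Fin k ⊕ Fin k) F) ^ c i) *
            (∑ π : Equiv.Perm (Fin k),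
              ((Equiv.Perm.sign π : ℤ) : MvPolynomial (Fin k ⊕ Fin k) F) * ∏ i, (X (Sum.inr (π i)) : MvPolynomial (Fin k ⊕ Fin k) F) ^ c i) := by
        simp_rw [expand, Finset.smul_sum]
        rw [Finset.sum_comm]
        refine Finset.sum_congr rfl fun c _ => ?_
        rw [Finset.mul_sum]
        refine Finset.sum_congr rfl fun π _ => ?_
        rw [zsmul_eq_mul]
        ring
    _ = ∑ c ∈ Finset.piAntidiag Finset.univ (k.choose 2),
          (Nat.multinomial Finset.univ c : MvPolynomial (Fin k ⊕ Fin k) F) * (∏ i, (X (Sum.inl i) : MvPolynomial (Fin k ⊕ Fin k) F) ^ c i) *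
            det (Matrix.of fun a b => (X (Sum.inr a) : MvPolynomial (Fin k ⊕ Fin k) F) ^ c b) := by
        refine Finset.sum_congr rfl fun c _ => ?_
        rw [sum_perm_det_apply]
    _ = ∑ c ∈ (Finset.piAntidiag Finset.univ (k.choose 2)).filter
          (fun c => Function.Injective c),
          (Nat.multinomial Finset.univ c : MvPolynomial (Fin k ⊕ Fin k) F) * (∏ i, (X (Sum.inl i) : MvPolynomial (Fin k ⊕ Fin k) F) ^ c i) *
            det (Matrix.of fun a b => (X (Sum.inr a) : MvPolynomial (Fin k ⊕ Fin k) F) ^ c b) := by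
        rw [← Finset.sum_filter_add_sum_filter_not
          (Finset.piAntidiag Finset.univ (k.choose 2)) (fun c => Function.Injective c)]
        have : ∑ c ∈ (Finset.piAntidiag Finset.univ (k.choose 2)).filter
            (fun c => ¬ Function.Injective c),
            (Nat.multinomial Finset.univ c : MvPolynomial (Fin k ⊕ Fin k) F) * (∏ i, (X (Sum.inl i) : MvPolynomial (Fin k ⊕ Fin k) F) ^ c i) *
              det (Matrix.of fun a b => (X (Sum.inr a) : MvPolynomial (Fin k ⊕ Fin k) F) ^ c b) = 0 := by
          refine Finset.sum_eq_zero fun c hc => ?_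
          rw [det_zero_of_not_inj k (Finset.mem_filter.mp hc).2, mul_zero]
        rw [this, add_zero]
    _ = ∑ σ : Equiv.Perm (Fin k),
          ((Nat.multinomial (Finset.range k) id : ℕ) : MvPolynomial (Fin k ⊕ Fin k) F) *
            (∏ i, (X (Sum.inl i) : MvPolynomial (Fin k ⊕ Fin k) F) ^ ((σ i : Fin k) : ℕ)) *
            (((Equiv.Perm.sign σ : ℤ) : MvPolynomial (Fin k ⊕ Fin k) F)
              * det (vandermonde (fun j => (X (Sum.inr j) : MvPolynomial (Fin k ⊕ Fin k) F)))) := by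
        symm
        refine Finset.sum_bij (fun σ _ => fun x => ((σ x : Fin k) : ℕ)) ?_ ?_ ?_ ?_
        · intro σ _
          refine Finset.mem_filter.mpr ⟨Finset.mem_piAntidiag.mpr ⟨?_, fun i _ => Finset.mem_univ i⟩, ?_⟩
          · rw [Equiv.sum_comp σ (fun i : Fin k => (i : ℕ))]
            exact sum_range_eq_choose k
          · exact fun a b h => σ.injective (Fin.val_injective h)
        · intro σ _ τ _ h
          exact Equiv.ext fun x => Fin.val_injective (congrFun h x)
        · intro c hc
          obtain ⟨hmem, hinj⟩ := Finset.mem_filter.mp hc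
          obtain ⟨hsum, -⟩ := Finset.mem_piAntidiag.mp hmem
          obtain ⟨σ, hσ⟩ := exists_perm k hinj hsum
          exact ⟨σ, Finset.mem_univ σ, funext fun i => (hσ i).symm⟩
        · intro σ _
          rw [multinomial_perm, det_perm_col]
    _ = ((Nat.multinomial (Finset.range k) id : ℕ) : MvPolynomial (Fin k ⊕ Fin k) F) *
          (∑ σ : Equiv.Perm (Fin k),
            ((Equiv.Perm.sign σ : ℤ) : MvPolynomial (Fin k ⊕ Fin k) F) * ∏ i, (X (Sum.inl i) : MvPolynomial (Fin k ⊕ Fin k) F) ^ ((σ i : Fin k) : ℕ)) *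
          det (vandermonde (fun j => (X (Sum.inr j) : MvPolynomial (Fin k ⊕ Fin k) F))) := by
        rw [Finset.mul_sum, Finset.sum_mul]
        refine Finset.sum_congr rfl fun σ _ => ?_
        ring
    _ = _ := by
        rw [sum_perm_det, vand_eq, vand_eq]
end

section
/- Let k ≥ 1 and let b = (b_1,...,b_{k-1}) be a sequence of nonnegative integers. Define a bipartite graph B_b with upper class U = { (j,l) : 1 ≤ j ≤ l ≤ k-1 }, lower class D_b = { (i,t) : 1 ≤ i ≤ k-1, 1 ≤ t ≤ b_i }, and an edge between (j,l) and (i,t) iff j ≤ i ≤ l. Then B_b has a matching covering D_b if and only if for every subset P ⊆ {1,...,k-1}, Σ_{p ∈ P} b_p ≤ K(P), where K(P) is the number of pairs (i,j) with 1 ≤ i ≤ j ≤ k-1 such that some p ∈ P satisfies i ≤ p ≤ j. -/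
/-- The bipartite graph `B_b` has a matching covering the lower class
`D_b = {(i,t) : t < b i}`: an injection from `D_b` into the upper class
`U = {(j,l) : j ≤ l}` sending each `(i,t)` to a pair `(j,l)` with `j ≤ i ≤ l`. -/
def HasLowerMatching (k : ℕ) (b : Fin (k - 1) → ℕ) : Prop :=
  ∃ f : (Σ i : Fin (k - 1), Fin (b i)) → Fin (k - 1) × Fin (k - 1),
    Function.Injective f ∧ ∀ x, (f x).1 ≤ x.1 ∧ x.1 ≤ (f x).2

theorem matching_iff_hall (k : ℕ) (hk : 1 ≤ k) (b : Fin (k - 1) → ℕ) :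
    HasLowerMatching k b ↔
      ∀ P : Finset (Fin (k - 1)),
        ∑ p ∈ P, b p ≤
          (Finset.univ.filter (fun q : Fin (k - 1) × Fin (k - 1) =>
            q.1 ≤ q.2 ∧ ∃ p ∈ P, q.1 ≤ p ∧ p ≤ q.2)).card := by
  classical
  set t : (Σ i : Fin (k-1), Fin (b i)) → Finset (Fin (k-1) × Fin (k-1)) :=
    fun x => Finset.univ.filter (fun q => q.1 ≤ x.1 ∧ x.1 ≤ q.2) with ht
  have hmatch : HasLowerMatching k b ↔ ∃ f, Function.Injective f ∧ ∀ x, f x ∈ t x := by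
    unfold HasLowerMatching
    simp [ht, Finset.mem_filter]
  rw [hmatch, ← Finset.all_card_le_biUnion_card_iff_exists_injective]
  constructor
  · intro H P
    have h := H (P.sigma fun i => Finset.univ)
    rw [Finset.card_sigma] at h
    simp only [Finset.card_univ, Fintype.card_fin] at h
    refine le_trans h (Finset.card_le_card ?_)
    intro q hq
    simp only [Finset.mem_biUnion, Finset.mem_sigma, ht, Finset.mem_filter,
      Finset.mem_univ, true_and] at hq ⊢
    obtain ⟨x, ⟨hx, _⟩, h1, h2⟩ := hq
    exact ⟨le_trans h1 h2, x.1, hx, h1, h2⟩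
  · intro H s
    have hP := H (s.image Sigma.fst)
    calc s.card ≤ ((s.image Sigma.fst).sigma fun i => (Finset.univ : Finset (Fin (b i)))).card := by
          apply Finset.card_le_card
          intro x hx
          simp only [Finset.mem_sigma, Finset.mem_univ, and_true]
          exact Finset.mem_image_of_mem _ hx
      _ = ∑ p ∈ s.image Sigma.fst, b p := by simp [Finset.card_sigma]
      _ ≤ _ := hP
      _ ≤ (s.biUnion t).card := by
          apply Finset.card_le_card
          intro q hq
          simp only [Finset.mem_filter, Finset.mem_univ, true_and, Finset.mem_image] at hq
          obtain ⟨hle, p, ⟨x, hx, rfl⟩, h1, h2⟩ := hq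
          simp only [Finset.mem_biUnion, ht, Finset.mem_filter, Finset.mem_univ, true_and]
          exact ⟨x, hx, h1, h2⟩
end

section
/- Let k ≥ 1 and b = (b_1,...,b_{k-1}) be nonnegative integers with Σ b_i = binom(k,2). Then the coefficient of v_1^{b_1}···v_{k-1}^{b_{k-1}} in the polynomial ∏_{1 ≤ i < j ≤ k} (v_i + v_{i+1} + ... + v_{j-1}) is nonzero if and only if for all 1 ≤ s ≤ t ≤ k-1, Σ_{j=s}^{t} b_j ≥ binom(t-s+2, 2). -/
open Finset

lemma count_pairs (n a c : ℕ) (hc : c < n) :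
    (((Finset.range n) ×ˢ (Finset.range n)).filter
      (fun p : ℕ × ℕ => p.1 < p.2 ∧ a ≤ p.1 ∧ p.2 ≤ c)).card = (c + 1 - a).choose 2 := by
  have := Finset.card_bij' (s := ((Finset.range n) ×ˢ (Finset.range n)).filter
      (fun p : ℕ × ℕ => p.1 < p.2 ∧ a ≤ p.1 ∧ p.2 ≤ c))
    (t := (Finset.range (c + 1 - a)).sigma fun j => Finset.range j)
    (i := fun p _ => ⟨p.2 - a, p.1 - a⟩)
    (j := fun x _ => (x.2 + a, x.1 + a))
    ?_ ?_ ?_ ?_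
  · rw [this, Finset.card_sigma]
    simp only [Finset.card_range]
    rw [Finset.sum_range_id, Nat.choose_two_right]
  · rintro ⟨x, y⟩ hp
    simp only [Finset.mem_filter, Finset.mem_product, Finset.mem_range] at hp
    obtain ⟨⟨hx, hy⟩, hxy, hax, hyc⟩ := hp
    simp only [Finset.mem_sigma, Finset.mem_range]
    omega
  · rintro ⟨x, y⟩ hx
    simp only [Finset.mem_sigma, Finset.mem_range] at hx
    simp only [Finset.mem_filter, Finset.mem_product, Finset.mem_range]
    omega
  · rintro ⟨x, y⟩ hp
    simp only [Finset.mem_filter, Finset.mem_product, Finset.mem_range] at hp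
    simp only [Prod.mk.injEq]
    omega
  · rintro ⟨x, y⟩ hx
    simp only [Finset.mem_sigma, Finset.mem_range] at hx
    simp [Nat.add_sub_cancel]

lemma key (n : ℕ) (b : ℕ → ℕ)
    (hcond : ∀ s t : ℕ, s ≤ t → t < n → (t - s + 2).choose 2 ≤ ∑ m ∈ Finset.Icc s t, b m) :
    ∀ U : Finset ℕ, U ⊆ Finset.range n →
      (((Finset.range (n+1)) ×ˢ (Finset.range (n+1))).filter
        (fun p : ℕ × ℕ => p.1 < p.2 ∧ ∀ m, p.1 ≤ m → m < p.2 → m ∈ U)).card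
      ≤ ∑ m ∈ U, b m := by
  intro U
  induction U using Finset.strongInduction with
  | _ U ih =>
  intro hU
  rcases U.eq_empty_or_nonempty with rfl | hne
  · have : (((Finset.range (n+1)) ×ˢ (Finset.range (n+1))).filter
        (fun p : ℕ × ℕ => p.1 < p.2 ∧ ∀ m, p.1 ≤ m → m < p.2 → m ∈ (∅ : Finset ℕ))) = ∅ := by
      refine Finset.filter_false_of_mem ?_
      rintro ⟨x, y⟩ _
      simp only [Finset.notMem_empty, not_and]
      intro hxy h
      exact (h x le_rfl hxy)
    simp [this]
  · classical
    set t := U.max' hne with htdef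
    have ht : t ∈ U := U.max'_mem hne
    have hmax : ∀ x ∈ U, x ≤ t := fun x hx => U.le_max' x hx
    have htn : t < n := by simpa using hU ht
    have hQ : ∃ s, s ≤ t ∧ Finset.Icc s t ⊆ U := ⟨t, le_rfl, by
      intro x hx
      simp only [Finset.mem_Icc] at hx
      have : x = t := le_antisymm hx.2 hx.1
      exact this ▸ ht⟩
    set s0 := Nat.find hQ with hs0def
    obtain ⟨hs0t, hs0sub⟩ := Nat.find_spec hQ
    have hs0min : ∀ s < s0, ¬ (s ≤ t ∧ Finset.Icc s t ⊆ U) := fun s hs => Nat.find_min hQ hs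
    have hnotU : ∀ m, m < s0 → ¬ (s0 - 1 ∈ U) → True := fun _ _ _ => trivial
    have hs1 : 0 < s0 → (s0 - 1) ∉ U := by
      intro hpos hmem
      refine hs0min (s0 - 1) (by omega) ⟨by omega, ?_⟩
      intro x hx
      simp only [Finset.mem_Icc] at hx
      rcases Nat.eq_or_lt_of_le hx.1 with h | h
      · exact h ▸ hmem
      · exact hs0sub (Finset.mem_Icc.mpr ⟨by omega, hx.2⟩)
    set I := Finset.Icc s0 t with hIdef
    set U' := U \ I with hU'def
    have hIU : I ⊆ U := hs0sub
    have hUU' : U' ⊂ U := by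
      refine Finset.sdiff_ssubset hIU ?_
      exact ⟨t, Finset.mem_Icc.mpr ⟨hs0t, le_rfl⟩⟩
    have hA' := ih U' hUU' (fun x hx => hU (Finset.mem_sdiff.mp hx).1)
    -- split
    have hsplit : (((Finset.range (n+1)) ×ˢ (Finset.range (n+1))).filter
        (fun p : ℕ × ℕ => p.1 < p.2 ∧ ∀ m, p.1 ≤ m → m < p.2 → m ∈ U)) ⊆
        (((Finset.range (n+1)) ×ˢ (Finset.range (n+1))).filter
          (fun p : ℕ × ℕ => p.1 < p.2 ∧ ∀ m, p.1 ≤ m → m < p.2 → m ∈ U')) ∪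
        (((Finset.range (n+1)) ×ˢ (Finset.range (n+1))).filter
          (fun p : ℕ × ℕ => p.1 < p.2 ∧ s0 ≤ p.1 ∧ p.2 ≤ t + 1)) := by
      rintro ⟨i, j⟩ hp
      simp only [Finset.mem_filter, Finset.mem_product, Finset.mem_range] at hp
      obtain ⟨⟨hi, hj⟩, hij, hitv⟩ := hp
      have hjt : j ≤ t + 1 := by
        have := hmax (j-1) (hitv (j-1) (by omega) (by omega))
        omega
      rcases le_or_gt s0 i with hcase | hcase
      · apply Finset.mem_union_right
        simp only [Finset.mem_filter, Finset.mem_product, Finset.mem_range]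
        exact ⟨⟨hi, hj⟩, hij, hcase, hjt⟩
      · apply Finset.mem_union_left
        simp only [Finset.mem_filter, Finset.mem_product, Finset.mem_range]
        refine ⟨⟨hi, hj⟩, hij, ?_⟩
        intro m him hmj
        have hmU : m ∈ U := hitv m him hmj
        have hms0 : m < s0 := by
          by_contra hge
          push_neg at hge
          have hm_t : m ≤ t := hmax m hmU
          -- then s0 - 1 ∈ [i, j) ⊆ U, contradiction
          have : (s0 - 1) ∈ U := hitv (s0 - 1) (by omega) (by omega)
          exact hs1 (by omega) this
        rw [hU'def]
        simp only [Finset.mem_sdiff, hIdef, Finset.mem_Icc]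
        exact ⟨hmU, by omega⟩
    calc (((Finset.range (n+1)) ×ˢ (Finset.range (n+1))).filter
        (fun p : ℕ × ℕ => p.1 < p.2 ∧ ∀ m, p.1 ≤ m → m < p.2 → m ∈ U)).card
        ≤ _ := Finset.card_le_card hsplit
      _ ≤ _ + _ := Finset.card_union_le _ _
      _ ≤ ∑ m ∈ U', b m + ∑ m ∈ I, b m := by
          refine Nat.add_le_add hA' ?_
          rw [count_pairs (n+1) s0 (t+1) (by omega)]
          have : t + 1 + 1 - s0 = t - s0 + 2 := by omega
          rw [this]
          exact hcond s0 t hs0t htn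
      _ = ∑ m ∈ U, b m := Finset.sum_sdiff hIU

lemma card_finPairs (n a c : ℕ) (hc : c ≤ n) :
    ((Finset.univ.filter (fun q : Fin (n+1) × Fin (n+1) =>
      q.1 < q.2 ∧ a ≤ (q.1 : ℕ) ∧ (q.2 : ℕ) ≤ c)).card = (c + 1 - a).choose 2) := by
  rw [← count_pairs (n+1) a c (by omega)]
  apply Finset.card_nbij (i := fun q => ((q.1 : ℕ), (q.2 : ℕ)))
  · rintro ⟨x, y⟩ hq
    simp only [Finset.coe_filter, Finset.mem_coe, Set.mem_setOf_eq, Finset.mem_filter, Finset.mem_univ, true_and] at hq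
    simp only [Finset.mem_filter, Finset.mem_product, Finset.mem_range, Finset.coe_filter]
    exact ⟨⟨x.isLt, y.isLt⟩, hq.1, hq.2.1, hq.2.2⟩
  · rintro ⟨x, y⟩ hq ⟨x', y'⟩ hq' h
    simp only [Prod.mk.injEq] at h ⊢
    exact ⟨Fin.ext h.1, Fin.ext h.2⟩
  · rintro ⟨x, y⟩ hp
    simp only [Finset.coe_filter, Finset.mem_product, Finset.mem_range, Set.mem_setOf_eq,
      Finset.mem_coe] at hp
    obtain ⟨⟨hx, hy⟩, hxy, hax, hyc⟩ := hp
    refine ⟨(⟨x, hx⟩, ⟨y, hy⟩), ?_, rfl⟩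
    simp only [Set.mem_setOf_eq, Finset.coe_filter, Finset.mem_univ, true_and, Finset.mem_coe,
      Finset.mem_filter]
    exact ⟨hxy, hax, hyc⟩

lemma exists_g (n : ℕ) (hn : 1 ≤ n) (b : Fin n → ℕ)
    (hsum : ∑ i, b i = (n+1).choose 2)
    (hcond : ∀ s t : Fin n, s ≤ t → ((t : ℕ) - (s : ℕ) + 2).choose 2 ≤
      ∑ j ∈ Finset.univ.filter (fun j : Fin n => s ≤ j ∧ j ≤ t), b j) :
    ∃ g : Fin (n+1) × Fin (n+1) → Fin n,
      (∀ q : Fin (n+1) × Fin (n+1), q.1 < q.2 →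
        (q.1 : ℕ) ≤ (g q : ℕ) ∧ ((g q) : ℕ) < (q.2 : ℕ)) ∧
      (∀ m : Fin n, ((Finset.univ.filter (fun q : Fin (n+1) × Fin (n+1) => q.1 < q.2)).filter
        (fun q => g q = m)).card = b m) := by
  classical
  set bN : ℕ → ℕ := fun m => if h : m < n then b ⟨m, h⟩ else 0 with hbN
  -- transfer the interval condition to ℕ
  have hIccsum : ∀ s t : ℕ, t < n → ∑ m ∈ Finset.Icc s t, bN m =
      ∑ j ∈ Finset.univ.filter (fun j : Fin n => s ≤ (j : ℕ) ∧ (j : ℕ) ≤ t), b j := by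
    intro s t htn
    apply Finset.sum_nbij' (i := fun m => (⟨m % n, Nat.mod_lt _ (by omega)⟩ : Fin n))
      (j := fun j => (j : ℕ))
    · intro m hm
      simp only [Finset.mem_Icc] at hm
      have hmn : m < n := by omega
      simp only [Finset.mem_filter, Finset.mem_univ, true_and, Nat.mod_eq_of_lt hmn]
      exact ⟨hm.1, hm.2⟩
    · intro j hj
      simp only [Finset.mem_filter, Finset.mem_univ, true_and] at hj
      simp only [Finset.mem_Icc]
      exact hj
    · intro m hm
      simp only [Finset.mem_Icc] at hm
      simp [Nat.mod_eq_of_lt (show m < n by omega)]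
    · intro j hj
      apply Fin.ext
      simp [Nat.mod_eq_of_lt j.isLt]
    · intro m hm
      simp only [Finset.mem_Icc] at hm
      have hmn : m < n := by omega
      simp [hbN, Nat.mod_eq_of_lt hmn, hmn]
  have hcondN : ∀ s t : ℕ, s ≤ t → t < n →
      (t - s + 2).choose 2 ≤ ∑ m ∈ Finset.Icc s t, bN m := by
    intro s t hst htn
    rw [hIccsum s t htn]
    have hs : s < n := lt_of_le_of_lt hst htn
    have := hcond ⟨s, hs⟩ ⟨t, htn⟩ (by simpa [Fin.le_def] using hst)
    simpa [Fin.le_def] using this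
  -- Hall setup
  set ι := {q : Fin (n+1) × Fin (n+1) // q.1 < q.2} with hι
  set itv : ι → Finset (Fin n) := fun x =>
    Finset.univ.filter (fun m : Fin n => (x.1.1 : ℕ) ≤ (m : ℕ) ∧ (m : ℕ) < (x.1.2 : ℕ)) with hitv
  set slot : Fin n → Finset (Fin n × ℕ) := fun m => {m} ×ˢ Finset.range (b m) with hslot
  set ts : ι → Finset (Fin n × ℕ) := fun x => (itv x).biUnion slot with hts
  have hslotdisj : ∀ m ∈ (Finset.univ : Finset (Fin n)), ∀ m' ∈ (Finset.univ : Finset (Fin n)),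
      m ≠ m' → Disjoint (slot m) (slot m') := by
    intro m _ m' _ hmm'
    simp only [Finset.disjoint_left]
    rintro ⟨a, c⟩ ha ha'
    simp only [hslot, Finset.mem_product, Finset.mem_singleton] at ha ha'
    exact hmm' (ha.1 ▸ ha'.1 ▸ rfl)
  have hhall : ∀ A : Finset ι, A.card ≤ (A.biUnion ts).card := by
    intro A
    have hb : A.biUnion ts = (A.biUnion itv).biUnion slot :=
      (Finset.biUnion_biUnion A itv slot).symm
    rw [hb, Finset.card_biUnion (fun m _ m' _ h => hslotdisj m (Finset.mem_univ m) m'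
      (Finset.mem_univ m') h)]
    have hcardslot : ∀ m : Fin n, (slot m).card = b m := by
      intro m
      simp [hslot]
    simp only [hcardslot]
    -- now bound A.card using key
    set N := A.biUnion itv with hN
    set U : Finset ℕ := N.image (fun m : Fin n => (m : ℕ)) with hUdef
    have hUsub : U ⊆ Finset.range n := by
      intro u hu
      simp only [hUdef, Finset.mem_image] at hu
      obtain ⟨m, _, rfl⟩ := hu
      simp [m.isLt]
    have hsumU : ∑ u ∈ U, bN u = ∑ m ∈ N, b m := by
      rw [hUdef, Finset.sum_image (by intro x _ y _ h; exact Fin.ext h)]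
      apply Finset.sum_congr rfl
      intro m _
      simp [hbN, m.isLt]
    have hkey := key n bN hcondN U hUsub
    rw [← hsumU]
    refine le_trans ?_ hkey
    apply Finset.card_le_card_of_injOn (fun x => ((x.1.1 : ℕ), (x.1.2 : ℕ)))
    · intro x hx
      simp only [Finset.mem_coe, Finset.mem_filter, Finset.mem_product, Finset.mem_range]
      refine ⟨⟨x.1.1.isLt, x.1.2.isLt⟩, x.2, ?_⟩
      intro m hm1 hm2
      have hmn : m < n := by
        have := x.1.2.isLt
        omega
      have hmem : (⟨m, hmn⟩ : Fin n) ∈ itv x := by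
        simp only [hitv, Finset.mem_filter, Finset.mem_univ, true_and]
        exact ⟨hm1, hm2⟩
      have : (⟨m, hmn⟩ : Fin n) ∈ N := Finset.mem_biUnion.mpr ⟨x, hx, hmem⟩
      simp only [hUdef, Finset.mem_image]
      exact ⟨⟨m, hmn⟩, this, rfl⟩
    · rintro ⟨⟨x1, x2⟩, hx⟩ _ ⟨⟨y1, y2⟩, hy⟩ _ h
      simp only [Prod.mk.injEq] at h
      exact Subtype.ext (Prod.ext (Fin.ext h.1) (Fin.ext h.2))
  obtain ⟨f, hfinj, hft⟩ := (Finset.all_card_le_biUnion_card_iff_exists_injective ts).mp hhall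
  have hfmem : ∀ x : ι, (f x).1 ∈ itv x ∧ (f x).2 < b ((f x).1) := by
    intro x
    have := hft x
    simp only [hts, Finset.mem_biUnion] at this
    obtain ⟨m, hm, hfm⟩ := this
    simp only [hslot, Finset.mem_product, Finset.mem_singleton, Finset.mem_range] at hfm
    rw [hfm.1]
    exact ⟨hm, hfm.2⟩
  set g : Fin (n+1) × Fin (n+1) → Fin n := fun q =>
    if h : q.1 < q.2 then (f ⟨q, h⟩).1 else ⟨0, hn⟩ with hg
  refine ⟨g, ?_, ?_⟩
  · intro q hq
    have := (hfmem ⟨q, hq⟩).1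
    simp only [hitv, Finset.mem_filter, Finset.mem_univ, true_and] at this
    simpa [hg, hq] using this
  · -- counts
    set P := Finset.univ.filter (fun q : Fin (n+1) × Fin (n+1) => q.1 < q.2) with hP
    have hcount_le : ∀ m : Fin n, (P.filter (fun q => g q = m)).card ≤ b m := by
      intro m
      rw [← Finset.card_range (b m)]
      apply Finset.card_le_card_of_injOn
        (f := fun q => if h : q.1 < q.2 then (f ⟨q, h⟩).2 else 0) (t := Finset.range (b m))
      · intro q hq
        simp only [Finset.mem_coe, Finset.mem_filter, hP, Finset.mem_univ, true_and] at hq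
        obtain ⟨hlt, hgm⟩ := hq
        have h2 := (hfmem ⟨q, hlt⟩).2
        have h1 : (f ⟨q, hlt⟩).1 = m := by simpa [hg, hlt] using hgm
        simp only [dif_pos hlt, Finset.mem_coe, Finset.mem_range]
        rw [h1] at h2
        exact h2
      · intro q hq q' hq' h
        simp only [Finset.coe_filter, hP, Finset.mem_univ, true_and, Set.mem_setOf_eq,
          Finset.mem_filter] at hq hq'
        obtain ⟨hlt, hgm⟩ := hq
        obtain ⟨hlt', hgm'⟩ := hq'
        simp only [dif_pos hlt, dif_pos hlt'] at h
        have h1 : (f ⟨q, hlt⟩).1 = m := by simpa [hg, hlt] using hgm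
        have h1' : (f ⟨q', hlt'⟩).1 = m := by simpa [hg, hlt'] using hgm'
        have : f ⟨q, hlt⟩ = f ⟨q', hlt'⟩ := by
          apply Prod.ext
          · rw [h1, h1']
          · exact h
        have := hfinj this
        exact congrArg Subtype.val this
    have hPcard : P.card = (n+1).choose 2 := by
      have : P = Finset.univ.filter (fun q : Fin (n+1) × Fin (n+1) =>
          q.1 < q.2 ∧ 0 ≤ (q.1 : ℕ) ∧ (q.2 : ℕ) ≤ n) := by
        apply Finset.filter_congr
        intro q _
        simp only [iff_self_and]
        intro _
        exact ⟨Nat.zero_le _, by omega⟩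
      rw [hP] at this ⊢
      rw [this, card_finPairs n 0 n le_rfl]
      simp
    have hsum_count : ∑ m : Fin n, (P.filter (fun q => g q = m)).card = P.card := by
      rw [Finset.card_eq_sum_card_fiberwise (f := g) (t := Finset.univ)
        (fun x _ => Finset.mem_univ _)]
    intro m
    have := (Finset.sum_eq_sum_iff_of_le (s := Finset.univ)
      (f := fun m : Fin n => (P.filter (fun q => g q = m)).card) (g := b)
      (fun i _ => hcount_le i)).mp (by rw [hsum_count, hPcard, hsum])
    exact this m (Finset.mem_univ m)

lemma forward_dir (n : ℕ) (b : Fin n → ℕ) (g : Fin (n+1) × Fin (n+1) → Fin n)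
    (hrange : ∀ q : Fin (n+1) × Fin (n+1), q.1 < q.2 →
      (q.1 : ℕ) ≤ (g q : ℕ) ∧ ((g q) : ℕ) < (q.2 : ℕ))
    (hcount : ∀ m : Fin n, ((Finset.univ.filter (fun q : Fin (n+1) × Fin (n+1) => q.1 < q.2)).filter
      (fun q => g q = m)).card = b m) :
    ∀ s t : Fin n, s ≤ t → ((t : ℕ) - (s : ℕ) + 2).choose 2 ≤
      ∑ j ∈ Finset.univ.filter (fun j : Fin n => s ≤ j ∧ j ≤ t), b j := by
  classical
  intro s t hst
  set P := Finset.univ.filter (fun q : Fin (n+1) × Fin (n+1) => q.1 < q.2) with hP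
  set J := Finset.univ.filter (fun j : Fin n => s ≤ j ∧ j ≤ t) with hJ
  have h1 : ∑ j ∈ J, b j = (P.filter (fun q => g q ∈ J)).card := by
    rw [Finset.card_eq_sum_card_fiberwise (f := g) (s := P.filter (fun q => g q ∈ J)) (t := J)
      (fun x hx => (Finset.mem_filter.mp hx).2)]
    apply Finset.sum_congr rfl
    intro j hj
    rw [← hcount j]
    congr 1
    rw [hP, Finset.filter_filter, Finset.filter_filter, Finset.filter_filter]
    apply Finset.filter_congr
    intro q _
    show _ ↔ _
    have himp : g q = j → g q ∈ J := fun h => h ▸ hj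
    tauto
  have h2 : Finset.univ.filter (fun q : Fin (n+1) × Fin (n+1) =>
      q.1 < q.2 ∧ (s : ℕ) ≤ (q.1 : ℕ) ∧ (q.2 : ℕ) ≤ (t : ℕ) + 1) ⊆ P.filter (fun q => g q ∈ J) := by
    intro q hq
    simp only [Finset.mem_filter, Finset.mem_univ, true_and] at hq
    obtain ⟨hlt, hs, ht⟩ := hq
    have hr := hrange q hlt
    simp only [hP, hJ, Finset.mem_filter, Finset.mem_univ, true_and]
    refine ⟨hlt, ?_, ?_⟩
    · rw [Fin.le_def]; omega
    · rw [Fin.le_def]; omega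
  have h3 := card_finPairs n (s : ℕ) ((t : ℕ) + 1) (by have := t.isLt; omega)
  have h4 : ((t : ℕ) + 1 + 1 - (s : ℕ)) = (t : ℕ) - (s : ℕ) + 2 := by
    have : (s : ℕ) ≤ (t : ℕ) := hst
    omega
  rw [h1]
  calc ((t : ℕ) - (s : ℕ) + 2).choose 2 = _ := by rw [← h4, ← h3]
    _ ≤ (P.filter (fun q => g q ∈ J)).card := Finset.card_le_card h2

lemma prod_X {α τ : Type*} (s : Finset α) (f : α → τ) :
    ∏ a ∈ s, (MvPolynomial.X (f a) : MvPolynomial τ ℤ) =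
      MvPolynomial.monomial (∑ a ∈ s, Finsupp.single (f a) 1) 1 := by
  classical
  induction s using Finset.induction with
  | empty => simp
  | @insert a s h ih =>
      rw [Finset.prod_insert h, Finset.sum_insert h, ih,
        show (MvPolynomial.X (f _) : MvPolynomial τ ℤ) =
          MvPolynomial.monomial (Finsupp.single (f _) 1) 1 from rfl,
        MvPolynomial.monomial_mul, mul_one]

lemma coeff_card (n : ℕ) (hn : 1 ≤ n) (b : Fin n → ℕ) :
    MvPolynomial.coeff (Finsupp.equivFunOnFinite.symm b)
      (∏ q ∈ Finset.univ.filter (fun q : Fin (n+1) × Fin (n+1) => q.1 < q.2),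
        ∑ l ∈ Finset.univ.filter
            (fun l : Fin n => (q.1 : ℕ) ≤ (l : ℕ) ∧ (l : ℕ) < (q.2 : ℕ)),
          (MvPolynomial.X l : MvPolynomial (Fin n) ℤ)) ≠ 0 ↔
    ∃ g : Fin (n+1) × Fin (n+1) → Fin n,
      (∀ q : Fin (n+1) × Fin (n+1), q.1 < q.2 →
        (q.1 : ℕ) ≤ (g q : ℕ) ∧ ((g q) : ℕ) < (q.2 : ℕ)) ∧
      (∀ m : Fin n, ((Finset.univ.filter (fun q : Fin (n+1) × Fin (n+1) => q.1 < q.2)).filter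
        (fun q => g q = m)).card = b m) := by
  classical
  set P := Finset.univ.filter (fun q : Fin (n+1) × Fin (n+1) => q.1 < q.2) with hP
  set T : Fin (n+1) × Fin (n+1) → Finset (Fin n) := fun q => Finset.univ.filter
    (fun l : Fin n => (q.1 : ℕ) ≤ (l : ℕ) ∧ (l : ℕ) < (q.2 : ℕ)) with hT
  set B := (Finsupp.equivFunOnFinite.symm b : Fin n →₀ ℕ) with hB
  have hBapp : ∀ m, B m = b m := fun m => rfl
  -- counting helper
  have hwcount : ∀ g : Fin (n+1) × Fin (n+1) → Fin n,
      ((B = ∑ q ∈ P, Finsupp.single (g q) 1) ↔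
        ∀ m : Fin n, (P.filter (fun q => g q = m)).card = b m) := by
    intro g
    rw [Finsupp.ext_iff]
    constructor
    · intro h m
      have := h m
      rw [hBapp, Finsupp.finset_sum_apply] at this
      rw [this, Finset.card_filter]
      apply Finset.sum_congr rfl
      intro q _
      rw [Finsupp.single_apply]
    · intro h m
      rw [hBapp, Finsupp.finset_sum_apply, ← h m, Finset.card_filter]
      apply Finset.sum_congr rfl
      intro q _
      rw [Finsupp.single_apply]
  rw [Finset.prod_sum]
  have hterm : ∀ p ∈ P.pi T, (∏ x ∈ P.attach,
      (MvPolynomial.X (p x.1 x.2) : MvPolynomial (Fin n) ℤ)) =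
      MvPolynomial.monomial (∑ x ∈ P.attach, Finsupp.single (p x.1 x.2) 1) 1 := by
    intro p _
    exact prod_X P.attach (fun x => p x.1 x.2)
  rw [Finset.sum_congr rfl hterm, MvPolynomial.coeff_sum]
  simp only [MvPolynomial.coeff_monomial]
  rw [Finset.sum_boole]
  rw [ne_eq, Int.natCast_eq_zero, ← ne_eq, Finset.card_ne_zero, Finset.filter_nonempty_iff]
  constructor
  · rintro ⟨p, hp, hw⟩
    set g : Fin (n+1) × Fin (n+1) → Fin n :=
      fun q => if h : q ∈ P then p q h else (⟨0, hn⟩ : Fin n) with hgdef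
    have hgT : ∀ q (h : q ∈ P), g q = p q h := fun q h => dif_pos h
    have hwg : (∑ x ∈ P.attach, Finsupp.single (p x.1 x.2) 1) =
        ∑ q ∈ P, Finsupp.single (g q) 1 := by
      rw [← Finset.sum_attach P (fun q => Finsupp.single (g q) 1)]
      apply Finset.sum_congr rfl
      intro x _
      rw [hgT x.1 x.2]
    refine ⟨g, ?_, (hwcount g).mp ?_⟩
    · intro q hq
      have hqP : q ∈ P := by simp [hP, hq]
      have hmem := (Finset.mem_pi.mp hp) q hqP
      rw [← hgT q hqP] at hmem
      simpa [hT] using hmem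
    · rw [← hw, hwg]
  · rintro ⟨g, hg1, hg2⟩
    refine ⟨fun q _ => g q, ?_, ?_⟩
    · rw [Finset.mem_pi]
      intro q hq
      have := hg1 q (by simpa [hP] using hq)
      simp only [hT, Finset.mem_filter, Finset.mem_univ, true_and]
      exact this
    · rw [Finset.sum_attach P (fun q => Finsupp.single (g q) 1)]
      exact ((hwcount g).mpr hg2).symm

open scoped Classical

theorem perfect_matching_coeff_iff (k : ℕ) (hk : 1 ≤ k)
    (b : Fin (k - 1) → ℕ) (hsum : ∑ i, b i = k.choose 2) :
    MvPolynomial.coeff (Finsupp.equivFunOnFinite.symm b)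
      (∏ q ∈ Finset.univ.filter (fun q : Fin k × Fin k => q.1 < q.2),
        ∑ l ∈ Finset.univ.filter
            (fun l : Fin (k - 1) => (q.1 : ℕ) ≤ (l : ℕ) ∧ (l : ℕ) < (q.2 : ℕ)),
          (MvPolynomial.X l : MvPolynomial (Fin (k - 1)) ℤ)) ≠ 0 ↔
    ∀ s t : Fin (k - 1), s ≤ t →
      ((t : ℕ) - (s : ℕ) + 2).choose 2 ≤
        ∑ j ∈ Finset.univ.filter (fun j : Fin (k - 1) => s ≤ j ∧ j ≤ t), b j := by
  obtain ⟨n, rfl⟩ : ∃ n, k = n + 1 := ⟨k - 1, by omega⟩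
  rcases Nat.eq_zero_or_pos n with rfl | hn
  · constructor
    · intro _ s t _
      exact s.elim0
    · intro _
      have hPempty : (Finset.univ.filter (fun q : Fin (0+1) × Fin (0+1) => q.1 < q.2)) = ∅ := by
        apply Finset.filter_false_of_mem
        intro q _
        rw [Fin.lt_def]
        have h1 := q.1.isLt
        have h2 := q.2.isLt
        omega
      rw [hPempty, Finset.prod_empty]
      have hB : (Finsupp.equivFunOnFinite.symm b : Fin (0+1-1) →₀ ℕ) = 0 :=
        Finsupp.ext fun a => a.elim0
      rw [hB]
      simp
  · constructor
    · intro hne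
      obtain ⟨g, hg1, hg2⟩ := (coeff_card n hn b).mp hne
      exact forward_dir n b g hg1 hg2
    · intro hcond
      obtain ⟨g, hg1, hg2⟩ := exists_g n hn b hsum hcond
      exact (coeff_card n hn b).mpr ⟨g, hg1, hg2⟩
end

section
/- Let k ≥ 1 and b = (b_1,...,b_{k-1}) a sequence of nonnegative integers that is admissible, i.e., for all distinct integers a_1,...,a_k and all sets of integers M_1,...,M_{k-1} with |M_i| = b_i there is a permutation π ∈ S_k with a_{π(1)}+...+a_{π(i)} ∉ M_i for all i. Then for every subset P ⊆ {1,...,k-1}, Σ_{p ∈ P} b_p ≤ K(P), where K(P) is the number of pairs (i,j) with 1 ≤ i ≤ j ≤ k-1 for which some p ∈ P satisfies i ≤ p ≤ j. -/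
open Finset

lemma aux_low (T : Finset ℕ) : ∑ i ∈ Finset.range T.card, (i : ℤ) ≤ ∑ t ∈ T, (t : ℤ) := by
  have H : ∀ c (T : Finset ℕ), T.card = c → ∑ i ∈ Finset.range T.card, (i : ℤ) ≤ ∑ t ∈ T, (t : ℤ) := by
    intro c
    induction c with
    | zero =>
      intro T h
      rw [Finset.card_eq_zero] at h; subst h; simp
    | succ c IH =>
      intro T h
      have hne : T.Nonempty := by
        rw [← Finset.card_pos, h]; omega
      set m := T.max' hne with hm
      have hmem : m ∈ T := T.max'_mem hne
      have hT' : (T.erase m).card = c := by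
        rw [Finset.card_erase_of_mem hmem, h]; omega
      have hsub : T ⊆ Finset.range (m + 1) := by
        intro t ht
        simp only [Finset.mem_range]
        exact Nat.lt_succ_of_le (T.le_max' t ht)
      have hcm : c + 1 ≤ m + 1 := by
        calc c + 1 = T.card := h.symm
        _ ≤ (Finset.range (m+1)).card := Finset.card_le_card hsub
        _ = m + 1 := Finset.card_range _
      have htail := IH (T.erase m) hT'
      rw [hT'] at htail
      have hsum : ∑ t ∈ T.erase m, (t : ℤ) + (m : ℤ) = ∑ t ∈ T, (t : ℤ) :=
        Finset.sum_erase_add T _ hmem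
      rw [h, Finset.sum_range_succ]
      have : (c : ℤ) ≤ (m : ℤ) := by exact_mod_cast Nat.le_of_succ_le_succ hcm
      linarith
  exact H T.card T rfl

lemma aux_gauss (c : ℕ) : 2 * ∑ i ∈ Finset.range c, (i : ℤ) = c * (c - 1) := by
  induction c with
  | zero => simp
  | succ c IH =>
    rw [Finset.sum_range_succ]
    push_cast
    push_cast at IH
    linarith

def Lfun (c : ℕ) : ℤ := (∑ i ∈ Finset.range c, (i : ℤ)) + c

lemma aux_L_add (x y : ℕ) : Lfun (x + y) = Lfun x + Lfun y + x * y := by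
  have h1 := aux_gauss (x + y)
  have h2 := aux_gauss x
  have h3 := aux_gauss y
  unfold Lfun
  push_cast at h1 h2 h3 ⊢
  nlinarith [h1, h2, h3]

lemma aux_lb {α : Type*} [DecidableEq α] (t : Finset α) (f : α → ℕ)
    (hinj : ∀ x ∈ t, ∀ y ∈ t, f x = f y → x = y) :
    Lfun t.card ≤ ∑ j ∈ t, ((f j : ℤ) + 1) := by
  have himg : ∑ v ∈ t.image f, ((v : ℤ) + 1) = ∑ j ∈ t, ((f j : ℤ) + 1) :=
    Finset.sum_image hinj
  have hcard : (t.image f).card = t.card := Finset.card_image_of_injOn hinj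
  rw [← himg, Finset.sum_add_distrib, Finset.sum_const, hcard]
  have := aux_low (t.image f)
  rw [hcard] at this
  unfold Lfun
  simp only [nsmul_eq_mul, mul_one]
  linarith

lemma aux_ub {α : Type*} [DecidableEq α] (t : Finset α) (f : α → ℕ)
    (hinj : ∀ x ∈ t, ∀ y ∈ t, f x = f y → x = y) (N : ℕ) (hN : ∀ j ∈ t, f j < N) :
    ∑ j ∈ t, ((f j : ℤ) + 1) ≤ Lfun t.card + (t.card : ℤ) * ((N : ℤ) - t.card) := by
  have himg : ∑ v ∈ t.image f, ((v : ℤ) + 1) = ∑ j ∈ t, ((f j : ℤ) + 1) :=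
    Finset.sum_image hinj
  have hcard : (t.image f).card = t.card := Finset.card_image_of_injOn hinj
  set T := t.image f with hT
  have hsub : T ⊆ Finset.range N := by
    intro v hv
    simp only [hT, Finset.mem_image] at hv
    obtain ⟨j, hj, rfl⟩ := hv
    exact Finset.mem_range.mpr (hN j hj)
  have hc_le : t.card ≤ N := by
    rw [← hcard]
    calc T.card ≤ (Finset.range N).card := Finset.card_le_card hsub
    _ = N := Finset.card_range _
  have hdiffcard : (Finset.range N \ T).card = N - t.card := by
    rw [Finset.card_sdiff_of_subset hsub, Finset.card_range, hcard]
  have hsplit : ∑ v ∈ Finset.range N \ T, (v : ℤ) = ∑ v ∈ Finset.range N, (v : ℤ) - ∑ v ∈ T, (v : ℤ) :=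
    Finset.sum_sdiff_eq_sub hsub
  have hlow := aux_low (Finset.range N \ T)
  rw [hdiffcard] at hlow
  have h1 := aux_gauss N
  have h2 := aux_gauss t.card
  have h3 := aux_gauss (N - t.card)
  have hcast : ((N - t.card : ℕ) : ℤ) = (N : ℤ) - t.card := Nat.cast_sub hc_le
  rw [hcast] at h3
  rw [← himg, Finset.sum_add_distrib, Finset.sum_const, hcard]
  unfold Lfun
  simp only [nsmul_eq_mul, mul_one]
  nlinarith [hlow, hsplit, h1, h2, h3]

theorem grasshopper_admissible_matching (k : ℕ) (hk : 1 ≤ k)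
    (b : Fin (k - 1) → ℕ)
    (hadm : ∀ a : Fin k → ℤ, Function.Injective a →
      ∀ M : Fin (k - 1) → Finset ℤ, (∀ i, (M i).card = b i) →
        ∃ π : Equiv.Perm (Fin k), ∀ i : Fin (k - 1),
          (∑ j ∈ Finset.univ.filter (fun j : Fin k => (j : ℕ) ≤ (i : ℕ)), a (π j)) ∉ M i) :
    ∀ P : Finset (Fin (k - 1)),
      ∑ p ∈ P, b p ≤
        (Finset.univ.filter (fun q : Fin (k - 1) × Fin (k - 1) =>
          q.1 ≤ q.2 ∧ ∃ p ∈ P, q.1 ≤ p ∧ p ≤ q.2)).card := by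
  intro P
  by_contra hK
  push_neg at hK
  obtain ⟨n, rfl⟩ : ∃ n, k = n + 1 := ⟨k - 1, (Nat.succ_pred_eq_of_pos hk).symm⟩
  have hP : P.Nonempty := by
    rcases P.eq_empty_or_nonempty with h | h
    · subst h; simp at hK
    · exact h
  classical
  set a : Fin (n + 1) → ℤ := fun j => ((j : ℕ) : ℤ) + 1 with ha_def
  have ha : Function.Injective a := by
    intro x y hxy
    simp only [ha_def, add_left_inj, Nat.cast_inj] at hxy
    exact Fin.ext hxy
  set A : Fin n → ℕ := fun p =>
    (Finset.univ.filter (fun q : Fin n × Fin n =>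
      q.1 ≤ q.2 ∧ ∃ r ∈ P, r ≤ p ∧ q.1 ≤ r ∧ r ≤ q.2)).card with hA_def
  set B : Fin n → ℤ := fun p => ∑ r ∈ P.filter (fun r => r ≤ p), (b r : ℤ) with hB_def
  set lo : Fin n → ℤ := fun i => Lfun ((i : ℕ) + 1) + (A i : ℤ) - B i with hlo_def
  set M : Fin n → Finset ℤ := fun i =>
    if i ∈ P then Finset.Ioc (lo i) (lo i + (b i : ℤ))
    else Finset.Ioc (-(b i : ℤ) - 1) (-1) with hM_def
  have hMcard : ∀ i, (M i).card = b i := by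
    intro i
    simp only [hM_def]
    by_cases h : i ∈ P
    · rw [if_pos h, Int.card_Ioc]; omega
    · rw [if_neg h, Int.card_Ioc]; omega
  obtain ⟨π, hπ⟩ := hadm a ha M hMcard
  have hfil : ∀ p : Fin n, Finset.univ.filter (fun j : Fin (n + 1) => (j : ℕ) ≤ (p : ℕ))
      = Finset.Iic (Fin.castSucc p) := by
    intro p
    ext j
    simp [Fin.le_def]
  simp only [hfil] at hπ
  -- prefix sums lower bound
  have hinjval : ∀ (t : Finset (Fin (n+1))), ∀ x ∈ t, ∀ y ∈ t,
      (fun j => ((π j : Fin (n+1)) : ℕ)) x = (fun j => ((π j : Fin (n+1)) : ℕ)) y → x = y := by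
    intro t x _ y _ h
    exact π.injective (Fin.val_injective h)
  have hIiccard : ∀ p : Fin n, (Finset.Iic (Fin.castSucc p)).card = (p : ℕ) + 1 := by
    intro p
    rw [Fin.card_Iic]
    simp
  have hSlb : ∀ p : Fin n, Lfun ((p : ℕ) + 1) ≤ ∑ j ∈ Finset.Iic (Fin.castSucc p), a (π j) := by
    intro p
    have h := aux_lb (Finset.Iic (Fin.castSucc p)) (fun j => ((π j : Fin (n+1)) : ℕ))
      (hinjval _)
    rw [hIiccard p] at h
    simpa only [ha_def] using h
  -- prefix sums upper bound
  have hSub : ∀ p : Fin n, ∑ j ∈ Finset.Iic (Fin.castSucc p), a (π j)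
      ≤ Lfun ((p : ℕ) + 1) + (((p : ℕ) : ℤ) + 1) * ((n : ℤ) - (p : ℕ)) := by
    intro p
    have h := aux_ub (Finset.Iic (Fin.castSucc p)) (fun j => ((π j : Fin (n+1)) : ℕ))
      (hinjval _) (n + 1) (fun j _ => (π j).isLt)
    rw [hIiccard p] at h
    simp only [ha_def]
    push_cast at h ⊢
    linarith
  -- counting lemmas
  have hAleast : ∀ p ∈ P, (∀ r ∈ P, ¬ r < p) → A p = ((p : ℕ) + 1) * (n - (p : ℕ)) := by
    intro p hp hleast
    simp only [hA_def]
    have hset : Finset.univ.filter (fun q : Fin n × Fin n =>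
        q.1 ≤ q.2 ∧ ∃ r ∈ P, r ≤ p ∧ q.1 ≤ r ∧ r ≤ q.2)
        = Finset.Iic p ×ˢ Finset.Ici p := by
      ext q
      simp only [Finset.mem_filter, Finset.mem_univ, true_and, Finset.mem_product,
        Finset.mem_Iic, Finset.mem_Ici]
      constructor
      · rintro ⟨_, r, hr, hrp, hqr, hrq⟩
        have hrp' : r = p := le_antisymm hrp (not_lt.mp (hleast r hr))
        subst hrp'
        exact ⟨hqr, hrq⟩
      · rintro ⟨h1, h2⟩
        exact ⟨le_trans h1 h2, p, hp, le_refl p, h1, h2⟩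
    rw [hset, Finset.card_product, Fin.card_Iic, Fin.card_Ici]
    simp
  have hAstep : ∀ p' p : Fin n, p' ∈ P → p ∈ P → p' < p → (∀ r ∈ P, r < p → r ≤ p') →
      A p = A p' + ((p : ℕ) - (p' : ℕ)) * (n - (p : ℕ)) := by
    intro p' p hp' hp hlt hmaxb
    simp only [hA_def]
    have hset : Finset.univ.filter (fun q : Fin n × Fin n =>
        q.1 ≤ q.2 ∧ ∃ r ∈ P, r ≤ p ∧ q.1 ≤ r ∧ r ≤ q.2)
        = Finset.univ.filter (fun q : Fin n × Fin n =>
            q.1 ≤ q.2 ∧ ∃ r ∈ P, r ≤ p' ∧ q.1 ≤ r ∧ r ≤ q.2)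
          ∪ (Finset.Ioc p' p ×ˢ Finset.Ici p) := by
      ext q
      simp only [Finset.mem_filter, Finset.mem_univ, true_and, Finset.mem_union,
        Finset.mem_product, Finset.mem_Ioc, Finset.mem_Ici]
      constructor
      · rintro ⟨hq, r, hr, hrp, hqr, hrq⟩
        by_cases hr' : r ≤ p'
        · exact Or.inl ⟨hq, r, hr, hr', hqr, hrq⟩
        · have hrP : r = p := by
            rcases lt_or_eq_of_le hrp with h | h
            · exact absurd (hmaxb r hr h) hr'
            · exact h
          subst hrP
          by_cases hq1 : q.1 ≤ p'
          · exact Or.inl ⟨hq, p', hp', le_refl p', hq1, le_trans (le_of_lt hlt) hrq⟩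
          · exact Or.inr ⟨⟨not_le.mp hq1, hqr⟩, hrq⟩
      · rintro (⟨hq, r, hr, hrp, hqr, hrq⟩ | ⟨⟨h1, h2⟩, h3⟩)
        · exact ⟨hq, r, hr, le_trans hrp (le_of_lt hlt), hqr, hrq⟩
        · exact ⟨le_trans h2 h3, p, hp, le_refl p, h2, h3⟩
    have hdisj : Disjoint
        (Finset.univ.filter (fun q : Fin n × Fin n =>
            q.1 ≤ q.2 ∧ ∃ r ∈ P, r ≤ p' ∧ q.1 ≤ r ∧ r ≤ q.2))
        (Finset.Ioc p' p ×ˢ Finset.Ici p) := by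
      rw [Finset.disjoint_left]
      rintro q hq1 hq2
      simp only [Finset.mem_filter, Finset.mem_univ, true_and] at hq1
      simp only [Finset.mem_product, Finset.mem_Ioc, Finset.mem_Ici] at hq2
      obtain ⟨_, r, _, hrp, hqr, _⟩ := hq1
      exact absurd (le_trans hqr hrp) (not_le.mpr hq2.1.1)
    rw [hset, Finset.card_union_of_disjoint hdisj, Finset.card_product,
      Fin.card_Ioc, Fin.card_Ici]
  have hBleast : ∀ p : Fin n, p ∈ P → (∀ r ∈ P, ¬ r < p) → B p = (b p : ℤ) := by
    intro p hp hleast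
    simp only [hB_def]
    have hset : P.filter (fun r => r ≤ p) = {p} := by
      ext r
      simp only [Finset.mem_filter, Finset.mem_singleton]
      constructor
      · rintro ⟨hr, hrp⟩
        exact le_antisymm hrp (not_lt.mp (hleast r hr))
      · intro h
        subst h
        exact ⟨hp, le_refl _⟩
    rw [hset, Finset.sum_singleton]
  have hBstep : ∀ p' p : Fin n, p' ∈ P → p ∈ P → p' < p → (∀ r ∈ P, r < p → r ≤ p') →
      B p = B p' + (b p : ℤ) := by
    intro p' p hp' hp hlt hmaxb
    simp only [hB_def]
    have hset : P.filter (fun r => r ≤ p) = insert p (P.filter (fun r => r ≤ p')) := by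
      ext r
      simp only [Finset.mem_filter, Finset.mem_insert]
      constructor
      · rintro ⟨hr, hrp⟩
        rcases lt_or_eq_of_le hrp with h | h
        · exact Or.inr ⟨hr, hmaxb r hr h⟩
        · exact Or.inl h
      · rintro (h | ⟨hr, hrp⟩)
        · subst h
          exact ⟨hp, le_refl _⟩
        · exact ⟨hr, le_trans hrp (le_of_lt hlt)⟩
    have hnotmem : p ∉ P.filter (fun r => r ≤ p') := by
      simp only [Finset.mem_filter]
      rintro ⟨_, hle⟩
      exact absurd hle (not_le.mpr hlt)
    rw [hset, Finset.sum_insert hnotmem]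
    ring
  -- key induction
  have key : ∀ t : ℕ, ∀ p : Fin n, p ∈ P → (p : ℕ) = t →
      ∑ j ∈ Finset.Iic (Fin.castSucc p), a (π j) ≤ lo p := by
    intro t
    induction t using Nat.strong_induction_on with
    | _ t IH =>
    intro p hp hpt
    have hnot := hπ p
    simp only [hM_def, if_pos hp, Finset.mem_Ioc] at hnot
    push_neg at hnot
    have hpn : (p : ℕ) ≤ n := by have := p.isLt; omega
    suffices hup : ∑ j ∈ Finset.Iic (Fin.castSucc p), a (π j) ≤ lo p + (b p : ℤ) by
      by_contra hc
      push_neg at hc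
      have := hnot hc
      linarith
    by_cases hex : ∃ r ∈ P, r < p
    · -- chain case
      have hne : (P.filter (fun r => r < p)).Nonempty := by
        obtain ⟨r, hr, hrp⟩ := hex
        exact ⟨r, Finset.mem_filter.mpr ⟨hr, hrp⟩⟩
      set p' := (P.filter (fun r => r < p)).max' hne with hp'_def
      have hp'f : p' ∈ P.filter (fun r => r < p) := Finset.max'_mem _ hne
      have hp'P : p' ∈ P := (Finset.mem_filter.mp hp'f).1
      have hp'lt : p' < p := (Finset.mem_filter.mp hp'f).2
      have hmaxb : ∀ r ∈ P, r < p → r ≤ p' := by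
        intro r hr hrp
        rw [hp'_def]
        refine Finset.le_max' (P.filter (fun r => r < p)) r ?_
        simp only [Finset.mem_filter]
        exact ⟨hr, hrp⟩
      have hvlt : (p' : ℕ) < (p : ℕ) := hp'lt
      have hIH := IH (p' : ℕ) (by rw [← hpt]; exact hvlt) p' hp'P rfl
      obtain ⟨d, hdpos, hd⟩ : ∃ d : ℕ, 0 < d ∧ (p : ℕ) = (p' : ℕ) + d :=
        ⟨(p : ℕ) - (p' : ℕ), by omega, by omega⟩
      have hcsle : Fin.castSucc p' ≤ Fin.castSucc p :=
        Fin.castSucc_le_castSucc_iff.mpr (le_of_lt hp'lt)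
      have hsplit : Finset.Iic (Fin.castSucc p)
          = Finset.Iic (Fin.castSucc p') ∪ Finset.Ioc (Fin.castSucc p') (Fin.castSucc p) := by
        ext x
        simp only [Finset.mem_union, Finset.mem_Iic, Finset.mem_Ioc]
        constructor
        · intro hx
          rcases le_or_gt x (Fin.castSucc p') with h | h
          · exact Or.inl h
          · exact Or.inr ⟨h, hx⟩
        · rintro (h | ⟨_, h⟩)
          · exact le_trans h hcsle
          · exact h
      have hdisj : Disjoint (Finset.Iic (Fin.castSucc p'))
          (Finset.Ioc (Fin.castSucc p') (Fin.castSucc p)) := by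
        rw [Finset.disjoint_left]
        intro x hx1 hx2
        rw [Finset.mem_Iic] at hx1
        rw [Finset.mem_Ioc] at hx2
        exact absurd hx1 (not_le.mpr hx2.1)
      have hsum : ∑ j ∈ Finset.Iic (Fin.castSucc p), a (π j)
          = ∑ j ∈ Finset.Iic (Fin.castSucc p'), a (π j)
            + ∑ j ∈ Finset.Ioc (Fin.castSucc p') (Fin.castSucc p), a (π j) := by
        rw [hsplit, Finset.sum_union hdisj]
      have hioccard : (Finset.Ioc (Fin.castSucc p') (Fin.castSucc p)).card = d := by
        rw [Fin.card_Ioc]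
        simp
        omega
      have hextra := aux_ub (Finset.Ioc (Fin.castSucc p') (Fin.castSucc p))
        (fun j => ((π j : Fin (n+1)) : ℕ)) (hinjval _) (n+1) (fun j _ => (π j).isLt)
      rw [hioccard] at hextra
      have hextra2 : ∑ j ∈ Finset.Ioc (Fin.castSucc p') (Fin.castSucc p), a (π j)
          ≤ Lfun d + (d : ℤ) * (((n+1 : ℕ) : ℤ) - (d : ℤ)) := by
        simpa only [ha_def] using hextra
      have hAz := hAstep p' p hp'P hp hp'lt hmaxb
      have hBz := hBstep p' p hp'P hp hp'lt hmaxb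
      have hsub : (p : ℕ) - (p' : ℕ) = d := by omega
      rw [hsub] at hAz
      have hez : (((n - (p : ℕ)) : ℕ) : ℤ) = (n : ℤ) - ((p : ℕ) : ℤ) := Nat.cast_sub hpn
      have hAzz : ((A p : ℕ) : ℤ) = ((A p' : ℕ) : ℤ) + (d : ℤ) * ((n : ℤ) - ((p : ℕ) : ℤ)) := by
        rw [hAz]
        push_cast [hez]
        ring
      have hL := aux_L_add ((p' : ℕ) + 1) d
      have heq : (p' : ℕ) + 1 + d = (p : ℕ) + 1 := by omega
      rw [heq] at hL
      have hdz : ((p : ℕ) : ℤ) = ((p' : ℕ) : ℤ) + (d : ℤ) := by exact_mod_cast hd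
      simp only [hlo_def] at hIH ⊢
      calc ∑ j ∈ Finset.Iic (Fin.castSucc p), a (π j)
          = ∑ j ∈ Finset.Iic (Fin.castSucc p'), a (π j)
            + ∑ j ∈ Finset.Ioc (Fin.castSucc p') (Fin.castSucc p), a (π j) := hsum
        _ ≤ (Lfun ((p' : ℕ) + 1) + ((A p' : ℕ) : ℤ) - B p')
            + (Lfun d + (d : ℤ) * (((n+1 : ℕ) : ℤ) - (d : ℤ))) := add_le_add hIH hextra2
        _ = Lfun ((p : ℕ) + 1) + ((A p : ℕ) : ℤ) - B p + (b p : ℤ) := by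
            rw [hL, hAzz, hBz]
            push_cast
            rw [hdz]
            ring
    · -- least case
      have hleast : ∀ r ∈ P, ¬ r < p := by
        intro r hr hrp
        exact hex ⟨r, hr, hrp⟩
      have hA0 := hAleast p hp hleast
      have hB0 := hBleast p hp hleast
      have hupS := hSub p
      have hez : (((n - (p : ℕ)) : ℕ) : ℤ) = (n : ℤ) - ((p : ℕ) : ℤ) := Nat.cast_sub hpn
      have hAzz : ((A p : ℕ) : ℤ) = (((p : ℕ) : ℤ) + 1) * ((n : ℤ) - ((p : ℕ) : ℤ)) := by
        rw [hA0]
        push_cast [hez]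
        ring
      simp only [hlo_def]
      rw [hB0, hAzz]
      linarith
  -- final contradiction
  set pmax := P.max' hP with hpmax_def
  have hmem : pmax ∈ P := P.max'_mem hP
  have hfinal := key (pmax : ℕ) pmax hmem rfl
  have hlow := hSlb pmax
  have hAmax : A pmax = (Finset.univ.filter (fun q : Fin (n + 1 - 1) × Fin (n + 1 - 1) =>
      q.1 ≤ q.2 ∧ ∃ p ∈ P, q.1 ≤ p ∧ p ≤ q.2)).card := by
    simp only [hA_def]
    congr 1
    ext q
    simp only [Finset.mem_filter, Finset.mem_univ, true_and]
    constructor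
    · rintro ⟨h1, r, hr, _, h2, h3⟩
      exact ⟨h1, r, hr, h2, h3⟩
    · rintro ⟨h1, r, hr, h2, h3⟩
      exact ⟨h1, r, hr, P.le_max' r hr, h2, h3⟩
  have hBmax : B pmax = ∑ p ∈ P, (b p : ℤ) := by
    simp only [hB_def]
    rw [Finset.filter_true_of_mem (fun r hr => P.le_max' r hr)]
    rfl
  have hKz : ((Finset.univ.filter (fun q : Fin (n + 1 - 1) × Fin (n + 1 - 1) =>
      q.1 ≤ q.2 ∧ ∃ p ∈ P, q.1 ≤ p ∧ p ≤ q.2)).card : ℤ) < ∑ p ∈ P, (b p : ℤ) := by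
    exact_mod_cast hK
  rw [hlo_def] at hfinal
  simp only at hfinal
  rw [hAmax, hBmax] at hfinal
  linarith
end

section
/- For integers 1 ≤ v ≤ k-1, the sequence b = (1, 2, ..., v-1, v(k-v), k-v-1, k-v-2, ..., 2, 1) of length k-1 satisfies Σ_{j=s}^{t} b_j ≥ binom(t-s+2, 2) for all 1 ≤ s ≤ t ≤ k-1 and Σ_j b_j = binom(k,2); i.e., it is a perfect matching sequence. -/
private lemma pms_split (f : ℕ → ℕ) {s v t : ℕ} (h1 : s ≤ v) (h2 : v ≤ t) :
    ∑ j ∈ Finset.Icc s t, f j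
      = ∑ j ∈ Finset.Icc s v, f j + ∑ j ∈ Finset.Icc (v + 1) t, f j := by
  rw [← Finset.sum_union]
  · congr 1
    ext x
    simp only [Finset.mem_union, Finset.mem_Icc]
    omega
  · rw [Finset.disjoint_left]
    intro a ha hb
    simp only [Finset.mem_Icc] at ha hb
    omega

private lemma pms_L1 (s t : ℕ) (h : s ≤ t) :
    ∑ j ∈ Finset.Icc s t, (j - s + 1) = (t - s + 2).choose 2 := by
  induction t, h using Nat.le_induction with
  | base => simp
  | succ t ht ih =>
    rw [Finset.sum_Icc_succ_top (by omega), ih]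
    have h1 : t + 1 - s + 2 = (t - s + 2) + 1 := by omega
    rw [h1, Nat.choose_succ_succ (t - s + 2) 1, Nat.choose_one_right]
    norm_num
    omega

private lemma pms_L2 (s t : ℕ) (h : s ≤ t) :
    ∑ j ∈ Finset.Icc s t, (t + 1 - j) = (t - s + 2).choose 2 := by
  have : ∑ j ∈ Finset.Icc s t, (t + 1 - j) = ∑ j ∈ Finset.Icc s t, (j - s + 1) := by
    apply Finset.sum_nbij' (fun j => s + t - j) (fun j => s + t - j)
    all_goals
      intro a ha
      simp only [Finset.mem_Icc] at *
      omega
  rw [this, pms_L1 s t h]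

private lemma pms_two_choose (n : ℕ) : 2 * n.choose 2 = n * (n - 1) := by
  induction n with
  | zero => simp
  | succ n ih =>
    rw [Nat.choose_succ_succ, Nat.choose_one_right]
    cases n with
    | zero => simp
    | succ m => simp only [Nat.add_sub_cancel] at *; ring_nf; ring_nf at ih; omega

private lemma pms_choose_add (a c : ℕ) :
    (a + c).choose 2 = a.choose 2 + c.choose 2 + a * c := by
  have h1 := pms_two_choose (a + c)
  have h2 := pms_two_choose a
  have h3 := pms_two_choose c
  have key : (a + c) * (a + c - 1) = a * (a - 1) + c * (c - 1) + 2 * (a * c) := by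
    cases a with
    | zero => simp
    | succ a' =>
      cases c with
      | zero => simp
      | succ c' =>
        simp only [Nat.succ_sub_one]
        have : a' + 1 + (c' + 1) - 1 = a' + c' + 1 := by omega
        rw [this]; ring
  omega

theorem explicit_perfect_matching_sequence (k v : ℕ) (hv : 1 ≤ v) (hvk : v ≤ k - 1)
    (b : ℕ → ℕ)
    (hb : ∀ j, 1 ≤ j → j ≤ k - 1 →
      b j = if j < v then j else if j = v then v * (k - v) else k - j) :
    (∀ s t, 1 ≤ s → s ≤ t → t ≤ k - 1 →
        (t - s + 2).choose 2 ≤ ∑ j ∈ Finset.Icc s t, b j) ∧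
      ∑ j ∈ Finset.Icc 1 (k - 1), b j = k.choose 2 := by
  have hk : 2 ≤ k := by omega
  -- closed forms on the three regions
  have hlow : ∀ j, 1 ≤ j → j < v → b j = j := fun j h1 h2 => by
    rw [hb j h1 (by omega), if_pos h2]
  have hmid : b v = v * (k - v) := by
    rw [hb v hv hvk, if_neg (lt_irrefl v), if_pos rfl]
  have hhigh : ∀ j, v < j → j ≤ k - 1 → b j = k - j := fun j h1 h2 => by
    rw [hb j (by omega) h2, if_neg (by omega), if_neg (by omega)]
  -- sum over Icc s (v-1) when s ≤ v, with s ≥ 1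
  have hA : ∀ s, 1 ≤ s → s ≤ v → (v - s + 1).choose 2 ≤ ∑ j ∈ Finset.Icc s (v - 1), b j := by
    intro s hs hsv
    rcases eq_or_lt_of_le hsv with h | hlt
    · rw [Finset.Icc_eq_empty (by omega : ¬ s ≤ v - 1), Finset.sum_empty,
        show v - s + 1 = 1 by omega]
      simp
    · have h1 : s ≤ v - 1 := by omega
      calc (v - s + 1).choose 2 = (v - 1 - s + 2).choose 2 := by congr 1; omega
        _ = ∑ j ∈ Finset.Icc s (v - 1), (j - s + 1) := (pms_L1 s (v - 1) h1).symm
        _ ≤ ∑ j ∈ Finset.Icc s (v - 1), b j := by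
            apply Finset.sum_le_sum
            intro j hj
            simp only [Finset.mem_Icc] at hj
            rw [hlow j (by omega) (by omega)]
            omega
  -- sum over Icc (v+1) t when v ≤ t ≤ k-1
  have hC : ∀ t, v ≤ t → t ≤ k - 1 →
      (t - v + 1).choose 2 ≤ ∑ j ∈ Finset.Icc (v + 1) t, b j := by
    intro t hvt htk
    rcases eq_or_lt_of_le hvt with h | hlt
    · rw [Finset.Icc_eq_empty (by omega : ¬ v + 1 ≤ t), Finset.sum_empty,
        show t - v + 1 = 1 by omega]
      simp
    · have h1 : v + 1 ≤ t := by omega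
      calc (t - v + 1).choose 2 = (t - (v + 1) + 2).choose 2 := by congr 1; omega
        _ = ∑ j ∈ Finset.Icc (v + 1) t, (t + 1 - j) := (pms_L2 (v + 1) t h1).symm
        _ ≤ ∑ j ∈ Finset.Icc (v + 1) t, b j := by
            apply Finset.sum_le_sum
            intro j hj
            simp only [Finset.mem_Icc] at hj
            rw [hhigh j (by omega) (by omega)]
            omega
  constructor
  · intro s t hs hst htk
    by_cases h1 : t < v
    · -- entirely below v
      calc (t - s + 2).choose 2 = ∑ j ∈ Finset.Icc s t, (j - s + 1) := (pms_L1 s t hst).symm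
        _ ≤ ∑ j ∈ Finset.Icc s t, b j := by
            apply Finset.sum_le_sum
            intro j hj
            simp only [Finset.mem_Icc] at hj
            rw [hlow j (by omega) (by omega)]
            omega
    · by_cases h2 : v < s
      · -- entirely above v
        calc (t - s + 2).choose 2 = ∑ j ∈ Finset.Icc s t, (t + 1 - j) := (pms_L2 s t hst).symm
          _ ≤ ∑ j ∈ Finset.Icc s t, b j := by
              apply Finset.sum_le_sum
              intro j hj
              simp only [Finset.mem_Icc] at hj
              rw [hhigh j (by omega) (by omega)]
              omega
      · -- s ≤ v ≤ t
        have hsv : s ≤ v := by omega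
        have hvt : v ≤ t := by omega
        have hsplit : ∑ j ∈ Finset.Icc s t, b j
            = (∑ j ∈ Finset.Icc s (v - 1), b j + b v) + ∑ j ∈ Finset.Icc (v + 1) t, b j := by
          rw [pms_split b hsv hvt]
          congr 1
          rcases eq_or_lt_of_le hsv with h | hlt
          · rw [Finset.Icc_eq_empty (by omega : ¬ s ≤ v - 1), Finset.sum_empty,
              show v = s from h.symm, Finset.Icc_self, Finset.sum_singleton,
              show s = v from h]
            omega
          · have hv1 : v = (v - 1) + 1 := by omega
            conv_lhs => rw [hv1]
            rw [Finset.sum_Icc_succ_top (by omega)]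
            rw [← hv1]
        have hMv : (v - s + 1) * (t - v + 1) ≤ b v := by
          rw [hmid]
          apply Nat.mul_le_mul <;> omega
        have hid : (t - s + 2).choose 2
            = (v - s + 1).choose 2 + (t - v + 1).choose 2 + (v - s + 1) * (t - v + 1) := by
          have : t - s + 2 = (v - s + 1) + (t - v + 1) := by omega
          rw [this, pms_choose_add]
        rw [hsplit, hid]
        have := hA s hs hsv
        have := hC t hvt htk
        omega
  · -- total sum
    have hsplit : ∑ j ∈ Finset.Icc 1 (k - 1), b j
        = (∑ j ∈ Finset.Icc 1 (v - 1), b j + b v) + ∑ j ∈ Finset.Icc (v + 1) (k - 1), b j := by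
      rw [pms_split b hv hvk]
      congr 1
      rcases eq_or_lt_of_le hv with h | hlt
      · rw [Finset.Icc_eq_empty (by omega : ¬ (1:ℕ) ≤ v - 1), Finset.sum_empty,
          show v = 1 from h.symm, Finset.Icc_self, Finset.sum_singleton]
        omega
      · have hv1 : v = (v - 1) + 1 := by omega
        conv_lhs => rw [hv1]
        rw [Finset.sum_Icc_succ_top (by omega)]
        rw [← hv1]
    have e1 : ∑ j ∈ Finset.Icc 1 (v - 1), b j = v.choose 2 := by
      rcases eq_or_lt_of_le hv with h | hlt
      · rw [Finset.Icc_eq_empty (by omega : ¬ (1:ℕ) ≤ v - 1), Finset.sum_empty,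
          show v = 1 from h.symm]
        simp
      · have h1 : (1 : ℕ) ≤ v - 1 := by omega
        rw [Finset.sum_congr rfl (fun j hj => by
          simp only [Finset.mem_Icc] at hj
          exact hlow j (by omega) (by omega))]
        have : ∑ j ∈ Finset.Icc 1 (v - 1), j = ∑ j ∈ Finset.Icc 1 (v - 1), (j - 1 + 1) := by
          apply Finset.sum_congr rfl
          intro j hj
          simp only [Finset.mem_Icc] at hj
          omega
        rw [this, pms_L1 1 (v - 1) h1]
        congr 1
        omega
    have e2 : ∑ j ∈ Finset.Icc (v + 1) (k - 1), b j = (k - v).choose 2 := by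
      rcases eq_or_lt_of_le hvk with h | hlt
      · rw [h]
        rw [Finset.Icc_eq_empty (by omega)]
        have : k - (k - 1) = 1 := by omega
        simp [this]
      · have h1 : v + 1 ≤ k - 1 := by omega
        rw [Finset.sum_congr rfl (fun j hj => by
          simp only [Finset.mem_Icc] at hj
          exact hhigh j (by omega) (by omega))]
        have : ∑ j ∈ Finset.Icc (v + 1) (k - 1), (k - j)
            = ∑ j ∈ Finset.Icc (v + 1) (k - 1), ((k - 1) + 1 - j) := by
          apply Finset.sum_congr rfl
          intro j hj
          simp only [Finset.mem_Icc] at hj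
          omega
        rw [this, pms_L2 (v + 1) (k - 1) h1]
        congr 1
        omega
    rw [hsplit, e1, e2, hmid]
    have : k = v + (k - v) := by omega
    rw [show k.choose 2 = (v + (k - v)).choose 2 by rw [← this], pms_choose_add]
    omega
end

section
/- For variables α_1,...,α_k, the Schur polynomial s_λ(α) for the staircase partition λ = (k-1, k-2, ..., 1, 0) equals ∏_{1 ≤ i < j ≤ k} (α_i + α_j). -/
open Finset MvPolynomial

lemma prod_Ioi_eq_prod_filter {k : ℕ} {M : Type*} [CommMonoid M] (f : Fin k → Fin k → M) :
    ∏ i : Fin k, ∏ j ∈ Ioi i, f i j =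
    ∏ q ∈ Finset.univ.filter (fun q : Fin k × Fin k => q.1 < q.2), f q.1 q.2 := by
  rw [← Finset.prod_sigma univ (fun i => Ioi i) (fun x => f x.1 x.2)]
  apply Finset.prod_nbij (fun q => (q.1, q.2))
  · intro a ha; simp [Finset.mem_sigma] at ha ⊢; simpa using ha
  · intro a _ b _ h; simp at h; exact Sigma.ext h.1 (heq_of_eq h.2)
  · intro q hq; simp at hq; exact ⟨⟨q.1, q.2⟩, by simp [Finset.mem_sigma, hq], rfl⟩
  · intro a _; rfl

theorem schur_staircase (k : ℕ) (hk : 1 ≤ k) :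
    Matrix.det (Matrix.of fun i j : Fin k =>
        (MvPolynomial.X j : MvPolynomial (Fin k) ℤ) ^ (2 * (k - 1 - (i : ℕ)))) =
      (∏ q ∈ Finset.univ.filter (fun q : Fin k × Fin k => q.1 < q.2),
          (MvPolynomial.X q.1 - MvPolynomial.X q.2)) *
        ∏ q ∈ Finset.univ.filter (fun q : Fin k × Fin k => q.1 < q.2),
          (MvPolynomial.X q.1 + MvPolynomial.X q.2) := by
  set w : Fin k → MvPolynomial (Fin k) ℤ := fun j => (X (Fin.rev j)) ^ 2 with hw
  have hM : (Matrix.of fun i j : Fin k =>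
        (MvPolynomial.X j : MvPolynomial (Fin k) ℤ) ^ (2 * (k - 1 - (i : ℕ)))) =
      (Matrix.transpose (Matrix.vandermonde w)).submatrix Fin.revPerm Fin.revPerm := by
    ext i j
    simp only [Matrix.of_apply, Matrix.submatrix_apply, Matrix.transpose_apply,
      Matrix.vandermonde_apply, Fin.revPerm_apply, Fin.rev_rev, hw]
    rw [← pow_mul]
    congr 1
    have := i.isLt
    have h2 : k - 1 - (i : ℕ) = k - ((i : ℕ) + 1) := by omega
    simp [Fin.val_rev, h2]
  rw [hM, Matrix.det_submatrix_equiv_self, Matrix.det_transpose, Matrix.det_vandermonde,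
    prod_Ioi_eq_prod_filter]
  have hbij : ∏ q ∈ Finset.univ.filter (fun q : Fin k × Fin k => q.1 < q.2),
      (w q.2 - w q.1) =
      ∏ q ∈ Finset.univ.filter (fun q : Fin k × Fin k => q.1 < q.2),
      ((X q.1 : MvPolynomial (Fin k) ℤ) ^ 2 - X q.2 ^ 2) := by
    apply Finset.prod_nbij (fun q => (Fin.rev q.2, Fin.rev q.1))
    · intro q hq; simp at hq ⊢; exact hq
    · intro a _ b _ h; simp [Prod.ext_iff, Fin.rev_inj] at h
      exact Prod.ext h.2 h.1
    · intro q hq; simp at hq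
      exact ⟨(Fin.rev q.2, Fin.rev q.1), by simp [Fin.rev_lt_rev, hq], by simp⟩
    · intro q _; simp [hw, Fin.rev_rev]
  rw [hbij, ← Finset.prod_mul_distrib]
  apply Finset.prod_congr rfl
  intro q _
  ring
end
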